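/- arXiv:2303.17327 — 5 statements merged into one kernel-verified Lean document; each statement's English description precedes it below -/
import Mathlib

section
/- If {S_i : i ∈ I} is a pairwise disjoint family of subsets of 2^ω, each S_i is an (s⁰)-set, and the family is (s)-additive (i.e., for every J ⊆ I the union ⋃_{i∈J} S_i is an (s)-set), then ⋃_{i∈I} S_i is an (s⁰)-set. -/
open Set

/-- A perfect (Sacks) tree: nonempty, downward closed, and every node has a splitting extension. -/
def IsPerfectTree (T : Set (List Bool)) : Prop :=
  T.Nonempty ∧ (∀ t ∈ T, ∀ n, t.take n ∈ T) ∧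
    ∀ t ∈ T, ∃ s ∈ T, t <+: s ∧ s ++ [false] ∈ T ∧ s ++ [true] ∈ T

/-- The set of infinite branches of a tree. -/
def branches (T : Set (List Bool)) : Set (ℕ → Bool) :=
  {x | ∀ n, (List.ofFn fun i : Fin n => x i) ∈ T}

/-- `A` is an (s)-set. -/
def MarczewskiS (A : Set (ℕ → Bool)) : Prop :=
  ∀ T, IsPerfectTree T → ∃ Q, IsPerfectTree Q ∧ Q ⊆ T ∧
    (branches Q ⊆ A ∨ branches Q ∩ A = ∅)

/-- `A` is an (s⁰)-set. -/
def S0Set (A : Set (ℕ → Bool)) : Prop :=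
  ∀ T, IsPerfectTree T → ∃ Q, IsPerfectTree Q ∧ Q ⊆ T ∧ branches Q ∩ A = ∅

noncomputable section
namespace S0Aux

def seg (x : ℕ → Bool) (n : ℕ) : List Bool := List.ofFn fun i : Fin n => x i

@[simp] lemma seg_length (x : ℕ → Bool) (n : ℕ) : (seg x n).length = n := by
  simp [seg]

@[simp] lemma seg_getElem (x : ℕ → Bool) (n i : ℕ) (h : i < (seg x n).length) :
    (seg x n)[i] = x i := by simp [seg]

lemma seg_succ (x : ℕ → Bool) (n : ℕ) : seg x (n+1) = seg x n ++ [x n] := by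
  rw [seg, List.ofFn_succ']; simp [seg, List.concat_eq_append]

lemma seg_zero (x : ℕ → Bool) : seg x 0 = [] := rfl

lemma take_prefix_take {l : List Bool} {n m : ℕ} (h : n ≤ m) : l.take n <+: l.take m := by
  have : (l.take m).take n = l.take n := by rw [List.take_take, min_eq_left h]
  rw [← this]; exact List.take_prefix _ _

lemma seg_take (x : ℕ → Bool) {n m : ℕ} (h : n ≤ m) : (seg x m).take n = seg x n := by
  apply List.ext_getElem
  · simp [min_eq_left h]
  · intro i h1 h2; simp [List.getElem_take]

lemma seg_prefix (x : ℕ → Bool) {n m : ℕ} (h : n ≤ m) : seg x n <+: seg x m := by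
  rw [← seg_take x h]; exact List.take_prefix _ _

lemma mem_branches {T : Set (List Bool)} {x : ℕ → Bool} : x ∈ branches T ↔ ∀ n, seg x n ∈ T :=
  Iff.rfl

lemma branches_mono {Q T : Set (List Bool)} (h : Q ⊆ T) : branches Q ⊆ branches T :=
  fun _ hx n => h (hx n)

namespace PT

variable {T : Set (List Bool)}

lemma nil_mem (hT : IsPerfectTree T) : [] ∈ T := by
  obtain ⟨⟨t, ht⟩, htake, _⟩ := hT
  simpa using htake t ht 0

lemma take_mem (h : ∀ t ∈ T, ∀ n, t.take n ∈ T) {l : List Bool} (hl : l ∈ T) (n : ℕ) :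
    l.take n ∈ T := h l hl n

lemma prefix_mem (hT : IsPerfectTree T) {l l' : List Bool} (hl : l ∈ T) (h : l' <+: l) : l' ∈ T := by
  have h2 := hT.2.1 l hl l'.length
  rwa [← List.prefix_iff_eq_take.mp h] at h2

lemma exists_one_step (hT : IsPerfectTree T) {t : List Bool} (ht : t ∈ T) : ∃ b, t ++ [b] ∈ T := by
  obtain ⟨s, hs, hts, hsf, _⟩ := hT.2.2 t ht
  have hpre : t <+: s ++ [false] := hts.trans (by simp)
  obtain ⟨r, hr⟩ := hpre
  cases r with
  | nil =>
    have h1 := hts.length_le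
    have h2 := congrArg List.length hr
    simp at h2; omega
  | cons b r' =>
    refine ⟨b, prefix_mem hT hsf ?_⟩
    exact ⟨r', by rw [← hr]; simp⟩

end PT
end S0Aux

namespace S0Aux
namespace PT
variable {T : Set (List Bool)}

lemma exists_branch_through (hT : IsPerfectTree T) {t : List Bool} (ht : t ∈ T) :
    ∃ x ∈ branches T, seg x t.length = t := by
  classical
  let step : {u : List Bool // u ∈ T} → {u : List Bool // u ∈ T} := fun u =>
    ⟨u.1 ++ [Classical.choose (exists_one_step hT u.2)],
      Classical.choose_spec (exists_one_step hT u.2)⟩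
  let g : ℕ → {u : List Bool // u ∈ T} := fun n => step^[n] ⟨t, ht⟩
  have gsucc : ∀ n, (g (n+1)).1 = (g n).1 ++ [Classical.choose (exists_one_step hT (g n).2)] := by
    intro n
    show (step^[n+1] ⟨t, ht⟩).1 = _
    rw [Function.iterate_succ_apply']
  have len : ∀ n, (g n).1.length = t.length + n := by
    intro n; induction n with
    | zero => rfl
    | succ n ih => rw [gsucc n]; simp [ih]; omega
  have pref : ∀ n, (g n).1 <+: (g (n+1)).1 := fun n => by rw [gsucc n]; exact ⟨_, rfl⟩
  have chain : ∀ {i j : ℕ}, i ≤ j → (g i).1 <+: (g j).1 := by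
    intro i j hij
    induction j, hij using Nat.le_induction with
    | base => exact List.prefix_refl _
    | succ j hij ih => exact ih.trans (pref j)
  let x : ℕ → Bool := fun n => (g (n+1)).1[n]'(by rw [len]; omega)
  have seg_eq : ∀ k m, k ≤ t.length + m → seg x k = (g m).1.take k := by
    intro k m hk
    apply List.ext_getElem
    · simp [len]; omega
    · intro i h1 h2
      have hik : i < k := by simpa using h1
      have him : i < (g m).1.length := by rw [len]; omega
      rw [seg_getElem, List.getElem_take]
      have e1 : i < ((g (i+1)).1).length := by rw [len]; omega
      show ((g (i+1)).1)[i]'e1 = ((g m).1)[i]'him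
      rcases le_or_gt (i+1) m with h | h
      · exact List.IsPrefix.getElem (chain h) e1
      · exact (List.IsPrefix.getElem (chain (by omega : m ≤ i+1)) him).symm
  refine ⟨x, fun k => ?_, ?_⟩
  · show seg x k ∈ T
    rw [seg_eq k k (by omega)]
    exact hT.2.1 _ (g k).2 k
  · rw [seg_eq t.length 0 (by omega)]
    show t.take t.length = t
    simp

lemma branches_nonempty (hT : IsPerfectTree T) : (branches T).Nonempty := by
  obtain ⟨x, hx, -⟩ := exists_branch_through hT (nil_mem hT)
  exact ⟨x, hx⟩

lemma exists_long_ext (hT : IsPerfectTree T) {t : List Bool} (ht : t ∈ T) (k : ℕ) :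
    ∃ v ∈ T, t <+: v ∧ k ≤ v.length := by
  obtain ⟨x, hx, hxt⟩ := exists_branch_through hT ht
  refine ⟨seg x (max k t.length), hx _, ?_, by simp⟩
  have h2 := seg_prefix x (le_max_right k t.length)
  rwa [hxt] at h2

end PT

/-- Localization of a tree at a node. -/
def loc (T : Set (List Bool)) (t : List Bool) : Set (List Bool) :=
  {u | u ∈ T ∧ (u <+: t ∨ t <+: u)}

lemma loc_subset (T : Set (List Bool)) (t : List Bool) : loc T t ⊆ T := fun _ h => h.1

lemma mem_loc_self {T : Set (List Bool)} {t : List Bool} (ht : t ∈ T) : t ∈ loc T t :=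
  ⟨ht, Or.inl (List.prefix_refl _)⟩

lemma loc_comparable {T : Set (List Bool)} {t u : List Bool} (h : u ∈ loc T t) :
    u <+: t ∨ t <+: u := h.2

lemma loc_perfect {T : Set (List Bool)} (hT : IsPerfectTree T) {t : List Bool} (ht : t ∈ T) :
    IsPerfectTree (loc T t) := by
  refine ⟨⟨t, mem_loc_self ht⟩, ?_, ?_⟩
  · rintro u ⟨hu, hcomp⟩ n
    refine ⟨hT.2.1 u hu n, ?_⟩
    rcases hcomp with h | h
    · exact Or.inl ((List.take_prefix n u).trans h)
    · rcases le_or_gt n t.length with h1 | h1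
      · left
        have h2 : t.take n = u.take n := by
          conv_lhs => rw [List.prefix_iff_eq_take.mp h]
          rw [List.take_take, min_eq_left h1]
        rw [← h2]
        exact List.take_prefix _ _
      · right
        rw [List.prefix_iff_eq_take.mp h]
        exact take_prefix_take h1.le
  · rintro u ⟨hu, hcomp⟩
    have : ∃ w ∈ T, u <+: w ∧ t <+: w := by
      rcases hcomp with h | h
      · exact ⟨t, ht, h, List.prefix_refl _⟩
      · exact ⟨u, hu, List.prefix_refl _, h⟩
    obtain ⟨w, hw, huw, htw⟩ := this
    obtain ⟨s, hs, hws, hsf, hst⟩ := hT.2.2 w hw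
    have hts : t <+: s := htw.trans hws
    refine ⟨s, ⟨hs, Or.inr hts⟩, huw.trans hws, ⟨hsf, Or.inr (hts.trans ⟨_, rfl⟩)⟩,
      ⟨hst, Or.inr (hts.trans ⟨_, rfl⟩)⟩⟩

lemma branches_loc_subset {T : Set (List Bool)} {t : List Bool} :
    branches (loc T t) ⊆ branches T := branches_mono (loc_subset T t)

end S0Aux

namespace S0Aux

lemma eq_of_prefix_prefix_length {l₁ l₂ l₃ : List Bool} (h1 : l₁ <+: l₃) (h2 : l₂ <+: l₃)
    (h : l₁.length = l₂.length) : l₁ = l₂ := by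
  rcases List.prefix_or_prefix_of_prefix h1 h2 with h' | h'
  · exact h'.eq_of_length h
  · exact (h'.eq_of_length h.symm).symm

lemma prefix_append_singleton {t p : List Bool} {b : Bool} (h : t <+: p ++ [b])
    (hl : t.length ≤ p.length) : t <+: p := by
  have h2 : t = (p ++ [b]).take t.length := List.prefix_iff_eq_take.mp h
  rw [List.take_append_of_le_length hl] at h2
  rw [h2]; exact List.take_prefix _ _

lemma false_ne_true_append (p : List Bool) : p ++ [false] ≠ p ++ [true] := by simp

lemma prefix_of_both {t p : List Bool}
    (h0 : p ++ [false] <+: t ∨ t <+: p ++ [false])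
    (h1 : p ++ [true] <+: t ∨ t <+: p ++ [true]) : t <+: p := by
  have hne := false_ne_true_append p
  have hf : t <+: p ++ [false] := by
    rcases h0 with h0 | h0
    · rcases h1 with h1 | h1
      · exact absurd (eq_of_prefix_prefix_length h0 h1 (by simp)) hne
      · exact absurd ((h0.trans h1).eq_of_length (by simp)) hne
    · exact h0
  have ht : t <+: p ++ [true] := by
    rcases h1 with h1 | h1
    · exact absurd ((h1.trans hf).eq_of_length (by simp)) (Ne.symm hne)
    · exact h1
  rcases lt_or_ge p.length t.length with hl | hl
  · have e1 : t = p ++ [false] := hf.eq_of_length (by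
      have := hf.length_le; simp at this ⊢; omega)
    have e2 : t = p ++ [true] := ht.eq_of_length (by
      have := ht.length_le; simp at this ⊢; omega)
    exact absurd (e1 ▸ e2) hne
  · exact prefix_append_singleton hf hl

/-- A node in a fusion construction. -/
structure FNode (T : Set (List Bool)) where
  t : List Bool
  R : Set (List Bool)
  perfect : IsPerfectTree R
  sub : R ⊆ T
  mem : t ∈ R
  locl : ∀ u ∈ R, u <+: t ∨ t <+: u

/-- Step hypothesis for the fusion construction. -/
def StepHyp (T : Set (List Bool)) (Ψ : ℕ → Set (List Bool) → Set (List Bool) → Prop) : Prop :=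
  ∀ R, IsPerfectTree R → R ⊆ T → ∀ n : ℕ, ∃ p R0 R1,
    IsPerfectTree R0 ∧ IsPerfectTree R1 ∧ R0 ⊆ R ∧ R1 ⊆ R ∧
    p ++ [false] ∈ R0 ∧ p ++ [true] ∈ R1 ∧
    (∀ u ∈ R0, u <+: p ++ [false] ∨ p ++ [false] <+: u) ∧
    (∀ u ∈ R1, u <+: p ++ [true] ∨ p ++ [true] <+: u) ∧
    Ψ n R0 R1

section Fusion

variable {T : Set (List Bool)} {Ψ : ℕ → Set (List Bool) → Set (List Bool) → Prop}

noncomputable def pSel (h : StepHyp T Ψ) (fn : FNode T) (n : ℕ) : List Bool :=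
  (h fn.R fn.perfect fn.sub n).choose

noncomputable def R0Sel (h : StepHyp T Ψ) (fn : FNode T) (n : ℕ) : Set (List Bool) :=
  (h fn.R fn.perfect fn.sub n).choose_spec.choose

noncomputable def R1Sel (h : StepHyp T Ψ) (fn : FNode T) (n : ℕ) : Set (List Bool) :=
  (h fn.R fn.perfect fn.sub n).choose_spec.choose_spec.choose

lemma sel_spec (h : StepHyp T Ψ) (fn : FNode T) (n : ℕ) :
    IsPerfectTree (R0Sel h fn n) ∧ IsPerfectTree (R1Sel h fn n) ∧
    R0Sel h fn n ⊆ fn.R ∧ R1Sel h fn n ⊆ fn.R ∧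
    pSel h fn n ++ [false] ∈ R0Sel h fn n ∧ pSel h fn n ++ [true] ∈ R1Sel h fn n ∧
    (∀ u ∈ R0Sel h fn n, u <+: pSel h fn n ++ [false] ∨ pSel h fn n ++ [false] <+: u) ∧
    (∀ u ∈ R1Sel h fn n, u <+: pSel h fn n ++ [true] ∨ pSel h fn n ++ [true] <+: u) ∧
    Ψ n (R0Sel h fn n) (R1Sel h fn n) :=
  (h fn.R fn.perfect fn.sub n).choose_spec.choose_spec.choose_spec

noncomputable def RSel (h : StepHyp T Ψ) (fn : FNode T) (n : ℕ) (b : Bool) : Set (List Bool) :=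
  bif b then R1Sel h fn n else R0Sel h fn n

lemma RSel_spec (h : StepHyp T Ψ) (fn : FNode T) (n : ℕ) (b : Bool) :
    IsPerfectTree (RSel h fn n b) ∧ RSel h fn n b ⊆ fn.R ∧
    pSel h fn n ++ [b] ∈ RSel h fn n b ∧
    (∀ u ∈ RSel h fn n b, u <+: pSel h fn n ++ [b] ∨ pSel h fn n ++ [b] <+: u) := by
  obtain ⟨h1, h2, h3, h4, h5, h6, h7, h8, _⟩ := sel_spec h fn n
  cases b
  · exact ⟨h1, h3, h5, h7⟩
  · exact ⟨h2, h4, h6, h8⟩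

noncomputable def childNode (h : StepHyp T Ψ) (fn : FNode T) (n : ℕ) (b : Bool) : FNode T :=
  { t := pSel h fn n ++ [b]
    R := RSel h fn n b
    perfect := (RSel_spec h fn n b).1
    sub := fun u hu => fn.sub ((RSel_spec h fn n b).2.1 hu)
    mem := (RSel_spec h fn n b).2.2.1
    locl := (RSel_spec h fn n b).2.2.2 }

lemma t_prefix_pSel (h : StepHyp T Ψ) (fn : FNode T) (n : ℕ) : fn.t <+: pSel h fn n := by
  have c0 := (RSel_spec h fn n false).2.2.1
  have c1 := (RSel_spec h fn n true).2.2.1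
  exact prefix_of_both (fn.locl _ ((RSel_spec h fn n false).2.1 c0))
    (fn.locl _ ((RSel_spec h fn n true).2.1 c1))

variable (hT : IsPerfectTree T)

noncomputable def rootNode (hT : IsPerfectTree T) : FNode T :=
  { t := []
    R := T
    perfect := hT
    sub := subset_rfl
    mem := PT.nil_mem hT
    locl := fun u _ => Or.inr (List.nil_prefix) }

noncomputable def FF (hT : IsPerfectTree T) (h : StepHyp T Ψ) : List Bool → FNode T
  | [] => rootNode hT
  | b :: σ => childNode h (FF hT h σ) σ.length b

variable (h : StepHyp T Ψ)

lemma FF_cons_t (b : Bool) (σ : List Bool) :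
    (FF hT h (b :: σ)).t = pSel h (FF hT h σ) σ.length ++ [b] := rfl

lemma FF_cons_R (b : Bool) (σ : List Bool) :
    (FF hT h (b :: σ)).R = RSel h (FF hT h σ) σ.length b := rfl

lemma FF_child_prefix (b : Bool) (σ : List Bool) :
    (FF hT h σ).t <+: (FF hT h (b :: σ)).t := by
  rw [FF_cons_t]
  exact (t_prefix_pSel h _ _).trans ⟨[b], rfl⟩

lemma FF_child_length (b : Bool) (σ : List Bool) :
    (FF hT h σ).t.length < (FF hT h (b :: σ)).t.length := by
  have h1 := (t_prefix_pSel h (FF hT h σ) σ.length).length_le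
  rw [FF_cons_t]; simp; omega

lemma FF_child_sub (b : Bool) (σ : List Bool) :
    (FF hT h (b :: σ)).R ⊆ (FF hT h σ).R := by
  rw [FF_cons_R]; exact (RSel_spec h _ _ b).2.1

lemma FF_mono_t (l σ : List Bool) : (FF hT h σ).t <+: (FF hT h (l ++ σ)).t := by
  induction l with
  | nil => exact List.prefix_refl _
  | cons b l ih => exact ih.trans (FF_child_prefix hT h b (l ++ σ))

lemma FF_mono_R (l σ : List Bool) : (FF hT h (l ++ σ)).R ⊆ (FF hT h σ).R := by
  induction l with
  | nil => exact subset_rfl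
  | cons b l ih => exact (FF_child_sub hT h b (l ++ σ)).trans ih

lemma FF_length_ge (σ : List Bool) : σ.length ≤ (FF hT h σ).t.length := by
  induction σ with
  | nil => simp
  | cons b σ ih =>
    have := FF_child_length hT h b σ
    simp only [List.length_cons]; omega

lemma FF_suffix {σ τ : List Bool} (hpre : (FF hT h σ).t <+: (FF hT h τ).t) : σ <:+ τ := by
  induction σ with
  | nil => exact List.nil_suffix
  | cons c σ' ih =>
    have hc : (FF hT h σ').t <+: (FF hT h (c :: σ')).t := FF_child_prefix hT h c σ'
    obtain ⟨l, rfl⟩ := ih (hc.trans hpre)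
    cases l with
    | nil =>
      have := hpre.length_le
      have h2 := FF_child_length hT h c σ'
      simp at this h2 ⊢; omega
    | cons d' l' =>
      obtain ⟨l'', d, h'⟩ : ∃ l'' d, d' :: l' = l'' ++ [d] := by
        rcases List.eq_nil_or_concat (d' :: l') with h2 | ⟨l'', d, h2⟩
        · simp at h2
        · exact ⟨l'', d, by simpa [List.concat_eq_append] using h2⟩
      rw [show (d' :: l') ++ σ' = l'' ++ (d :: σ') by rw [h']; simp] at hpre ⊢
      have hd : (FF hT h (d :: σ')).t <+: (FF hT h (l'' ++ (d :: σ'))).t :=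
        FF_mono_t hT h l'' (d :: σ')
      have heq : (FF hT h (c :: σ')).t = (FF hT h (d :: σ')).t :=
        eq_of_prefix_prefix_length hpre hd (by rw [FF_cons_t, FF_cons_t]; simp)
      have hcd : c = d := by
        rw [FF_cons_t, FF_cons_t] at heq
        simpa using heq
      rw [hcd]
      exact ⟨l'', rfl⟩

lemma FF_comp {σ τ : List Bool} (hpre : (FF hT h σ).t <+: (FF hT h τ).t)
    (hne : (FF hT h σ).t ≠ (FF hT h τ).t) : ∃ b, (FF hT h (b :: σ)).t <+: (FF hT h τ).t := by
  obtain ⟨l, rfl⟩ := FF_suffix hT h hpre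
  cases l with
  | nil => exact absurd rfl hne
  | cons d' l' =>
    obtain ⟨l'', d, h'⟩ : ∃ l'' d, d' :: l' = l'' ++ [d] := by
      rcases List.eq_nil_or_concat (d' :: l') with h2 | ⟨l'', d, h2⟩
      · simp at h2
      · exact ⟨l'', d, by simpa [List.concat_eq_append] using h2⟩
    rw [show (d' :: l') ++ σ = l'' ++ (d :: σ) by rw [h']; simp]
    exact ⟨d, FF_mono_t hT h l'' (d :: σ)⟩

lemma seg_inj_coord {x y : ℕ → Bool} {n k : ℕ} (hk : k < n) (e : seg x n = seg y n) :
    x k = y k := by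
  have h1 := List.getElem_of_eq e (show k < (seg x n).length by simpa using hk)
  simpa using h1

noncomputable def fused (hT : IsPerfectTree T) (h : StepHyp T Ψ) : Set (List Bool) :=
  {u | ∃ σ, u <+: (FF hT h σ).t}

lemma fused_sub : fused hT h ⊆ T := by
  rintro u ⟨σ, hu⟩
  exact (FF hT h σ).sub (PT.prefix_mem (FF hT h σ).perfect (FF hT h σ).mem hu)

lemma fused_perfect : IsPerfectTree (fused hT h) := by
  refine ⟨⟨[], ⟨[], List.nil_prefix⟩⟩, ?_, ?_⟩
  · rintro u ⟨σ, hu⟩ n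
    exact ⟨σ, (List.take_prefix n u).trans hu⟩
  · rintro u ⟨σ, hu⟩
    refine ⟨pSel h (FF hT h σ) σ.length, ?_, ?_, ?_, ?_⟩
    · exact ⟨false :: σ, by rw [FF_cons_t]; exact ⟨[false], rfl⟩⟩
    · exact hu.trans (t_prefix_pSel h _ _)
    · exact ⟨false :: σ, by rw [FF_cons_t]⟩
    · exact ⟨true :: σ, by rw [FF_cons_t]⟩

lemma fused_key {x : ℕ → Bool} (hx : x ∈ branches (fused hT h)) {σ : List Bool}
    (hσ : seg x (FF hT h σ).t.length = (FF hT h σ).t) :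
    ∃ b, seg x (FF hT h (b :: σ)).t.length = (FF hT h (b :: σ)).t := by
  set p := pSel h (FF hT h σ) σ.length with hp
  set m := p.length + 1 with hm
  obtain ⟨τ, huτ⟩ := hx m
  have hlen : (FF hT h σ).t.length ≤ p.length := (t_prefix_pSel h _ _).length_le
  have h1 : (FF hT h σ).t <+: seg x m := by
    rw [← hσ]; exact seg_prefix x (by omega)
  have h2 : (FF hT h σ).t <+: (FF hT h τ).t := h1.trans huτ
  have hne : (FF hT h σ).t ≠ (FF hT h τ).t := by
    intro e
    have l1 : m ≤ (FF hT h τ).t.length := by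
      have := huτ.length_le; simp at this; omega
    have l2 := congrArg List.length e
    omega
  obtain ⟨b, hb⟩ := FF_comp hT h h2 hne
  have hlb : (FF hT h (b :: σ)).t.length = m := by rw [FF_cons_t]; simp [hp, hm]
  have he : seg x m = (FF hT h (b :: σ)).t :=
    eq_of_prefix_prefix_length huτ hb (by simp [hlb])
  exact ⟨b, by rw [hlb]; exact he⟩

theorem fusion (hT : IsPerfectTree T) (h : StepHyp T Ψ) :
    ∃ P, IsPerfectTree P ∧ P ⊆ T ∧
      (∀ x ∈ branches P, ∀ n : ℕ, ∃ R0 R1, Ψ n R0 R1 ∧ (x ∈ branches R0 ∨ x ∈ branches R1)) ∧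
      (∀ x ∈ branches P, ∀ y ∈ branches P, x ≠ y → ∃ n R0 R1, Ψ n R0 R1 ∧
        ((x ∈ branches R0 ∧ y ∈ branches R1) ∨ (y ∈ branches R0 ∧ x ∈ branches R1))) := by
  classical
  have main : ∀ x ∈ branches (fused hT h), ∃ ch : ℕ → List Bool,
      ch 0 = [] ∧ (∀ n, ∃ b, ch (n+1) = b :: ch n) ∧
      (∀ n, (ch n).length = n) ∧ (∀ n, x ∈ branches (FF hT h (ch n)).R) ∧
      (∀ n, seg x ((FF hT h (ch n)).t.length) = (FF hT h (ch n)).t) := by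
    intro x hx
    have base : seg x (FF hT h ([] : List Bool)).t.length = (FF hT h ([] : List Bool)).t := by
      show seg x ((rootNode hT).t.length) = (rootNode hT).t
      simp [rootNode, seg]
    let Inv : List Bool → Prop := fun σ => seg x (FF hT h σ).t.length = (FF hT h σ).t
    let next : {σ // Inv σ} → {σ // Inv σ} := fun s =>
      ⟨(Classical.choose (fused_key hT h hx s.2)) :: s.1,
        Classical.choose_spec (fused_key hT h hx s.2)⟩
    let ch' : ℕ → {σ // Inv σ} := fun n => next^[n] ⟨[], base⟩
    have hsucc : ∀ n, ch' (n+1) = next (ch' n) := by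
      intro n; show next^[n+1] _ = _; rw [Function.iterate_succ_apply']
    have hcons : ∀ n, ∃ b, (ch' (n+1)).1 = b :: (ch' n).1 := by
      intro n; rw [hsucc n]; exact ⟨_, rfl⟩
    have hlen : ∀ n, (ch' n).1.length = n := by
      intro n; induction n with
      | zero => rfl
      | succ n ih => obtain ⟨b, hb⟩ := hcons n; rw [hb]; simp [ih]
    have hchain : ∀ n k, n ≤ k → ∃ l, (ch' k).1 = l ++ (ch' n).1 := by
      intro n k hnk
      induction k, hnk using Nat.le_induction with
      | base => exact ⟨[], rfl⟩
      | succ k hnk ih =>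
        obtain ⟨l, hl⟩ := ih
        obtain ⟨b, hb⟩ := hcons k
        exact ⟨b :: l, by rw [hb, hl]; rfl⟩
    refine ⟨fun n => (ch' n).1, rfl, hcons, hlen, ?_, fun n => (ch' n).2⟩
    intro n m
    set k := max m n with hk
    obtain ⟨l, hl⟩ := hchain n k (le_max_right _ _)
    have hkl : k ≤ (FF hT h (ch' k).1).t.length := by
      have := FF_length_ge hT h (ch' k).1; rw [hlen k] at this; exact this
    have hseg : seg x m <+: (FF hT h (ch' k).1).t := by
      rw [← (ch' k).2]
      exact seg_prefix x (le_trans (le_max_left m n) hkl)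
    have hmem : seg x m ∈ (FF hT h (ch' k).1).R :=
      PT.prefix_mem (FF hT h (ch' k).1).perfect (FF hT h (ch' k).1).mem hseg
    have hsub : (FF hT h (ch' k).1).R ⊆ (FF hT h (ch' n).1).R := by
      rw [hl]; exact FF_mono_R hT h l (ch' n).1
    exact hsub hmem
  refine ⟨fused hT h, fused_perfect hT h, fused_sub hT h, ?_, ?_⟩
  · intro x hx n
    obtain ⟨ch, h0, hcons, hlen, hbr, hinv⟩ := main x hx
    obtain ⟨b, hb⟩ := hcons n
    have hΨ := (sel_spec h (FF hT h (ch n)) (ch n).length).2.2.2.2.2.2.2.2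
    rw [hlen n] at hΨ
    have hx' := hbr (n+1)
    rw [hb, FF_cons_R hT h, hlen n] at hx'
    refine ⟨R0Sel h (FF hT h (ch n)) n, R1Sel h (FF hT h (ch n)) n, hΨ, ?_⟩
    cases b
    · left; exact hx'
    · right; exact hx'
  · intro x hx y hy hxy
    obtain ⟨chx, hx0, hxcons, hxlen, hxbr, hxinv⟩ := main x hx
    obtain ⟨chy, hy0, hycons, hylen, hybr, hyinv⟩ := main y hy
    have hD : ∃ n, chx n ≠ chy n := by
      by_contra hD
      push_neg at hD
      apply hxy
      funext k
      have e1 := hxinv (k+1)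
      have e2 := hyinv (k+1)
      rw [← hD (k+1)] at e2
      have hL : k < (FF hT h (chx (k+1))).t.length := by
        have := FF_length_ge hT h (chx (k+1))
        rw [hxlen (k+1)] at this
        omega
      exact seg_inj_coord hL (e1.trans e2.symm)
    have hpos : Nat.find hD ≠ 0 := by
      intro e
      have h2 := Nat.find_spec hD
      rw [e, hx0, hy0] at h2
      exact h2 rfl
    obtain ⟨n, hn⟩ : ∃ n, Nat.find hD = n + 1 := ⟨Nat.find hD - 1, by omega⟩
    have hprev : chx n = chy n := by
      have h2 := Nat.find_min hD (show n < Nat.find hD by omega)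
      exact not_not.mp h2
    have hne1 : chx (n+1) ≠ chy (n+1) := by rw [← hn]; exact Nat.find_spec hD
    obtain ⟨bx, hbx⟩ := hxcons n
    obtain ⟨by', hby⟩ := hycons n
    have hbne : bx ≠ by' := by
      intro e; apply hne1; rw [hbx, hby, hprev, e]
    have hΨ := (sel_spec h (FF hT h (chx n)) ((chx n).length)).2.2.2.2.2.2.2.2
    rw [hxlen n] at hΨ
    have hx' := hxbr (n+1)
    rw [hbx, FF_cons_R hT h, hxlen n] at hx'
    have hy' := hybr (n+1)
    rw [hby, ← hprev, FF_cons_R hT h, hxlen n] at hy'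
    refine ⟨n, R0Sel h (FF hT h (chx n)) n, R1Sel h (FF hT h (chx n)) n, hΨ, ?_⟩
    cases bx with
    | false =>
      cases by' with
      | false => exact absurd rfl hbne
      | true => exact Or.inl ⟨hx', hy'⟩
    | true =>
      cases by' with
      | false => exact Or.inr ⟨hy', hx'⟩
      | true => exact absurd rfl hbne

end Fusion
end S0Aux

open Cardinal

namespace S0Aux

lemma limit_branch {R : Set (List Bool)} (hR : IsPerfectTree R) (g : ℕ → List Bool)
    (hchain : ∀ n, g n <+: g (n+1)) (hlen : ∀ n, n ≤ (g n).length)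
    (hmem : ∀ n, g n ∈ R) :
    ∃ x ∈ branches R, ∀ n, seg x (g n).length = g n := by
  have chain : ∀ {i j : ℕ}, i ≤ j → g i <+: g j := by
    intro i j hij
    induction j, hij using Nat.le_induction with
    | base => exact List.prefix_refl _
    | succ j hij ih => exact ih.trans (hchain j)
  let x : ℕ → Bool := fun n => (g (n+1))[n]'(lt_of_lt_of_le (Nat.lt_succ_self n) (hlen (n+1)))
  have seg_eq : ∀ k m, k ≤ (g m).length → seg x k = (g m).take k := by
    intro k m hk
    apply List.ext_getElem
    · simp; omega
    · intro i h1 h2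
      have hik : i < k := by simpa using h1
      have him : i < (g m).length := by omega
      rw [seg_getElem, List.getElem_take]
      have e1 : i < (g (i+1)).length := lt_of_lt_of_le (Nat.lt_succ_self i) (hlen (i+1))
      show (g (i+1))[i]'e1 = (g m)[i]'him
      rcases le_or_gt (i+1) m with hle | hlt
      · exact List.IsPrefix.getElem (chain hle) e1
      · exact (List.IsPrefix.getElem (chain (by omega : m ≤ i+1)) him).symm
  refine ⟨x, fun k => ?_, fun n => ?_⟩
  · show seg x k ∈ R
    rw [seg_eq k k (hlen k)]
    exact hR.2.1 _ (hmem k) k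
  · rw [seg_eq (g n).length n le_rfl]
    exact List.take_length

section CardBranches

variable {R : Set (List Bool)}

lemma exists_split_above (hR : IsPerfectTree R) {t : List Bool} (ht : t ∈ R) :
    ∃ s, t <+: s ∧ s ++ [false] ∈ R ∧ s ++ [true] ∈ R := by
  obtain ⟨s, _, h1, h2, h3⟩ := hR.2.2 t ht
  exact ⟨s, h1, h2, h3⟩

noncomputable def GG (hR : IsPerfectTree R) : List Bool → {t : List Bool // t ∈ R}
  | [] => ⟨[], PT.nil_mem hR⟩
  | b :: σ =>
      ⟨(exists_split_above hR (GG hR σ).2).choose ++ [b], by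
        have hs := (exists_split_above hR (GG hR σ).2).choose_spec
        cases b
        · exact hs.2.1
        · exact hs.2.2⟩

lemma GG_cons (hR : IsPerfectTree R) (b : Bool) (σ : List Bool) :
    (GG hR (b :: σ)).1 = (exists_split_above hR (GG hR σ).2).choose ++ [b] := rfl

lemma GG_prefix (hR : IsPerfectTree R) (b : Bool) (σ : List Bool) :
    (GG hR σ).1 <+: (GG hR (b :: σ)).1 := by
  rw [GG_cons]
  exact (exists_split_above hR (GG hR σ).2).choose_spec.1.trans ⟨[b], rfl⟩

lemma GG_length (hR : IsPerfectTree R) (b : Bool) (σ : List Bool) :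
    (GG hR σ).1.length < (GG hR (b :: σ)).1.length := by
  have h1 := (exists_split_above hR (GG hR σ).2).choose_spec.1.length_le
  rw [GG_cons]; simp; omega

/-- reversed initial segment -/
def rev (x : ℕ → Bool) : ℕ → List Bool
  | 0 => []
  | n + 1 => x n :: rev x n

lemma rev_congr {x y : ℕ → Bool} {k : ℕ} (h : ∀ j < k, x j = y j) : rev x k = rev y k := by
  induction k with
  | zero => rfl
  | succ k ih =>
    show x k :: rev x k = y k :: rev y k
    rw [h k (Nat.lt_succ_self k), ih (fun j hj => h j (Nat.lt_succ_of_lt hj))]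

lemma card_branches (hR : IsPerfectTree R) : #(ℕ → Bool) ≤ #(branches R) := by
  classical
  let g : (ℕ → Bool) → ℕ → List Bool := fun x n => (GG hR (rev x n)).1
  have hchain : ∀ x n, g x n <+: g x (n+1) := fun x n => GG_prefix hR (x n) (rev x n)
  have hlen : ∀ x n, n ≤ (g x n).length := by
    intro x n
    induction n with
    | zero => simp
    | succ n ih =>
      have := GG_length hR (x n) (rev x n)
      show n + 1 ≤ (g x (n+1)).length
      have h2 : (g x n).length < (g x (n+1)).length := GG_length hR (x n) (rev x n)
      omega
  have hmem : ∀ x n, g x n ∈ R := fun x n => (GG hR (rev x n)).2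
  have hbr := fun x => limit_branch hR (g x) (hchain x) (hlen x) (hmem x)
  choose f hf hseg using hbr
  have hinj : Function.Injective f := by
    intro x y hxy
    by_contra hne
    have hD : ∃ k, x k ≠ y k := by
      by_contra hD; push_neg at hD; exact hne (funext hD)
    let k := Nat.find hD
    have hk : x k ≠ y k := Nat.find_spec hD
    have hrev : rev x k = rev y k := rev_congr (fun j hj => not_not.mp (Nat.find_min hD hj))
    -- the two nodes at level k+1 differ
    have e1 : seg (f x) (g x (k+1)).length = g x (k+1) := hseg x (k+1)
    have e2 : seg (f y) (g y (k+1)).length = g y (k+1) := hseg y (k+1)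
    have hgx : g x (k+1) = (exists_split_above hR (GG hR (rev x k)).2).choose ++ [x k] :=
      GG_cons hR (x k) (rev x k)
    have hgy : g y (k+1) = (exists_split_above hR (GG hR (rev x k)).2).choose ++ [y k] := by
      show (GG hR (rev y (k+1))).1 = _
      have h2 : rev y (k+1) = y k :: rev x k := by
        show y k :: rev y k = y k :: rev x k
        rw [hrev]
      rw [h2]
      rfl
    set s := (exists_split_above hR (GG hR (rev x k)).2).choose with hs
    have hlengths : (g x (k+1)).length = (g y (k+1)).length := by rw [hgx, hgy]; simp
    have : g x (k+1) = g y (k+1) := by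
      rw [← e1, ← e2, hxy, hlengths]
    rw [hgx, hgy] at this
    simp at this
    exact hk this
  exact Cardinal.mk_le_of_injective (f := fun x => (⟨f x, hf x⟩ : branches R))
    (fun a b hab => hinj (by simpa using hab))

end CardBranches
end S0Aux

namespace S0Aux


lemma diff_nonempty_of_card_lt {α : Type} {A W : Set α} (h : #W < #A) :
    (A \ W).Nonempty := by
  by_contra hcon
  rw [Set.not_nonempty_iff_eq_empty, Set.diff_eq_empty] at hcon
  exact absurd (Cardinal.mk_le_mk_of_subset hcon) (not_le.mpr h)

lemma bernstein {ι : Type} [Nonempty ι] (A : ι → Set (ℕ → Bool))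
    (hι : #ι ≤ #(ℕ → Bool)) (hA : ∀ i, #(ℕ → Bool) ≤ #(A i)) :
    ∃ X : Set (ℕ → Bool), ∀ i, (A i ∩ X).Nonempty ∧ (A i \ X).Nonempty := by
  classical
  set c : Cardinal := #(ℕ → Bool) with hc
  have hcinf : ℵ₀ ≤ c := Cardinal.aleph0_le_mk _
  set β := c.ord.ToType with hβ
  have hβc : #β = c := Cardinal.mk_ord_toType c
  -- a surjection from β onto ι
  have hιβ : #ι ≤ #β := by rw [hβc]; exact hι
  obtain ⟨f⟩ := Cardinal.le_def ι β |>.mp hιβ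
  let e : β → ι := Function.invFun f
  have he : Function.Surjective e := Function.invFun_surjective f.injective
  -- key existence for recursion
  have key : ∀ (b : β) (g : {b' : β // b' < b} → (ℕ → Bool) × (ℕ → Bool)), ∃ z : (ℕ → Bool) × (ℕ → Bool),
      z.1 ∈ A (e b) ∧ z.2 ∈ A (e b) ∧ z.1 ≠ z.2 ∧
      ∀ (b' : β) (h : b' < b), z.1 ≠ (g ⟨b', h⟩).1 ∧ z.1 ≠ (g ⟨b', h⟩).2 ∧
        z.2 ≠ (g ⟨b', h⟩).1 ∧ z.2 ≠ (g ⟨b', h⟩).2 := by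
    intro b g
    set U : Set (ℕ → Bool) := (range fun p : {b' : β // b' < b} => (g p).1) ∪
      (range fun p : {b' : β // b' < b} => (g p).2) with hU
    have hIio : #{b' : β // b' < b} < c := by
      have := Cardinal.mk_Iio_ord_toType b
      exact this
    have hUcard : #U < c := by
      have h1 : #U ≤ #{b' : β // b' < b} + #{b' : β // b' < b} := by
        apply le_trans (Cardinal.mk_union_le _ _)
        exact add_le_add Cardinal.mk_range_le Cardinal.mk_range_le
      exact lt_of_le_of_lt h1 (Cardinal.add_lt_of_lt hcinf hIio hIio)
    have h1 : (A (e b) \ U).Nonempty :=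
      diff_nonempty_of_card_lt (lt_of_lt_of_le hUcard (hA (e b)))
    obtain ⟨z1, hz1A, hz1U⟩ := h1
    have hU2 : #(U ∪ {z1} : Set (ℕ → Bool)) < c := by
      apply lt_of_le_of_lt (Cardinal.mk_union_le _ _)
      apply Cardinal.add_lt_of_lt hcinf hUcard
      rw [Cardinal.mk_singleton]
      exact lt_of_lt_of_le Cardinal.one_lt_aleph0 hcinf
    have h2 : (A (e b) \ (U ∪ {z1})).Nonempty :=
      diff_nonempty_of_card_lt (lt_of_lt_of_le hU2 (hA (e b)))
    obtain ⟨z2, hz2A, hz2U⟩ := h2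
    refine ⟨(z1, z2), hz1A, hz2A, ?_, ?_⟩
    · intro e'
      have e'' : z1 = z2 := e'
      exact hz2U (Or.inr (by rw [← e'']; rfl))
    · intro b' hb'
      have n11 : z1 ∉ U := hz1U
      have n21 : z2 ∉ U := fun h => hz2U (Or.inl h)
      refine ⟨?_, ?_, ?_, ?_⟩
      · intro e'; exact n11 (Or.inl ⟨⟨b', hb'⟩, e'.symm⟩)
      · intro e'; exact n11 (Or.inr ⟨⟨b', hb'⟩, e'.symm⟩)
      · intro e'; exact n21 (Or.inl ⟨⟨b', hb'⟩, e'.symm⟩)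
      · intro e'; exact n21 (Or.inr ⟨⟨b', hb'⟩, e'.symm⟩)
  have wf : WellFounded ((· < ·) : β → β → Prop) := IsWellFounded.wf
  let G : β → (ℕ → Bool) × (ℕ → Bool) := wf.fix (fun b ih => Classical.choose (key b (fun p => ih p.1 p.2)))
  have Gspec : ∀ b : β,
      (G b).1 ∈ A (e b) ∧ (G b).2 ∈ A (e b) ∧ (G b).1 ≠ (G b).2 ∧
      ∀ (b' : β) (h : b' < b), (G b).1 ≠ (G b').1 ∧ (G b).1 ≠ (G b').2 ∧
        (G b).2 ≠ (G b').1 ∧ (G b).2 ≠ (G b').2 := by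
    intro b
    have heq : G b = Classical.choose (key b (fun p : {b' : β // b' < b} => G p.1)) :=
      wf.fix_eq _ b
    have hs := Classical.choose_spec (key b (fun p : {b' : β // b' < b} => G p.1))
    rw [← heq] at hs
    exact hs
  refine ⟨{a | ∃ b : β, (G b).1 = a}, ?_⟩
  intro i
  obtain ⟨b, rfl⟩ := he i
  obtain ⟨hA1, hA2, hne, hdist⟩ := Gspec b
  constructor
  · exact ⟨(G b).1, hA1, ⟨b, rfl⟩⟩
  · refine ⟨(G b).2, hA2, ?_⟩
    rintro ⟨b', hb'⟩
    rcases lt_trichotomy b' b with h | h | h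
    · exact (hdist b' h).2.2.1 hb'.symm
    · rw [h] at hb'; exact hne hb'
    · exact ((Gspec b').2.2.2 b h).2.1 hb'
  done

end S0Aux

namespace S0Aux

lemma mem_of_subset_loc {R R' : Set (List Bool)} {t : List Bool} (hR' : IsPerfectTree R')
    (hsub : R' ⊆ loc R t) : t ∈ R' := by
  obtain ⟨u0, hu0⟩ := hR'.1
  obtain ⟨v, hv, _, hlen⟩ := PT.exists_long_ext hR' hu0 t.length
  rcases (hsub hv).2 with hc | hc
  · have he : v = t := hc.eq_of_length (le_antisymm hc.length_le hlen)
    rw [← he]; exact hv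
  · exact PT.prefix_mem hR' hv hc

lemma sigma_avoid {T : Set (List Bool)} (hT : IsPerfectTree T) (A : ℕ → Set (ℕ → Bool))
    (h : ∀ n R, IsPerfectTree R → R ⊆ T →
      ∃ R', IsPerfectTree R' ∧ R' ⊆ R ∧ branches R' ∩ A n = ∅) :
    ∃ P, IsPerfectTree P ∧ P ⊆ T ∧ branches P ∩ (⋃ n, A n) = ∅ := by
  have hstep : StepHyp T (fun n R0 R1 => branches R0 ∩ A n = ∅ ∧ branches R1 ∩ A n = ∅) := by
    intro R hR hsub n
    obtain ⟨s, _, hs0, hs1⟩ := exists_split_above hR (PT.nil_mem hR)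
    have hc0 : IsPerfectTree (loc R (s ++ [false])) := loc_perfect hR hs0
    have hc1 : IsPerfectTree (loc R (s ++ [true])) := loc_perfect hR hs1
    obtain ⟨R0, hR0, hR0sub, hR0avoid⟩ :=
      h n (loc R (s ++ [false])) hc0 ((loc_subset R _).trans hsub)
    obtain ⟨R1, hR1, hR1sub, hR1avoid⟩ :=
      h n (loc R (s ++ [true])) hc1 ((loc_subset R _).trans hsub)
    exact ⟨s, R0, R1, hR0, hR1, hR0sub.trans (loc_subset _ _), hR1sub.trans (loc_subset _ _),
      mem_of_subset_loc hR0 hR0sub, mem_of_subset_loc hR1 hR1sub,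
      fun u hu => loc_comparable (hR0sub hu), fun u hu => loc_comparable (hR1sub hu),
      hR0avoid, hR1avoid⟩
  obtain ⟨P, hP, hPsub, hprop, -⟩ := fusion hT hstep
  refine ⟨P, hP, hPsub, ?_⟩
  apply Set.eq_empty_iff_forall_notMem.mpr
  rintro x ⟨hxP, hxA⟩
  obtain ⟨n, hn⟩ := Set.mem_iUnion.mp hxA
  obtain ⟨R0, R1, ⟨hav0, hav1⟩, hor⟩ := hprop x hxP n
  rcases hor with hx0 | hx1
  · exact Set.eq_empty_iff_forall_notMem.mp hav0 x ⟨hx0, hn⟩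
  · exact Set.eq_empty_iff_forall_notMem.mp hav1 x ⟨hx1, hn⟩

lemma seg_congr {x y : ℕ → Bool} {m : ℕ} (h : ∀ j < m, x j = y j) : seg x m = seg y m := by
  apply List.ext_getElem
  · simp
  · intro i h1 h2
    rw [seg_getElem, seg_getElem]
    exact h i (by simpa using h1)

end S0Aux

open S0Aux

/-- If a pairwise disjoint family of (s⁰)-sets is (s)-additive, then its union is an (s⁰)-set. -/
theorem s0_of_disjoint_s_additive {I : Type*} (S : I → Set (ℕ → Bool))
    (hdisj : Pairwise fun i j => Disjoint (S i) (S j))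
    (h0 : ∀ i, S0Set (S i))
    (hadd : ∀ J : Set I, MarczewskiS (⋃ i ∈ J, S i)) :
    S0Set (⋃ i, S i) := by
  classical
  -- unique colors
  have color_unique : ∀ {x : ℕ → Bool} {i j : I}, x ∈ S i → x ∈ S j → i = j := by
    intro x i j hi hj
    by_contra hne
    exact Set.disjoint_left.mp (hdisj hne) hi hj
  set spec : Set (List Bool) → Set I := fun R => {i | (S i ∩ branches R).Nonempty} with hspec
  have spec_mono : ∀ {R R' : Set (List Bool)}, R' ⊆ R → spec R' ⊆ spec R := by
    rintro R R' hsub i ⟨x, hx1, hx2⟩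
    exact ⟨x, hx1, branches_mono hsub hx2⟩
  -- F1
  have F1 : ∀ (J : Set I) (R : Set (List Bool)), IsPerfectTree R →
      ∃ R', IsPerfectTree R' ∧ R' ⊆ R ∧ (spec R' ⊆ J ∨ spec R' ∩ J = ∅) := by
    intro J R hR
    obtain ⟨R', h1, h2, hc⟩ := hadd J R hR
    refine ⟨R', h1, h2, ?_⟩
    rcases hc with hc | hc
    · left
      rintro i ⟨x, hxS, hxb⟩
      obtain ⟨j, hj, hxj⟩ := Set.mem_iUnion₂.mp (hc hxb)
      rwa [color_unique hxS hxj]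
    · right
      apply Set.eq_empty_iff_forall_notMem.mpr
      rintro i ⟨⟨x, hxS, hxb⟩, hiJ⟩
      exact Set.eq_empty_iff_forall_notMem.mp hc x
        ⟨hxb, Set.mem_iUnion₂.mpr ⟨i, hiJ, hxS⟩⟩
  -- F3
  have F3 : ∀ (R : Set (List Bool)), IsPerfectTree R → ∀ i, ¬(branches R ⊆ S i) := by
    intro R hR i hsub
    obtain ⟨R', hR', hR'sub, hdis⟩ := h0 i R hR
    obtain ⟨x, hx⟩ := PT.branches_nonempty hR'
    exact Set.eq_empty_iff_forall_notMem.mp hdis x ⟨hx, hsub (branches_mono hR'sub hx)⟩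
  -- main: no perfect tree covered by the union
  have nocover : ∀ Q, IsPerfectTree Q → ¬(branches Q ⊆ ⋃ i, S i) := by
    intro Q hQp hQcov
    by_cases hcaseb : ∃ P', IsPerfectTree P' ∧ P' ⊆ Q ∧ ∀ R1 R2, IsPerfectTree R1 →
        IsPerfectTree R2 → R1 ⊆ P' → R2 ⊆ P' → (spec R1 ∩ spec R2).Nonempty
    · -- case (b): hereditarily intersecting specs
      obtain ⟨P', hP', hP'Q, hint⟩ := hcaseb
      set W : I → (ℕ → Bool) := fun i =>
        if h : (S i ∩ branches P').Nonempty then h.choose else (fun _ => false) with hWdef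
      have hW : ∀ i ∈ spec P', W i ∈ S i ∩ branches P' := by
        intro i hi
        have h' : (S i ∩ branches P').Nonempty := hi
        simp only [hWdef]
        rw [dif_pos h']
        exact h'.choose_spec
      have Winj : ∀ i ∈ spec P', ∀ j ∈ spec P', W i = W j → i = j := by
        intro i hi j hj he
        exact color_unique (hW i hi).1 (he ▸ (hW j hj).1)
      -- choose good bits
      have hKex : ∀ n : ℕ, ∃ b : Bool, ∃ R, IsPerfectTree R ∧ R ⊆ P' ∧
          spec R ⊆ {i | i ∈ spec P' ∧ W i n = b} := by
        intro n
        obtain ⟨R', h1, h2, hc⟩ := F1 {i | i ∈ spec P' ∧ W i n = true} P' hP'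
        rcases hc with hc | hc
        · exact ⟨true, R', h1, h2, hc⟩
        · refine ⟨false, R', h1, h2, ?_⟩
          intro i hi
          refine ⟨spec_mono h2 hi, ?_⟩
          by_contra hne
          rw [Bool.not_eq_false] at hne
          exact Set.eq_empty_iff_forall_notMem.mp hc i ⟨hi, spec_mono h2 hi, hne⟩
      choose g Rg hRg1 hRg2 hRg3 using hKex
      set K : ℕ → Set I := fun n => {i | i ∈ spec P' ∧ W i n = g n} with hK
      set A : ℕ → Set (ℕ → Bool) := fun n => {x | ∃ i, i ∉ K n ∧ x ∈ S i} with hA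
      have havoid : ∀ n R, IsPerfectTree R → R ⊆ P' →
          ∃ R', IsPerfectTree R' ∧ R' ⊆ R ∧ branches R' ∩ A n = ∅ := by
        intro n R hR hRP
        obtain ⟨R', h1, h2, hc⟩ := F1 (K n) R hR
        rcases hc with hc | hc
        · refine ⟨R', h1, h2, ?_⟩
          apply Set.eq_empty_iff_forall_notMem.mpr
          rintro x ⟨hxb, i, hiK, hxS⟩
          exact hiK (hc ⟨x, hxS, hxb⟩)
        · exfalso
          obtain ⟨i, hi1, hi2⟩ := hint R' (Rg n) h1 (hRg1 n) (h2.trans hRP) (hRg2 n)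
          exact Set.eq_empty_iff_forall_notMem.mp hc i ⟨hi1, hRg3 n hi2⟩
      obtain ⟨P'', hP'', hP''sub, hP''dis⟩ := sigma_avoid hP' A havoid
      -- all branches of P'' have the same color
      have hKall : ∀ i ∈ spec P'', ∀ n, i ∈ K n := by
        rintro i ⟨x, hxS, hxb⟩ n
        by_contra hiK
        exact Set.eq_empty_iff_forall_notMem.mp hP''dis x
          ⟨hxb, Set.mem_iUnion.mpr ⟨n, ⟨i, hiK, hxS⟩⟩⟩
      obtain ⟨x0, hx0⟩ := PT.branches_nonempty hP''
      have hx0Q : x0 ∈ branches Q := branches_mono (hP''sub.trans hP'Q) hx0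
      obtain ⟨i0, hi0⟩ := Set.mem_iUnion.mp (hQcov hx0Q)
      have hi0spec : i0 ∈ spec P'' := ⟨x0, hi0, hx0⟩
      have hsingle : ∀ i ∈ spec P'', i = i0 := by
        intro i hi
        have h1 := hKall i hi
        have h2 := hKall i0 hi0spec
        have hWi : W i = g := funext fun n => (h1 n).2
        have hWi0 : W i0 = g := funext fun n => (h2 n).2
        exact Winj i (h1 0).1 i0 (h2 0).1 (hWi.trans hWi0.symm)
      apply F3 P'' hP'' i0
      intro x hx
      have hxQ : x ∈ branches Q := branches_mono (hP''sub.trans hP'Q) hx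
      obtain ⟨j, hj⟩ := Set.mem_iUnion.mp (hQcov hxQ)
      rw [← hsingle j ⟨x, hj, hx⟩]
      exact hj
    · -- case (a): splitting into disjoint specs everywhere
      push_neg at hcaseb
      have hsplit : ∀ R, IsPerfectTree R → R ⊆ Q → ∃ R1 R2, IsPerfectTree R1 ∧
          IsPerfectTree R2 ∧ R1 ⊆ R ∧ R2 ⊆ R ∧ spec R1 ∩ spec R2 = ∅ := by
        intro R hR hRQ
        obtain ⟨R1, R2, h1, h2, h3, h4, h5⟩ := hcaseb R hR hRQ
        exact ⟨R1, R2, h1, h2, h3, h4, h5⟩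
      have hstep : StepHyp Q (fun _ R0 R1 => spec R0 ∩ spec R1 = ∅) := by
        intro R hR hsub n
        obtain ⟨R1, R2, h1, h2, s1, s2, hds⟩ := hsplit R hR hsub
        obtain ⟨x1, hx1⟩ := PT.branches_nonempty h1
        obtain ⟨x2, hx2⟩ := PT.branches_nonempty h2
        obtain ⟨i1, hi1⟩ := Set.mem_iUnion.mp (hQcov (branches_mono (s1.trans hsub) hx1))
        have hx1x2 : x1 ≠ x2 := by
          intro he
          apply Set.eq_empty_iff_forall_notMem.mp hds i1
          exact ⟨⟨x1, hi1, hx1⟩, ⟨x2, he ▸ hi1, hx2⟩⟩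
        have hD : ∃ m, x1 m ≠ x2 m := by
          by_contra hD; push_neg at hD; exact hx1x2 (funext hD)
        set m := Nat.find hD with hm
        have hfd : x1 m ≠ x2 m := Nat.find_spec hD
        have hagree : seg x1 m = seg x2 m :=
          seg_congr (fun j hj => not_not.mp (Nat.find_min hD hj))
        set q := seg x1 m with hq
        have hu1 : seg x1 (m+1) = q ++ [x1 m] := seg_succ x1 m
        have hu2 : seg x2 (m+1) = q ++ [x2 m] := by
          rw [seg_succ x2 m, ← hagree]
        have hu1mem : q ++ [x1 m] ∈ R1 := hu1 ▸ hx1 (m+1)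
        have hu2mem : q ++ [x2 m] ∈ R2 := hu2 ▸ hx2 (m+1)
        have huloc1 := loc_perfect h1 hu1mem
        have huloc2 := loc_perfect h2 hu2mem
        have hspec1 : spec (loc R1 (q ++ [x1 m])) ∩ spec (loc R2 (q ++ [x2 m])) = ∅ := by
          apply Set.eq_empty_iff_forall_notMem.mpr
          rintro i ⟨ha, hb⟩
          exact Set.eq_empty_iff_forall_notMem.mp hds i
            ⟨spec_mono (loc_subset _ _) ha, spec_mono (loc_subset _ _) hb⟩
        cases hb1 : x1 m with
        | false =>
          have hb2 : x2 m = true := by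
            cases hb2 : x2 m
            · rw [hb1, hb2] at hfd; exact absurd rfl hfd
            · rfl
          rw [hb1] at hu1mem huloc1
          rw [hb2] at hu2mem huloc2
          refine ⟨q, loc R1 (q ++ [false]), loc R2 (q ++ [true]), huloc1, huloc2,
            (loc_subset _ _).trans s1, (loc_subset _ _).trans s2,
            mem_loc_self hu1mem, mem_loc_self hu2mem,
            fun u hu => loc_comparable hu, fun u hu => loc_comparable hu, ?_⟩
          rw [hb1, hb2] at hspec1
          exact hspec1
        | true =>
          have hb2 : x2 m = false := by
            cases hb2 : x2 m
            · rfl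
            · rw [hb1, hb2] at hfd; exact absurd rfl hfd
          rw [hb1] at hu1mem huloc1
          rw [hb2] at hu2mem huloc2
          refine ⟨q, loc R2 (q ++ [false]), loc R1 (q ++ [true]), huloc2, huloc1,
            (loc_subset _ _).trans s2, (loc_subset _ _).trans s1,
            mem_loc_self hu2mem, mem_loc_self hu1mem,
            fun u hu => loc_comparable hu, fun u hu => loc_comparable hu, ?_⟩
          rw [hb1, hb2] at hspec1
          apply Set.eq_empty_iff_forall_notMem.mpr
          rintro i ⟨ha, hb⟩
          exact Set.eq_empty_iff_forall_notMem.mp hspec1 i ⟨hb, ha⟩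
      obtain ⟨P, hP, hPsub, -, hpair⟩ := fusion hQp hstep
      -- colors are injective on branches of P
      have hinj : ∀ x ∈ branches P, ∀ y ∈ branches P, ∀ i, x ∈ S i → y ∈ S i → x = y := by
        intro x hx y hy i hxi hyi
        by_contra hne
        obtain ⟨n, R0, R1, hds, hor⟩ := hpair x hx y hy hne
        rcases hor with ⟨ha, hb⟩ | ⟨ha, hb⟩
        · exact Set.eq_empty_iff_forall_notMem.mp hds i ⟨⟨x, hxi, ha⟩, ⟨y, hyi, hb⟩⟩
        · exact Set.eq_empty_iff_forall_notMem.mp hds i ⟨⟨y, hyi, ha⟩, ⟨x, hxi, hb⟩⟩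
      -- Bernstein set
      have hmkP : #(ℕ → Bool) = (2 : Cardinal) ^ Cardinal.aleph0 := by
        simp [Cardinal.mk_arrow]
      have hι : #{R : Set (List Bool) // IsPerfectTree R ∧ R ⊆ P} ≤ #(ℕ → Bool) := by
        apply le_trans (Cardinal.mk_subtype_le _)
        rw [Cardinal.mk_set, Cardinal.mk_eq_aleph0, hmkP]
      have : Nonempty {R : Set (List Bool) // IsPerfectTree R ∧ R ⊆ P} :=
        ⟨⟨P, hP, subset_rfl⟩⟩
      obtain ⟨X, hX⟩ := bernstein (fun R : {R : Set (List Bool) // IsPerfectTree R ∧ R ⊆ P} =>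
        branches R.1) hι (fun R => card_branches R.2.1)
      set J : Set I := {i | ∃ x, x ∈ X ∧ x ∈ branches P ∧ x ∈ S i} with hJ
      obtain ⟨R', hR', hR'P, hc⟩ := F1 J P hP
      obtain ⟨⟨xin, hxinb, hxinX⟩, ⟨xout, hxoutb, hxoutX⟩⟩ := hX ⟨R', hR', hR'P⟩
      rcases hc with hc | hc
      · -- every branch color of R' is in J; but xout gives a color not in J
        obtain ⟨j, hj⟩ := Set.mem_iUnion.mp (hQcov (branches_mono (hR'P.trans hPsub) hxoutb))
        have hjJ : j ∈ J := hc ⟨xout, hj, hxoutb⟩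
        obtain ⟨x', hx'X, hx'P, hx'S⟩ := hjJ
        exact hxoutX (hinj x' hx'P xout (branches_mono hR'P hxoutb) j hx'S hj ▸ hx'X)
      · obtain ⟨j, hj⟩ := Set.mem_iUnion.mp (hQcov (branches_mono (hR'P.trans hPsub) hxinb))
        apply Set.eq_empty_iff_forall_notMem.mp hc j
        exact ⟨⟨xin, hj, hxinb⟩, ⟨xin, hxinX, branches_mono hR'P hxinb, hj⟩⟩
  -- conclude
  intro T hT
  obtain ⟨Q, hQp, hQs, hcase⟩ := hadd Set.univ T hT
  have huniv : (⋃ i ∈ (Set.univ : Set I), S i) = ⋃ i, S i := by simp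
  rw [huniv] at hcase
  rcases hcase with hc | hc
  · exact absurd hc (nocover Q hQp)
  · exact ⟨Q, hQp, hQs, hc⟩
end
end

section
/- If {M_i : i ∈ I} is a pairwise disjoint family of Ramsey null subsets of [ω]^ω that is CR-additive (i.e., for every J ⊆ I the union ⋃_{i∈J} M_i is completely Ramsey), then ⋃_{i∈I} M_i is Ramsey null. -/
open Set

/-- The Ellentuck basic set `[a, A]` of infinite sets `B` with `a ⊆ B ⊆ a ∪ A`. -/
def EllSet (a : Finset ℕ) (A : Set ℕ) : Set (Set ℕ) :=
  {B | B.Infinite ∧ ↑a ⊆ B ∧ B ⊆ ↑a ∪ A}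

/-- `M` is completely Ramsey. -/
def CRSet (M : Set (Set ℕ)) : Prop :=
  ∀ (a : Finset ℕ) (A : Set ℕ), A.Infinite →
    ∃ B ⊆ A, B.Infinite ∧ (EllSet a B ⊆ M ∨ EllSet a B ∩ M = ∅)

/-- `M` is Ramsey null. -/
def RamseyNull (M : Set (Set ℕ)) : Prop :=
  ∀ (a : Finset ℕ) (A : Set ℕ), A.Infinite →
    ∃ B ⊆ A, B.Infinite ∧ EllSet a B ∩ M = ∅

namespace RNAux


lemma ellSet_mono {s : Finset ℕ} {B₁ B₂ : Set ℕ} (h : B₁ ⊆ B₂) :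
    EllSet s B₁ ⊆ EllSet s B₂ := by
  rintro C ⟨h1, h2, h3⟩
  exact ⟨h1, h2, h3.trans (union_subset_union_right _ h)⟩

lemma top_mem {s : Finset ℕ} {B : Set ℕ} (hB : B.Infinite) : (↑s ∪ B) ∈ EllSet s B :=
  ⟨hB.mono subset_union_right, subset_union_left, subset_rfl⟩

/-- A Ramsey null set contains no Ellentuck cube. -/
lemma not_ellSet_subset {M : Set (Set ℕ)} (hM : RamseyNull M) (s : Finset ℕ) {Z : Set ℕ}
    (hZ : Z.Infinite) : ¬ EllSet s Z ⊆ M := by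
  intro hsub
  obtain ⟨Z', hZ'Z, hZ'inf, hempty⟩ := hM s Z hZ
  have hmem : (↑s ∪ Z') ∈ EllSet s Z' := top_mem hZ'inf
  have : (↑s ∪ Z') ∈ EllSet s Z' ∩ M :=
    ⟨hmem, hsub (ellSet_mono hZ'Z hmem)⟩
  rw [hempty] at this
  exact this

/-- Dependent-choice style recursion producing a sequence with invariants. -/
lemma seqRec {α : Type*} {P : ℕ → α → Prop} {R : ℕ → α → α → Prop} (z : α) (hz : P 0 z)
    (step : ∀ n x, P n x → ∃ y, P (n+1) y ∧ R n x y) :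
    ∃ f : ℕ → α, f 0 = z ∧ ∀ n, P n (f n) ∧ R n (f n) (f (n+1)) := by
  have key : ∀ n (p : {x : α // P n x}), ∃ q : {x : α // P (n+1) x}, R n p.1 q.1 := by
    intro n p
    obtain ⟨y, hy, hr⟩ := step n p.1 p.2
    exact ⟨⟨y, hy⟩, hr⟩
  let g : ∀ n : ℕ, {x : α // P n x} := fun n =>
    Nat.rec ⟨z, hz⟩ (fun n p => (key n p).choose) n
  refine ⟨fun n => (g n).1, rfl, fun n => ⟨(g n).2, ?_⟩⟩
  show R n (g n).1 (g (n+1)).1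
  have : g (n+1) = (key n (g n)).choose := rfl
  rw [this]
  exact (key n (g n)).choose_spec

/-- Finitely many completely Ramsey sets can be simultaneously decided below one tail. -/
lemma bernstein {ι : Type} (F : ι → Set (Set ℕ))
    (hι : Cardinal.mk ι ≤ Cardinal.mk (Set ℕ))
    (hF : ∀ j, Cardinal.mk (Set ℕ) ≤ Cardinal.mk (F j)) :
    ∃ Y : Set (Set ℕ), ∀ j, (∃ y ∈ F j, y ∈ Y) ∧ (∃ y ∈ F j, y ∉ Y) := by
  classical
  obtain ⟨r, wo, hr⟩ := Cardinal.ord_eq ι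
  letI := wo
  set κ := Cardinal.mk (Set ℕ) with hκdef
  have hκinf : Cardinal.aleph0 ≤ κ := Cardinal.aleph0_le_mk _
  have hsmall : ∀ j : ι, Cardinal.mk {j' // r j' j} < κ := by
    intro j
    have h1 : Cardinal.mk {j' // r j' j} = ((Ordinal.typein r).toRelEmbedding j).card :=
      Ordinal.card_typein j
    have h2 := Ordinal.typein_lt_type r j
    rw [← hr] at h2
    have h3 := Cardinal.lt_ord.1 h2
    rw [h1]
    exact lt_of_lt_of_le h3 hι
  have fresh : ∀ (j : ι) (S : Set (Set ℕ)), Cardinal.mk S < κ → ∃ y ∈ F j, y ∉ S := by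
    intro j S hS
    by_contra h
    push_neg at h
    have : F j ⊆ S := h
    exact absurd (le_trans (hF j) (Cardinal.mk_le_mk_of_subset this)) (not_le.2 hS)
  -- the recursion
  have keyEx : ∀ (j : ι) (v : ∀ j', r j' j → Set ℕ × Set ℕ),
      ∃ p : Set ℕ × Set ℕ, p.1 ∈ F j ∧ p.2 ∈ F j ∧
        p.1 ∉ ((Set.range fun q : {j' // r j' j} => (v q.1 q.2).1) ∪
               (Set.range fun q : {j' // r j' j} => (v q.1 q.2).2)) ∧
        p.2 ∉ insert p.1 ((Set.range fun q : {j' // r j' j} => (v q.1 q.2).1) ∪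
               (Set.range fun q : {j' // r j' j} => (v q.1 q.2).2)) := by
    intro j v
    set S := (Set.range fun q : {j' // r j' j} => (v q.1 q.2).1) ∪
             (Set.range fun q : {j' // r j' j} => (v q.1 q.2).2) with hSdef
    have hScard : Cardinal.mk S < κ := by
      refine lt_of_le_of_lt (Cardinal.mk_union_le _ _) ?_
      exact Cardinal.add_lt_of_lt hκinf
        (lt_of_le_of_lt Cardinal.mk_range_le (hsmall j))
        (lt_of_le_of_lt Cardinal.mk_range_le (hsmall j))
    obtain ⟨y₀, hy₀F, hy₀S⟩ := fresh j S hScard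
    have hScard' : Cardinal.mk (insert y₀ S : Set (Set ℕ)) < κ := by
      refine lt_of_le_of_lt (Cardinal.mk_insert_le) ?_
      exact Cardinal.add_lt_of_lt hκinf hScard
        (lt_of_lt_of_le Cardinal.one_lt_aleph0 hκinf)
    obtain ⟨y₁, hy₁F, hy₁S⟩ := fresh j _ hScard'
    exact ⟨(y₀, y₁), hy₀F, hy₁F, hy₀S, hy₁S⟩
  have wf : WellFounded r := wo.toIsWellFounded.wf
  set g : ι → Set ℕ × Set ℕ :=
    wf.fix (fun j v => (keyEx j v).choose) with hgdef
  have hg : ∀ j, g j = (keyEx j (fun j' _ => g j')).choose := by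
    intro j
    rw [hgdef]
    exact wf.fix_eq _ j
  have hspec : ∀ j, (g j).1 ∈ F j ∧ (g j).2 ∈ F j ∧
      (g j).1 ∉ ((Set.range fun q : {j' // r j' j} => (g q.1).1) ∪
             (Set.range fun q : {j' // r j' j} => (g q.1).2)) ∧
      (g j).2 ∉ insert (g j).1 ((Set.range fun q : {j' // r j' j} => (g q.1).1) ∪
             (Set.range fun q : {j' // r j' j} => (g q.1).2)) := by
    intro j
    rw [hg j]
    exact (keyEx j (fun j' _ => g j')).choose_spec
  refine ⟨{y | ∃ j, (g j).1 = y}, fun j => ⟨⟨(g j).1, (hspec j).1, ⟨j, rfl⟩⟩, ⟨(g j).2, (hspec j).2.1, ?_⟩⟩⟩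
  rintro ⟨j', hj'⟩
  rcases trichotomous (r := r) j' j with h | h | h
  · exact (hspec j).2.2.2 (Set.mem_insert_iff.2 (Or.inr (Set.mem_union_left _ ⟨⟨j', h⟩, hj'⟩)))
  · subst h
    exact (hspec j').2.2.2 (hj' ▸ Set.mem_insert _ _)
  · refine (hspec j').2.2.1 ?_
    rw [hj']
    exact Set.mem_union_right _ ⟨⟨j, h⟩, rfl⟩



lemma multiCR (a : Finset ℕ) (N : Finset ℕ → Set (Set ℕ))
    (F : Finset (Finset ℕ)) (hN : ∀ u ∈ F, CRSet (N u)) {T : Set ℕ} (hT : T.Infinite) :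
    ∃ T', T' ⊆ T ∧ T'.Infinite ∧
      ∀ u ∈ F, (EllSet (a ∪ u) T' ⊆ N u ∨ EllSet (a ∪ u) T' ∩ N u = ∅) := by
  classical
  induction F using Finset.induction_on with
  | empty => exact ⟨T, subset_rfl, hT, by simp⟩
  | @insert u F hu ih =>
    obtain ⟨T₁, hT₁T, hT₁inf, hdec⟩ := ih (fun v hv => hN v (Finset.mem_insert_of_mem hv))
    obtain ⟨T₂, hT₂T₁, hT₂inf, hor⟩ := hN u (Finset.mem_insert_self u F) (a ∪ u) T₁ hT₁inf
    refine ⟨T₂, hT₂T₁.trans hT₁T, hT₂inf, ?_⟩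
    intro v hv
    rcases Finset.mem_insert.1 hv with rfl | hv
    · exact hor
    · rcases hdec v hv with h | h
      · exact Or.inl ((ellSet_mono hT₂T₁).trans h)
      · refine Or.inr (eq_empty_of_subset_empty ?_)
        rw [← h]
        exact inter_subset_inter_left _ (ellSet_mono hT₂T₁)

/-- The main fusion construction. -/
lemma construction {I : Type*} (M : I → Set (Set ℕ))
    (hadd : ∀ J : Set I, CRSet (⋃ i ∈ J, M i))
    (a : Finset ℕ) (B0 : Set ℕ) (hB0 : B0.Infinite)
    (H : Set I) (x : I → Set ℕ) :
    ∃ (c : ℕ → ℕ) (B : ℕ → Set ℕ) (d : ℕ → Finset ℕ → Prop),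
      B 0 = B0 ∧ (∀ n, (B n).Infinite) ∧ (∀ n, B (n+1) ⊆ B n) ∧
      (∀ n, c n ∈ B n) ∧ (∀ n, ∀ z ∈ B (n+1), c n < z) ∧
      (∀ n (u : Finset ℕ), u ⊆ (Finset.range (n+1)).image c →
        ((d n u → EllSet (a ∪ u) (B (n+1)) ⊆
            ⋃ i ∈ {i | i ∈ H ∧ (∀ m, m < n → ((m ∈ x i) ↔ d m (u ∩ (Finset.range (m+1)).image c))) ∧ n ∈ x i}, M i) ∧
         (¬ d n u → EllSet (a ∪ u) (B (n+1)) ∩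
            (⋃ i ∈ {i | i ∈ H ∧ (∀ m, m < n → ((m ∈ x i) ↔ d m (u ∩ (Finset.range (m+1)).image c))) ∧ n ∈ x i}, M i) = ∅))) := by
  classical
  -- state: (c-values so far, current tail, decisions so far)
  set St := (ℕ → ℕ) × Set ℕ × (ℕ → Finset ℕ → Prop) with hSt
  let P : ℕ → St → Prop := fun _ s => s.2.1.Infinite
  let NN : ℕ → St → Finset ℕ → Set (Set ℕ) := fun n t u =>
    ⋃ i ∈ {i | i ∈ H ∧ (∀ m, m < n → ((m ∈ x i) ↔ t.2.2 m (u ∩ (Finset.range (m+1)).image t.1))) ∧ n ∈ x i}, M i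
  let R : ℕ → St → St → Prop := fun n s t =>
    (∀ k, k ≠ n → t.1 k = s.1 k) ∧ (∀ m, m ≠ n → t.2.2 m = s.2.2 m) ∧
    t.2.1 ⊆ s.2.1 ∧ t.1 n ∈ s.2.1 ∧ (∀ z ∈ t.2.1, t.1 n < z) ∧
    (∀ u : Finset ℕ, u ⊆ (Finset.range (n+1)).image t.1 →
      ((t.2.2 n u → EllSet (a ∪ u) t.2.1 ⊆ NN n t u) ∧
       (¬ t.2.2 n u → EllSet (a ∪ u) t.2.1 ∩ NN n t u = ∅)))
  have step : ∀ n s, P n s → ∃ t, P (n+1) t ∧ R n s t := by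
    intro n s hs
    obtain ⟨cn, hcn⟩ := hs.nonempty
    have hT : (s.2.1 \ Set.Iic cn).Infinite := hs.diff (Set.finite_Iic cn)
    set c' : ℕ → ℕ := Function.update s.1 n cn with hc'
    set Ju : Finset ℕ → Set I := fun u =>
      {i | i ∈ H ∧ (∀ m, m < n → ((m ∈ x i) ↔ s.2.2 m (u ∩ (Finset.range (m+1)).image c'))) ∧ n ∈ x i} with hJu
    obtain ⟨B', hB'T, hB'inf, hdec⟩ := multiCR a (fun u => ⋃ i ∈ Ju u, M i)
      (((Finset.range (n+1)).image c').powerset) (fun u _ => hadd (Ju u)) hT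
    set dn : Finset ℕ → Prop := fun u => EllSet (a ∪ u) B' ⊆ ⋃ i ∈ Ju u, M i with hdn
    refine ⟨(c', B', Function.update s.2.2 n dn), hB'inf, ?_, ?_, ?_, ?_, ?_, ?_⟩
    · intro k hk
      exact Function.update_of_ne hk _ _
    · intro m hm
      exact Function.update_of_ne hm _ _
    · exact fun z hz => ((hB'T hz).1)
    · show c' n ∈ s.2.1
      rw [hc', Function.update_self]
      exact hcn
    · intro z hz
      show c' n < z
      rw [hc', Function.update_self]
      have := hB'T hz
      simp only [Set.mem_diff, Set.mem_Iic, not_le] at this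
      exact this.2
    · intro u hu
      have hNNeq : NN n (c', B', Function.update s.2.2 n dn) u = ⋃ i ∈ Ju u, M i := by
        have hset : {i | i ∈ H ∧ (∀ m, m < n → ((m ∈ x i) ↔
            (Function.update s.2.2 n dn) m (u ∩ (Finset.range (m+1)).image c'))) ∧ n ∈ x i} = Ju u := by
          ext i
          simp only [Set.mem_setOf_eq, hJu]
          constructor
          · rintro ⟨h1, h2, h3⟩
            refine ⟨h1, fun m hm => ?_, h3⟩
            have := h2 m hm
            rwa [Function.update_of_ne (ne_of_lt hm)] at this
          · rintro ⟨h1, h2, h3⟩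
            refine ⟨h1, fun m hm => ?_, h3⟩
            rw [Function.update_of_ne (ne_of_lt hm)]
            exact h2 m hm
        show (⋃ i ∈ {i | i ∈ H ∧ (∀ m, m < n → ((m ∈ x i) ↔
            (Function.update s.2.2 n dn) m (u ∩ (Finset.range (m+1)).image c'))) ∧ n ∈ x i}, M i) = _
        rw [hset]
      rw [hNNeq]
      have hu' : u ∈ ((Finset.range (n+1)).image c').powerset := Finset.mem_powerset.2 hu
      constructor
      · intro hd
        change Function.update s.2.2 n dn n u at hd
        rw [Function.update_self] at hd
        exact hd
      · intro hd
        change ¬ Function.update s.2.2 n dn n u at hd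
        rw [Function.update_self] at hd
        rcases hdec u hu' with h | h
        · exact absurd h hd
        · exact h
  obtain ⟨f, hf0, hf⟩ := seqRec (P := P) (R := R) ((fun _ => 0, B0, fun _ _ => True)) hB0 step
  set c : ℕ → ℕ := fun n => (f (n+1)).1 n with hcdef
  set B : ℕ → Set ℕ := fun n => (f n).2.1 with hBdef
  set d : ℕ → Finset ℕ → Prop := fun n => (f (n+1)).2.2 n with hddef
  -- coherence
  have hccoh : ∀ n k, k < n → (f n).1 k = c k := by
    intro n
    induction n with
    | zero => intro k hk; omega
    | succ n ih =>
      intro k hk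
      rcases Nat.lt_succ_iff_lt_or_eq.1 hk with h | h
      · rw [((hf n).2.1) k (by omega), ih k h]
      · subst h; rfl
  have hdcoh : ∀ n m, m < n → (f n).2.2 m = d m := by
    intro n
    induction n with
    | zero => intro m hm; omega
    | succ n ih =>
      intro m hm
      rcases Nat.lt_succ_iff_lt_or_eq.1 hm with h | h
      · rw [((hf n).2.2.1) m (by omega), ih m h]
      · subst h; rfl
  have himg : ∀ n m, m ≤ n → (Finset.range (m+1)).image (f (n+1)).1 = (Finset.range (m+1)).image c := by
    intro n m hm
    apply Finset.image_congr
    intro k hk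
    simp only [Finset.coe_range, Set.mem_Iio] at hk
    rcases Nat.lt_succ_iff_lt_or_eq.1 (by omega : k < n+1) with h | h
    · exact hccoh (n+1) k (by omega)
    · subst h; rfl
  refine ⟨c, B, d, by show (f 0).2.1 = B0; rw [hf0], fun n => (hf n).1, fun n => (hf n).2.2.2.1, ?_, ?_, ?_⟩
  · intro n
    exact (hf n).2.2.2.2.1
  · intro n
    exact (hf n).2.2.2.2.2.1
  · intro n u hu
    have hR := (hf n).2.2.2.2.2.2 u (by rw [himg n n le_rfl]; exact hu)
    have hNNeq : NN n (f (n+1)) u =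
        ⋃ i ∈ {i | i ∈ H ∧ (∀ m, m < n → ((m ∈ x i) ↔ d m (u ∩ (Finset.range (m+1)).image c))) ∧ n ∈ x i}, M i := by
      have hset : {i | i ∈ H ∧ (∀ m, m < n → ((m ∈ x i) ↔
          (f (n+1)).2.2 m (u ∩ (Finset.range (m+1)).image (f (n+1)).1))) ∧ n ∈ x i} =
          {i | i ∈ H ∧ (∀ m, m < n → ((m ∈ x i) ↔ d m (u ∩ (Finset.range (m+1)).image c))) ∧ n ∈ x i} := by
        ext i
        simp only [Set.mem_setOf_eq]
        have hcong : ∀ m, m < n → ((f (n+1)).2.2 m (u ∩ (Finset.range (m+1)).image (f (n+1)).1) ↔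
            d m (u ∩ (Finset.range (m+1)).image c)) := by
          intro m hm
          rw [hdcoh (n+1) m (by omega), himg n m (by omega)]
        constructor
        · rintro ⟨h1, h2, h3⟩
          exact ⟨h1, fun m hm => (h2 m hm).trans (hcong m hm), h3⟩
        · rintro ⟨h1, h2, h3⟩
          exact ⟨h1, fun m hm => (h2 m hm).trans (hcong m hm).symm, h3⟩
      show (⋃ i ∈ {i | i ∈ H ∧ _ ∧ n ∈ x i}, M i) = _
      rw [hset]
    rw [hNNeq] at hR
    exact hR



lemma key {I : Type*} (M : I → Set (Set ℕ))
    (uniq : ∀ ⦃C : Set ℕ⦄ ⦃i j : I⦄, C ∈ M i → C ∈ M j → i = j)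
    (a : Finset ℕ) (H : Set I) (x : I → Set ℕ)
    (c : ℕ → ℕ) (B : ℕ → Set ℕ) (d : ℕ → Finset ℕ → Prop)
    (hBmono : ∀ n, B (n+1) ⊆ B n)
    (hcB : ∀ n, c n ∈ B n)
    (hdec : ∀ n (u : Finset ℕ), u ⊆ (Finset.range (n+1)).image c →
        ((d n u → EllSet (a ∪ u) (B (n+1)) ⊆
            ⋃ i ∈ {i | i ∈ H ∧ (∀ m, m < n → ((m ∈ x i) ↔ d m (u ∩ (Finset.range (m+1)).image c))) ∧ n ∈ x i}, M i) ∧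
         (¬ d n u → EllSet (a ∪ u) (B (n+1)) ∩
            (⋃ i ∈ {i | i ∈ H ∧ (∀ m, m < n → ((m ∈ x i) ↔ d m (u ∩ (Finset.range (m+1)).image c))) ∧ n ∈ x i}, M i) = ∅))) :
    ∀ n (u : Finset ℕ), u ⊆ (Finset.range (n+1)).image c →
      ∀ C : Set ℕ, C.Infinite → ↑(a ∪ u) ⊆ C → C ⊆ ↑(a ∪ u) ∪ B (n+1) →
      ∀ i, i ∈ H → C ∈ M i → ((n ∈ x i) ↔ d n u) := by
  classical
  have hBadd : ∀ k m, B (m + k) ⊆ B m := by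
    intro k
    induction k with
    | zero => intro m; exact subset_rfl
    | succ k ih => intro m; exact (hBmono (m + k)).trans (ih m)
  have hBle : ∀ m n, m ≤ n → B n ⊆ B m := by
    intro m n hmn
    obtain ⟨k, rfl⟩ := Nat.exists_eq_add_of_le hmn
    exact hBadd k m
  have hckB : ∀ m k, m ≤ k → c k ∈ B m := fun m k h => hBle m k h (hcB k)
  intro n
  induction n using Nat.strong_induction_on with
  | _ n IH =>
    intro u hu C hCinf hCs1 hCs2 i hiH hiM
    have hstep : ∀ m, m < n → ((m ∈ x i) ↔ d m (u ∩ (Finset.range (m+1)).image c)) := by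
      intro m hm
      refine IH m hm (u ∩ (Finset.range (m+1)).image c) Finset.inter_subset_right C hCinf ?_ ?_ i hiH hiM
      · refine Subset.trans ?_ hCs1
        exact_mod_cast Finset.coe_subset.2
          (Finset.union_subset_union_right Finset.inter_subset_left)
      · intro y hy
        rcases hCs2 hy with hyu | hyB
        · rw [Finset.coe_union] at hyu
          rcases hyu with hya | hyu
          · exact Or.inl (by rw [Finset.coe_union]; exact Or.inl hya)
          · by_cases hyi : y ∈ (Finset.range (m+1)).image c
            · refine Or.inl ?_
              rw [Finset.coe_union]
              exact Or.inr (by exact_mod_cast Finset.mem_inter.2 ⟨hyu, hyi⟩)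
            · have := hu hyu
              obtain ⟨k, hk, rfl⟩ := Finset.mem_image.1 this
              have hkm : m + 1 ≤ k := by
                by_contra hcon
                exact hyi (Finset.mem_image.2 ⟨k, Finset.mem_range.2 (by omega), rfl⟩)
              exact Or.inr (hckB (m+1) k hkm)
        · exact Or.inr (hBle (m+1) (n+1) (by omega) hyB)
    have hcube : C ∈ EllSet (a ∪ u) (B (n+1)) := ⟨hCinf, hCs1, hCs2⟩
    by_cases hd : d n u
    · have := (hdec n u hu).1 hd hcube
      rw [Set.mem_iUnion₂] at this
      obtain ⟨j, ⟨hjH, hjd, hjx⟩, hCj⟩ := this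
      have hij : i = j := uniq hiM hCj
      subst hij
      exact iff_of_true hjx hd
    · refine iff_of_false ?_ hd
      intro hxi
      have hC_in : C ∈ EllSet (a ∪ u) (B (n+1)) ∩
          (⋃ i ∈ {i | i ∈ H ∧ (∀ m, m < n → ((m ∈ x i) ↔ d m (u ∩ (Finset.range (m+1)).image c))) ∧ n ∈ x i}, M i) := by
        refine ⟨hcube, ?_⟩
        rw [Set.mem_iUnion₂]
        exact ⟨i, ⟨hiH, hstep, hxi⟩, hiM⟩
      rw [(hdec n u hu).2 hd] at hC_in
      exact hC_in

lemma psirep {I : Type*} (M : I → Set (Set ℕ))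
    (uniq : ∀ ⦃C : Set ℕ⦄ ⦃i j : I⦄, C ∈ M i → C ∈ M j → i = j)
    (a : Finset ℕ) (H : Set I) (x : I → Set ℕ)
    (c : ℕ → ℕ) (B : ℕ → Set ℕ) (d : ℕ → Finset ℕ → Prop)
    (hBmono : ∀ n, B (n+1) ⊆ B n)
    (hcB : ∀ n, c n ∈ B n)
    (hdec : ∀ n (u : Finset ℕ), u ⊆ (Finset.range (n+1)).image c →
        ((d n u → EllSet (a ∪ u) (B (n+1)) ⊆
            ⋃ i ∈ {i | i ∈ H ∧ (∀ m, m < n → ((m ∈ x i) ↔ d m (u ∩ (Finset.range (m+1)).image c))) ∧ n ∈ x i}, M i) ∧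
         (¬ d n u → EllSet (a ∪ u) (B (n+1)) ∩
            (⋃ i ∈ {i | i ∈ H ∧ (∀ m, m < n → ((m ∈ x i) ↔ d m (u ∩ (Finset.range (m+1)).image c))) ∧ n ∈ x i}, M i) = ∅)))
    (uOf : Set ℕ → ℕ → Finset ℕ)
    (huOf : ∀ (C : Set ℕ) (m : ℕ) (y : ℕ), y ∈ uOf C m ↔ (y ∈ (Finset.range (m+1)).image c ∧ y ∈ C))
    (ψ : Set ℕ → Set ℕ)
    (hψ : ∀ (C : Set ℕ) (m : ℕ), m ∈ ψ C ↔ d m (uOf C m)) :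
    ∀ C : Set ℕ, C.Infinite → ↑a ⊆ C → C ⊆ ↑a ∪ Set.range c →
      ∀ i, i ∈ H → C ∈ M i → x i = ψ C := by
  intro C hCinf haC hCsub i hiH hiM
  ext m
  rw [hψ C m]
  refine key M uniq a H x c B d hBmono hcB hdec m (uOf C m)
    (fun y hy => ((huOf C m y).1 hy).1) C hCinf ?_ ?_ i hiH hiM
  · rw [Finset.coe_union]
    rintro y (hy | hy)
    · exact haC hy
    · exact ((huOf C m y).1 hy).2
  · intro y hy
    by_cases hya : y ∈ (↑a : Set ℕ)
    · exact Or.inl (by rw [Finset.coe_union]; exact Or.inl hya)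
    · rcases hCsub hy with h | h
      · exact absurd h hya
      · obtain ⟨k, rfl⟩ := h
        by_cases hk : k ≤ m
        · refine Or.inl ?_
          rw [Finset.coe_union]
          refine Or.inr ?_
          have : c k ∈ uOf C m := (huOf C m (c k)).2
            ⟨Finset.mem_image.2 ⟨k, Finset.mem_range.2 (by omega), rfl⟩, hy⟩
          exact_mod_cast this
        · -- k ≥ m+1 so c k ∈ B (m+1)
          have hBadd : ∀ j l, B (l + j) ⊆ B l := by
            intro j
            induction j with
            | zero => intro l; exact subset_rfl
            | succ j ih => intro l; exact (hBmono (l + j)).trans (ih l)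
          have : m + 1 ≤ k := by omega
          obtain ⟨j, rfl⟩ := Nat.exists_eq_add_of_le this
          exact Or.inr (hBadd j (m+1) (hcB (m + 1 + j)))



/-- Cantor-scheme: below any cube `[a, Z]` inside `range c`, if `ψ` is nowhere constant
on subcubes, then continuum many `ψ`-values are realized. -/
lemma scheme (a : Finset ℕ) (c : ℕ → ℕ) (ψ : Set ℕ → Set ℕ)
    (hNC : ∀ (s : Finset ℕ) (Z : Set ℕ), a ⊆ s → ↑s ⊆ ↑a ∪ Set.range c →
      Z ⊆ Set.range c → Z.Infinite →
      ∃ C ∈ EllSet s Z, ∃ C' ∈ EllSet s Z, ψ C ≠ ψ C')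
    (hdet : ∀ (C : Set ℕ) (m : ℕ) (N : ℕ), c m ≤ N →
      ∀ D : Set ℕ, (∀ y, y ≤ N → (y ∈ D ↔ y ∈ C)) → (m ∈ ψ D ↔ m ∈ ψ C)) :
    ∀ (Z : Set ℕ), Z ⊆ Set.range c → Z.Infinite →
      ∃ g : (ℕ → Bool) → Set ℕ, Function.Injective g ∧ ∀ β, g β ∈ ψ '' (EllSet a Z) := by
  classical
  -- the one-step splitting lemma
  have hSL : ∀ (s : Finset ℕ) (Z : Set ℕ), a ⊆ s → ↑s ⊆ ↑a ∪ Set.range c →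
      Z ⊆ Set.range c → Z.Infinite →
      ∃ (s₀ s₁ : Finset ℕ) (Z' : Set ℕ) (m : ℕ),
        s ⊆ s₀ ∧ s ⊆ s₁ ∧ s.card < s₀.card ∧ s.card < s₁.card ∧
        ↑s₀ \ ↑s ⊆ Z ∧ ↑s₁ \ ↑s ⊆ Z ∧ Z' ⊆ Z ∧ Z'.Infinite ∧
        (∀ D ∈ EllSet s₀ Z', m ∈ ψ D) ∧ (∀ D ∈ EllSet s₁ Z', m ∉ ψ D) := by
    intro s Z has hsrc hZrc hZinf
    -- a single-sided helper
    have main : ∀ (C C' : Set ℕ) (m : ℕ), C ∈ EllSet s Z → C' ∈ EllSet s Z →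
        m ∈ ψ C → m ∉ ψ C' →
        ∃ (s₀ s₁ : Finset ℕ) (Z' : Set ℕ),
          s ⊆ s₀ ∧ s ⊆ s₁ ∧ s.card < s₀.card ∧ s.card < s₁.card ∧
          ↑s₀ \ ↑s ⊆ Z ∧ ↑s₁ \ ↑s ⊆ Z ∧ Z' ⊆ Z ∧ Z'.Infinite ∧
          (∀ D ∈ EllSet s₀ Z', m ∈ ψ D) ∧ (∀ D ∈ EllSet s₁ Z', m ∉ ψ D) := by
      rintro C C' m ⟨hCinf, hsC, hCsub⟩ ⟨hC'inf, hsC', hC'sub⟩ hmC hmC'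
      obtain ⟨e, he⟩ := (hCinf.diff s.finite_toSet).nonempty
      obtain ⟨e', he'⟩ := (hC'inf.diff s.finite_toSet).nonempty
      set N := max (c m) (max (max e e') (s.sup id)) with hN
      have hcmN : c m ≤ N := le_max_left _ _
      have heN : e ≤ N := le_trans (le_trans (le_max_left _ _) (le_max_left _ _)) (le_max_right _ _)
      have he'N : e' ≤ N := le_trans (le_trans (le_max_right _ _) (le_max_left _ _)) (le_max_right _ _)
      have hsN : ∀ y ∈ s, y ≤ N :=
        fun y hy => le_trans (Finset.le_sup (f := id) hy) (le_trans (le_max_right _ _) (le_max_right _ _))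
      -- build one side
      have build : ∀ (D0 : Set ℕ), D0.Infinite → ↑s ⊆ D0 → D0 ⊆ ↑s ∪ Z →
          ∀ e0 ∈ D0 \ ↑s, e0 ≤ N →
          ∃ s₀ : Finset ℕ, s ⊆ s₀ ∧ s.card < s₀.card ∧ ↑s₀ \ ↑s ⊆ Z ∧
            (∀ y, y ∈ s₀ ↔ y ∈ D0 ∧ y ≤ N) := by
        intro D0 hD0inf hsD0 hD0sub e0 he0 he0N
        have hfin : (D0 ∩ Set.Iic N).Finite := (Set.finite_Iic N).subset inter_subset_right
        refine ⟨hfin.toFinset, ?_, ?_, ?_, ?_⟩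
        · intro y hy
          rw [Set.Finite.mem_toFinset]
          exact ⟨hsD0 hy, hsN y hy⟩
        · refine Finset.card_lt_card ?_
          rw [Finset.ssubset_iff_of_subset (fun y hy => by
            rw [Set.Finite.mem_toFinset]; exact ⟨hsD0 hy, hsN y hy⟩)]
          exact ⟨e0, by rw [Set.Finite.mem_toFinset]; exact ⟨he0.1, he0N⟩, fun h => he0.2 h⟩
        · intro y hy
          simp only [Set.mem_diff, Finset.coe_sort_coe, Set.Finite.coe_toFinset] at hy
          rcases hD0sub hy.1.1 with h | h
          · exact absurd h hy.2
          · exact h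
        · intro y
          rw [Set.Finite.mem_toFinset]
          simp only [Set.mem_inter_iff, Set.mem_Iic]
      obtain ⟨s₀, hs₀1, hs₀2, hs₀3, hs₀mem⟩ := build C hCinf hsC hCsub e he heN
      obtain ⟨s₁, hs₁1, hs₁2, hs₁3, hs₁mem⟩ := build C' hC'inf hsC' hC'sub e' he' he'N
      refine ⟨s₀, s₁, Z \ Set.Iic N, hs₀1, hs₁1, hs₀2, hs₁2, hs₀3, hs₁3,
        diff_subset, hZinf.diff (Set.finite_Iic N), ?_, ?_⟩
      · rintro D ⟨hDinf, hs₀D, hDsub⟩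
        refine (hdet C m N hcmN D ?_).2 hmC
        intro y hyN
        constructor
        · intro hyD
          rcases hDsub hyD with h | h
          · have := (hs₀mem y).1 (by exact_mod_cast h)
            exact this.1
          · exact absurd hyN (by simp only [Set.mem_diff, Set.mem_Iic, not_le] at h; omega)
        · intro hyC
          exact hs₀D (by exact_mod_cast (hs₀mem y).2 ⟨hyC, hyN⟩)
      · rintro D ⟨hDinf, hs₁D, hDsub⟩
        intro hmD
        refine hmC' ((hdet C' m N hcmN D ?_).1 hmD)
        intro y hyN
        constructor
        · intro hyD
          rcases hDsub hyD with h | h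
          · exact ((hs₁mem y).1 (by exact_mod_cast h)).1
          · exact absurd hyN (by simp only [Set.mem_diff, Set.mem_Iic, not_le] at h; omega)
        · intro hyC'
          exact hs₁D (by exact_mod_cast (hs₁mem y).2 ⟨hyC', hyN⟩)
    obtain ⟨C, hC, C', hC', hne⟩ := hNC s Z has hsrc hZrc hZinf
    have : ∃ m, ¬ (m ∈ ψ C ↔ m ∈ ψ C') := by
      by_contra h
      push_neg at h
      exact hne (Set.ext fun m => h m)
    obtain ⟨m, hm⟩ := this
    by_cases hmC : m ∈ ψ C
    · have hmC' : m ∉ ψ C' := fun h => hm ⟨fun _ => h, fun _ => hmC⟩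
      obtain ⟨s₀, s₁, Z', h1, h2, h3, h4, h5, h6, h7, h8, h9, h10⟩ := main C C' m hC hC' hmC hmC'
      exact ⟨s₀, s₁, Z', m, h1, h2, h3, h4, h5, h6, h7, h8, h9, h10⟩
    · have hmC' : m ∈ ψ C' := by
        by_contra h
        exact hm ⟨fun h' => absurd h' hmC, fun h' => absurd h' h⟩
      obtain ⟨s₀, s₁, Z', h1, h2, h3, h4, h5, h6, h7, h8, h9, h10⟩ := main C' C m hC' hC hmC' hmC
      exact ⟨s₀, s₁, Z', m, h1, h2, h3, h4, h5, h6, h7, h8, h9, h10⟩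
  -- now the recursion for a fixed root Z
  intro Z hZrc hZinf
  -- node type
  let ND := {q : Finset ℕ × Set ℕ // a ⊆ q.1 ∧ ↑q.1 ⊆ ↑a ∪ Set.range c ∧ q.2 ⊆ Set.range c ∧ q.2.Infinite}
  have hSLnd : ∀ nd : ND, ∃ pr : ND × ND × ℕ,
      nd.1.1 ⊆ pr.1.1.1 ∧ nd.1.1 ⊆ pr.2.1.1.1 ∧
      nd.1.1.card < pr.1.1.1.card ∧ nd.1.1.card < pr.2.1.1.1.card ∧
      ↑pr.1.1.1 \ ↑nd.1.1 ⊆ nd.1.2 ∧ ↑pr.2.1.1.1 \ ↑nd.1.1 ⊆ nd.1.2 ∧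
      pr.1.1.2 ⊆ nd.1.2 ∧ pr.2.1.1.2 ⊆ nd.1.2 ∧
      (∀ D ∈ EllSet pr.1.1.1 pr.1.1.2, pr.2.2 ∈ ψ D) ∧
      (∀ D ∈ EllSet pr.2.1.1.1 pr.2.1.1.2, pr.2.2 ∉ ψ D) := by
    rintro ⟨⟨s, W⟩, has, hsrc, hWrc, hWinf⟩
    obtain ⟨s₀, s₁, Z', m, h1, h2, h3, h4, h5, h6, h7, h8, h9, h10⟩ :=
      hSL s W has hsrc hWrc hWinf
    have hsub : ∀ (t : Finset ℕ), s ⊆ t → ↑t \ ↑s ⊆ W → (↑t : Set ℕ) ⊆ ↑a ∪ Set.range c := by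
      intro t hst htW y hy
      by_cases hys : y ∈ (↑s : Set ℕ)
      · exact hsrc hys
      · exact Or.inr (hWrc (htW ⟨hy, hys⟩))
    refine ⟨⟨⟨⟨s₀, Z'⟩, has.trans h1, hsub s₀ h1 h5, h7.trans hWrc, h8⟩,
            ⟨⟨s₁, Z'⟩, has.trans h2, hsub s₁ h2 h6, h7.trans hWrc, h8⟩, m⟩,
      h1, h2, h3, h4, h5, h6, h7, h7, h9, h10⟩
  choose SLc hm1 hm2 hm3 hm4 hm5 hm6 hm7 hm8 hm9 hm10 using hSLnd
  have root_pf : a ⊆ (a, Z).1 ∧ ↑(a, Z).1 ⊆ ↑a ∪ Set.range c ∧ (a, Z).2 ⊆ Set.range c ∧ (a, Z).2.Infinite :=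
    ⟨subset_rfl, fun y hy => Or.inl hy, hZrc, hZinf⟩
  obtain ⟨nds, hnds0, hndsS⟩ : ∃ nds : (ℕ → Bool) → ℕ → ND,
      (∀ β, nds β 0 = ⟨(a, Z), root_pf⟩) ∧
      (∀ β k, nds β (k+1) = if β k then (SLc (nds β k)).1 else (SLc (nds β k)).2.1) :=
    ⟨fun β k => Nat.rec ⟨(a, Z), root_pf⟩ (fun k nd => if β k then (SLc nd).1 else (SLc nd).2.1) k,
      fun β => rfl, fun β k => rfl⟩
  -- step facts uniform in the branch value
  have hstep_s : ∀ β k, (nds β k).1.1 ⊆ (nds β (k+1)).1.1 := by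
    intro β k
    rw [hndsS]
    cases β k with
    | true => simpa using hm1 (nds β k)
    | false => simpa using hm2 (nds β k)
  have hstep_card : ∀ β k, (nds β k).1.1.card < (nds β (k+1)).1.1.card := by
    intro β k
    rw [hndsS]
    cases β k with
    | true => simpa using hm3 (nds β k)
    | false => simpa using hm4 (nds β k)
  have hstep_diff : ∀ β k, ↑(nds β (k+1)).1.1 \ ↑(nds β k).1.1 ⊆ (nds β k).1.2 := by
    intro β k
    rw [hndsS]
    cases β k with
    | true => simpa using hm5 (nds β k)
    | false => simpa using hm6 (nds β k)
  have hstep_Z : ∀ β k, (nds β (k+1)).1.2 ⊆ (nds β k).1.2 := by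
    intro β k
    rw [hndsS]
    cases β k with
    | true => simpa using hm7 (nds β k)
    | false => simpa using hm8 (nds β k)
  -- chains
  have hs_mono : ∀ β k l, k ≤ l → (nds β k).1.1 ⊆ (nds β l).1.1 := by
    intro β k l hkl
    induction l with
    | zero =>
      have hk0 : k = 0 := by omega
      subst hk0; exact subset_rfl
    | succ l ih =>
      rcases Nat.of_le_succ hkl with h | h
      · exact (ih h).trans (hstep_s β l)
      · subst h; exact subset_rfl
  have hZ_mono : ∀ β k l, k ≤ l → (nds β l).1.2 ⊆ (nds β k).1.2 := by
    intro β k l hkl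
    induction l with
    | zero =>
      have hk0 : k = 0 := by omega
      subst hk0; exact subset_rfl
    | succ l ih =>
      rcases Nat.of_le_succ hkl with h | h
      · exact (hstep_Z β l).trans (ih h)
      · subst h; exact subset_rfl
  have hdiff : ∀ β k l, k ≤ l → (↑(nds β l).1.1 : Set ℕ) \ ↑(nds β k).1.1 ⊆ (nds β k).1.2 := by
    intro β k l hkl
    induction l with
    | zero =>
      have hk0 : k = 0 := by omega
      subst hk0
      rintro y ⟨hy1, hy2⟩
      exact absurd hy1 hy2
    | succ l ih =>
      rcases Nat.of_le_succ hkl with h | h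
      · rintro y ⟨hy1, hy2⟩
        by_cases hyl : y ∈ (↑(nds β l).1.1 : Set ℕ)
        · exact ih h ⟨hyl, hy2⟩
        · exact hZ_mono β k l h (hstep_diff β l ⟨hy1, hyl⟩)
      · subst h
        rintro y ⟨hy1, hy2⟩
        exact absurd hy1 hy2
  have hcard : ∀ β k, k ≤ (nds β k).1.1.card := by
    intro β k
    induction k with
    | zero => omega
    | succ k ih =>
      have := hstep_card β k
      omega
  have hagree : ∀ k (β β' : ℕ → Bool), (∀ j, j < k → β j = β' j) → nds β k = nds β' k := by
    intro k
    induction k with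
    | zero => intro β β' _; rw [hnds0, hnds0]
    | succ k ih =>
      intro β β' h
      rw [hndsS, hndsS, ih β β' (fun j hj => h j (by omega)), h k (by omega)]
  -- the branch sets
  set Cb : (ℕ → Bool) → Set ℕ := fun β => ⋃ k, (↑(nds β k).1.1 : Set ℕ) with hCb
  have hCb_cube : ∀ β k, Cb β ∈ EllSet (nds β k).1.1 (nds β k).1.2 := by
    intro β k
    refine ⟨?_, ?_, ?_⟩
    · by_contra h
      rw [Set.not_infinite] at h
      have hsub : (nds β (h.toFinset.card + 1)).1.1 ⊆ h.toFinset := by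
        intro y hy
        rw [Set.Finite.mem_toFinset]
        exact Set.mem_iUnion.2 ⟨h.toFinset.card + 1, hy⟩
      have h1 := Finset.card_le_card hsub
      have h2 := hcard β (h.toFinset.card + 1)
      omega
    · exact Set.subset_iUnion (fun k => (↑(nds β k).1.1 : Set ℕ)) k
    · intro y hy
      obtain ⟨j, hj⟩ := Set.mem_iUnion.1 hy
      rcases le_or_gt j k with h | h
      · exact Or.inl (by exact_mod_cast hs_mono β j k h hj)
      · by_cases hyk : y ∈ (↑(nds β k).1.1 : Set ℕ)
        · exact Or.inl hyk
        · exact Or.inr (hdiff β k j (by omega) ⟨hj, hyk⟩)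
  have hCbZ : ∀ β, Cb β ∈ EllSet a Z := by
    intro β
    have := hCb_cube β 0
    rw [hnds0 β] at this
    exact this
  refine ⟨fun β => ψ (Cb β), ?_, fun β => ⟨Cb β, hCbZ β, rfl⟩⟩
  intro β β' hg
  by_contra hne
  have hex : ∃ k, β k ≠ β' k := by
    by_contra h
    push_neg at h
    exact hne (funext h)
  set k₀ := Nat.find hex with hk₀def
  have hk₀ : β k₀ ≠ β' k₀ := Nat.find_spec hex
  have heq : nds β k₀ = nds β' k₀ :=
    hagree k₀ β β' (fun j hj => not_not.1 (Nat.find_min hex hj))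
  set m := (SLc (nds β k₀)).2.2 with hmdef
  have hcube_β : Cb β ∈ EllSet (nds β (k₀+1)).1.1 (nds β (k₀+1)).1.2 := hCb_cube β (k₀+1)
  have hcube_β' : Cb β' ∈ EllSet (nds β' (k₀+1)).1.1 (nds β' (k₀+1)).1.2 := hCb_cube β' (k₀+1)
  cases hb : β k₀ with
  | true =>
    have hb' : β' k₀ = false := by
      revert hk₀
      rw [hb]
      cases β' k₀ <;> simp
    have h1 : m ∈ ψ (Cb β) := by
      have hrw : nds β (k₀+1) = (SLc (nds β k₀)).1 := by rw [hndsS, hb]; simp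
      rw [hrw] at hcube_β
      exact hm9 (nds β k₀) _ hcube_β
    have h2 : m ∉ ψ (Cb β') := by
      have hrw : nds β' (k₀+1) = (SLc (nds β k₀)).2.1 := by
        rw [hndsS, hb', ← heq]; simp
      rw [hrw] at hcube_β'
      exact hm10 (nds β k₀) _ hcube_β'
    have hg' : ψ (Cb β) = ψ (Cb β') := hg
    rw [hg'] at h1
    exact h2 h1
  | false =>
    have hb' : β' k₀ = true := by
      revert hk₀
      rw [hb]
      cases β' k₀ <;> simp
    have h1 : m ∉ ψ (Cb β) := by
      have hrw : nds β (k₀+1) = (SLc (nds β k₀)).2.1 := by rw [hndsS, hb]; simp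
      rw [hrw] at hcube_β
      exact hm10 (nds β k₀) _ hcube_β
    have h2 : m ∈ ψ (Cb β') := by
      have hrw : nds β' (k₀+1) = (SLc (nds β k₀)).1 := by
        rw [hndsS, hb', ← heq]; simp
      rw [hrw] at hcube_β'
      exact hm9 (nds β k₀) _ hcube_β'
    have hg' : ψ (Cb β) = ψ (Cb β') := hg
    rw [hg'] at h1
    exact h1 h2


end RNAux

/-- If a pairwise disjoint family of Ramsey null sets is CR-additive, then its union is Ramsey null. -/
theorem ramseyNull_of_disjoint_CR_additive {I : Type*} (M : I → Set (Set ℕ))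
    (hdisj : Pairwise fun i j => Disjoint (M i) (M j))
    (h0 : ∀ i, RamseyNull (M i))
    (hadd : ∀ J : Set I, CRSet (⋃ i ∈ J, M i)) :
    RamseyNull (⋃ i, M i) := by
  classical
  intro a A hA
  have hU : (⋃ i ∈ (Set.univ : Set I), M i) = ⋃ i, M i := by simp
  obtain ⟨B0, hB0A, hB0inf, hcase⟩ := hadd Set.univ a A hA
  rw [hU] at hcase
  rcases hcase with hcov | hdisj0
  swap
  · exact ⟨B0, hB0A, hB0inf, hdisj0⟩
  exfalso
  have uniq : ∀ ⦃C : Set ℕ⦄ ⦃i j : I⦄, C ∈ M i → C ∈ M j → i = j := by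
    intro C i j hi hj
    by_contra hne
    exact Set.disjoint_left.1 (hdisj hne) hi hj
  set H : Set I := {i | ∃ C, C ∈ M i ∧ C ∈ EllSet a B0} with hHdef
  have hWit : ∀ i, i ∈ H → ∃ C, C ∈ M i ∧ C ∈ EllSet a B0 := fun i hi => hi
  choose W hW1 hW2 using hWit
  set x : I → Set ℕ := fun i => if h : i ∈ H then W i h else ∅ with hxdef
  have hxval : ∀ i (h : i ∈ H), x i = W i h := by
    intro i h
    simp only [hxdef, dif_pos h]
  have hxinj : ∀ i ∈ H, ∀ j ∈ H, x i = x j → i = j := by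
    intro i hi j hj hxy
    rw [hxval i hi, hxval j hj] at hxy
    exact uniq (hxy ▸ hW1 i hi) (hW1 j hj)
  have hidx : ∀ C ∈ EllSet a B0, ∃ i, i ∈ H ∧ C ∈ M i := by
    intro C hC
    obtain ⟨i, hi⟩ := Set.mem_iUnion.1 (hcov hC)
    exact ⟨i, ⟨C, hi, hC⟩, hi⟩
  obtain ⟨c, B, d, hB0eq, hBinf, hBmono, hcB, hclt, hdec⟩ :=
    RNAux.construction M hadd a B0 hB0inf H x
  have hBle0 : ∀ n, B n ⊆ B 0 := by
    intro n
    induction n with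
    | zero => exact subset_rfl
    | succ n ih => exact (hBmono n).trans ih
  have hrc : Set.range c ⊆ B0 := by
    rintro y ⟨n, rfl⟩
    rw [← hB0eq]
    exact hBle0 n (hcB n)
  have hcmono : StrictMono c :=
    strictMono_nat_of_lt_succ (fun n => hclt n (c (n+1)) (hcB (n+1)))
  have hrcinf : (Set.range c).Infinite := Set.infinite_range_of_injective hcmono.injective
  set uOf : Set ℕ → ℕ → Finset ℕ :=
    fun C m => ((Finset.range (m+1)).image c).filter (fun y => y ∈ C) with huOfdef
  have huOf : ∀ (C : Set ℕ) (m : ℕ) (y : ℕ),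
      y ∈ uOf C m ↔ (y ∈ (Finset.range (m+1)).image c ∧ y ∈ C) := by
    intro C m y
    simp only [huOfdef, Finset.mem_filter]
  set ψ : Set ℕ → Set ℕ := fun C => {m | d m (uOf C m)} with hψdef
  have hψ : ∀ (C : Set ℕ) (m : ℕ), m ∈ ψ C ↔ d m (uOf C m) := fun C m => Iff.rfl
  have hrep := RNAux.psirep M uniq a H x c B d hBmono hcB hdec uOf huOf ψ hψ
  have hNC1 : ∀ (s : Finset ℕ) (Z : Set ℕ), Z.Infinite → ∀ i, ¬ (EllSet s Z ⊆ M i) :=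
    fun s Z hZ i => RNAux.not_ellSet_subset (h0 i) s hZ
  have hNCψ : ∀ (s : Finset ℕ) (Z : Set ℕ), a ⊆ s → ↑s ⊆ ↑a ∪ Set.range c →
      Z ⊆ Set.range c → Z.Infinite →
      ∃ C ∈ EllSet s Z, ∃ C' ∈ EllSet s Z, ψ C ≠ ψ C' := by
    intro s Z has hsrc hZrc hZinf
    by_contra hcon
    push_neg at hcon
    have hcube_sub : EllSet s Z ⊆ EllSet a B0 := by
      rintro C ⟨hCinf, hsC, hCsub⟩
      refine ⟨hCinf, fun y hy => hsC (Finset.coe_subset.2 has hy), ?_⟩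
      intro y hy
      rcases hCsub hy with h | h
      · rcases hsrc h with h' | h'
        · exact Or.inl h'
        · exact Or.inr (hrc h')
      · exact Or.inr (hrc (hZrc h))
    have hCrc : ∀ C ∈ EllSet s Z, C ⊆ ↑a ∪ Set.range c := by
      rintro C ⟨_, _, hCsub⟩ y hy
      rcases hCsub hy with h | h
      · exact hsrc h
      · exact Or.inr (hZrc h)
    have hC₀ : (↑s ∪ Z) ∈ EllSet s Z := RNAux.top_mem hZinf
    obtain ⟨i₀, hi₀H, hi₀M⟩ := hidx _ (hcube_sub hC₀)
    refine hNC1 s Z hZinf i₀ ?_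
    intro C hC
    obtain ⟨i, hiH, hiM⟩ := hidx C (hcube_sub hC)
    have haC : (↑a : Set ℕ) ⊆ C := fun y hy => hC.2.1 (Finset.coe_subset.2 has hy)
    have haC₀ : (↑a : Set ℕ) ⊆ ↑s ∪ Z := fun y hy => hC₀.2.1 (Finset.coe_subset.2 has hy)
    have h1 : x i = ψ C := hrep C hC.1 haC (hCrc C hC) i hiH hiM
    have h2 : x i₀ = ψ (↑s ∪ Z) := hrep _ hC₀.1 haC₀ (hCrc _ hC₀) i₀ hi₀H hi₀M
    have hii : i = i₀ := by
      refine hxinj i hiH i₀ hi₀H ?_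
      rw [h1, h2]
      exact hcon C hC _ hC₀
    rwa [← hii]
  have hdet : ∀ (C : Set ℕ) (m N : ℕ), c m ≤ N →
      ∀ D : Set ℕ, (∀ y, y ≤ N → (y ∈ D ↔ y ∈ C)) → (m ∈ ψ D ↔ m ∈ ψ C) := by
    intro C m N hcmN D hDC
    rw [hψ, hψ]
    have huu : uOf D m = uOf C m := by
      apply Finset.ext
      intro y
      rw [huOf, huOf]
      constructor <;> rintro ⟨hy1, hy2⟩
      · refine ⟨hy1, ?_⟩
        obtain ⟨k, hk, rfl⟩ := Finset.mem_image.1 hy1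
        have hkm : c k ≤ c m := hcmono.monotone (by
          have := Finset.mem_range.1 hk; omega)
        exact (hDC _ (le_trans hkm hcmN)).1 hy2
      · refine ⟨hy1, ?_⟩
        obtain ⟨k, hk, rfl⟩ := Finset.mem_image.1 hy1
        have hkm : c k ≤ c m := hcmono.monotone (by
          have := Finset.mem_range.1 hk; omega)
        exact (hDC _ (le_trans hkm hcmN)).2 hy2
    rw [huu]
  have hbig := RNAux.scheme a c ψ hNCψ hdet
  set F : {Z : Set ℕ // Z ⊆ Set.range c ∧ Z.Infinite} → Set (Set ℕ) :=
    fun j => ψ '' (EllSet a j.1) with hFdef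
  have hFcard : ∀ j, Cardinal.mk (Set ℕ) ≤ Cardinal.mk (F j) := by
    intro j
    obtain ⟨g, hginj, hgmem⟩ := hbig j.1 j.2.1 j.2.2
    have h1 : Cardinal.mk (Set ℕ) ≤ Cardinal.mk (ℕ → Bool) := by
      refine Cardinal.mk_le_of_injective (f := fun (X : Set ℕ) => fun n => decide (n ∈ X)) ?_
      intro X X' h
      ext n
      have hn : decide (n ∈ X) = decide (n ∈ X') := congrFun h n
      constructor
      · intro hnX
        have hd : decide (n ∈ X) = true := decide_eq_true hnX
        rw [hn] at hd
        exact of_decide_eq_true hd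
      · intro hnX'
        have hd : decide (n ∈ X') = true := decide_eq_true hnX'
        rw [← hn] at hd
        exact of_decide_eq_true hd
    have h2 : Cardinal.mk (ℕ → Bool) ≤ Cardinal.mk (F j) := by
      refine Cardinal.mk_le_of_injective (f := fun β => (⟨g β, hgmem β⟩ : F j)) ?_
      intro β β' h
      exact hginj (congrArg Subtype.val h)
    exact h1.trans h2
  obtain ⟨Y, hY⟩ := RNAux.bernstein F (Cardinal.mk_subtype_le _) hFcard
  set J : Set I := {i | i ∈ H ∧ x i ∈ Y} with hJdef
  obtain ⟨Z₁, hZ₁rc, hZ₁inf, hcase2⟩ := hadd J a (Set.range c) hrcinf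
  obtain ⟨⟨y₀, hy₀F, hy₀Y⟩, ⟨y₁, hy₁F, hy₁Y⟩⟩ := hY ⟨Z₁, hZ₁rc, hZ₁inf⟩
  obtain ⟨C₀, hC₀cube, hC₀ψ⟩ := hy₀F
  obtain ⟨C₁, hC₁cube, hC₁ψ⟩ := hy₁F
  have hsubB0 : EllSet a Z₁ ⊆ EllSet a B0 := RNAux.ellSet_mono (hZ₁rc.trans hrc)
  have hsubrc : ∀ C ∈ EllSet a Z₁, C ⊆ ↑a ∪ Set.range c := by
    rintro C ⟨_, _, hCsub⟩ y hy
    rcases hCsub hy with h | h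
    · exact Or.inl h
    · exact Or.inr (hZ₁rc h)
  rcases hcase2 with hsub | hint
  · have hC₁J : C₁ ∈ ⋃ i ∈ J, M i := hsub hC₁cube
    rw [Set.mem_iUnion₂] at hC₁J
    obtain ⟨j, hjJ, hC₁j⟩ := hC₁J
    obtain ⟨i, hiH, hiM⟩ := hidx C₁ (hsubB0 hC₁cube)
    obtain rfl : j = i := uniq hC₁j hiM
    have hx : x j = ψ C₁ := hrep C₁ hC₁cube.1 hC₁cube.2.1 (hsubrc C₁ hC₁cube) j hiH hiM
    have hxy : x j ∈ Y := hjJ.2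
    rw [hx, hC₁ψ] at hxy
    exact hy₁Y hxy
  · obtain ⟨i, hiH, hiM⟩ := hidx C₀ (hsubB0 hC₀cube)
    have hx : x i = ψ C₀ := hrep C₀ hC₀cube.1 hC₀cube.2.1 (hsubrc C₀ hC₀cube) i hiH hiM
    have hiJ : i ∈ J := ⟨hiH, by rw [hx, hC₀ψ]; exact hy₀Y⟩
    have hmem : C₀ ∈ EllSet a Z₁ ∩ ⋃ i ∈ J, M i :=
      ⟨hC₀cube, Set.mem_iUnion₂.2 ⟨i, hiJ, hiM⟩⟩
    rw [hint] at hmem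
    exact hmem
end

section
/- The family of (s⁰)-sets forms a σ-ideal on 2^ω: it is closed under subsets and countable unions, and contains the empty set. -/
open Set

lemma take_ofFn_x (x : ℕ → Bool) {n m : ℕ} (h : n ≤ m) :
    (List.ofFn fun i : Fin m => x i).take n = List.ofFn fun i : Fin n => x i := by
  apply List.ext_getElem
  · simp [h]
  · intro i h1 h2
    simp [List.getElem_take]

lemma last_eq {u : List Bool} {a b : Bool} {w : List Bool}
    (h1 : u ++ [a] <+: w) (h2 : u ++ [b] <+: w) : a = b := by
  have h3 := List.prefix_of_prefix_length_le h1 h2 (by simp)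
  have h4 := h3.eq_of_length (by simp)
  simpa using h4

lemma suffix_strict {l₁ l₂ : List Bool} (h : l₁ <:+ l₂) (hne : l₁ ≠ l₂) :
    ∃ c, c :: l₁ <:+ l₂ := by
  obtain ⟨w, rfl⟩ := h
  rcases List.eq_nil_or_concat w with rfl | ⟨w', c, rfl⟩
  · simp at hne
  · exact ⟨c, w', by simp⟩

lemma perfect_long {T : Set (List Bool)} (hT : IsPerfectTree T) (N : ℕ) :
    ∀ t ∈ T, ∃ s ∈ T, t <+: s ∧ N ≤ s.length ∧ s ++ [false] ∈ T ∧ s ++ [true] ∈ T := by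
  induction N with
  | zero =>
    intro t ht
    obtain ⟨s, hs, h1, h2, h3⟩ := hT.2.2 t ht
    exact ⟨s, hs, h1, Nat.zero_le _, h2, h3⟩
  | succ N ih =>
    intro t ht
    obtain ⟨s, hs, hts, hN, h0, h1⟩ := ih t ht
    obtain ⟨s', hs', hss', h0', h1'⟩ := hT.2.2 (s ++ [false]) h0
    refine ⟨s', hs', hts.trans ((List.prefix_append _ _).trans hss'), ?_, h0', h1'⟩
    have := hss'.length_le
    simp at this
    omega

lemma step_lemma {A : Set (ℕ → Bool)} (hA : S0Set A) {T : Set (List Bool)} (hT : IsPerfectTree T)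
    {s : List Bool} (h0 : s ++ [false] ∈ T) (h1 : s ++ [true] ∈ T) (b : Bool) (N : ℕ) :
    ∃ T' s', IsPerfectTree T' ∧ T' ⊆ T ∧ branches T' ∩ A = ∅ ∧
      s ++ [b] <+: s' ∧ N ≤ s'.length ∧ s' ∈ T' ∧ s' ++ [false] ∈ T' ∧ s' ++ [true] ∈ T' := by
  set u := s ++ [b] with hu_def
  have hu : u ∈ T := by cases b <;> assumption
  set R : Set (List Bool) := {t | t ∈ T ∧ (t <+: u ∨ u <+: t)} with hR_def
  have hRsub : R ⊆ T := fun t ht => ht.1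
  have hR : IsPerfectTree R := by
    refine ⟨⟨u, hu, Or.inr List.prefix_rfl⟩, ?_, ?_⟩
    · rintro t ⟨htT, hc⟩ n
      refine ⟨hT.2.1 t htT n, ?_⟩
      rcases hc with hc | hc
      · exact Or.inl ((List.take_prefix n t).trans hc)
      · obtain ⟨w, rfl⟩ := hc
        rcases le_or_gt u.length n with hn | hn
        · right
          rw [List.take_append, List.take_of_length_le hn]
          exact List.prefix_append _ _
        · left
          rw [List.take_append, Nat.sub_eq_zero_of_le hn.le, List.take_zero,
            List.append_nil]
          exact List.take_prefix n u
    · rintro t ⟨htT, hc⟩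
      rcases hc with hc | hc
      · obtain ⟨s', hs', h1', h2', h3'⟩ := hT.2.2 u hu
        exact ⟨s', ⟨hs', Or.inr h1'⟩, hc.trans h1',
          ⟨h2', Or.inr (h1'.trans (List.prefix_append _ _))⟩,
          ⟨h3', Or.inr (h1'.trans (List.prefix_append _ _))⟩⟩
      · obtain ⟨s', hs', h1', h2', h3'⟩ := hT.2.2 t htT
        exact ⟨s', ⟨hs', Or.inr (hc.trans h1')⟩, h1',
          ⟨h2', Or.inr ((hc.trans h1').trans (List.prefix_append _ _))⟩,
          ⟨h3', Or.inr ((hc.trans h1').trans (List.prefix_append _ _))⟩⟩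
  obtain ⟨T', hT', hT'sub, hdisj⟩ := hA R hR
  obtain ⟨t₀, ht₀⟩ := hT'.1
  obtain ⟨s', hs', _, hlen, hsf, hst⟩ := perfect_long hT' (max N (u.length)) t₀ ht₀
  have hus' : u <+: s' := by
    rcases (hT'sub hs').2 with hc | hc
    · have := hc.eq_of_length (le_antisymm hc.length_le (le_trans (le_max_right _ _) hlen))
      rw [this]
    · exact hc
  exact ⟨T', s', hT', hT'sub.trans hRsub, hdisj, hus', le_trans (le_max_left _ _) hlen, hs', hsf, hst⟩

/-- The (s⁰)-sets form a σ-ideal on `2^ω`. -/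
theorem s0_sigma_ideal :
    S0Set (∅ : Set (ℕ → Bool)) ∧
    (∀ A B : Set (ℕ → Bool), A ⊆ B → S0Set B → S0Set A) ∧
    (∀ S : ℕ → Set (ℕ → Bool), (∀ n, S0Set (S n)) → S0Set (⋃ n, S n)) := by
  refine ⟨?_, ?_, ?_⟩
  · intro T hT
    exact ⟨T, hT, subset_rfl, Set.inter_empty _⟩
  · intro A B hAB hB T hT
    obtain ⟨Q, hQ, hQT, hd⟩ := hB T hT
    refine ⟨Q, hQ, hQT, ?_⟩
    apply Set.eq_empty_of_subset_empty
    rw [← hd]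
    exact Set.inter_subset_inter_right _ hAB
  · intro S hS T₀ hT₀
    classical
    let Inv : ℕ → Set (List Bool) × List Bool → Prop := fun n p =>
      IsPerfectTree p.1 ∧ p.1 ⊆ T₀ ∧ branches p.1 ∩ S n = ∅ ∧ p.2 ∈ p.1 ∧
        p.2 ++ [false] ∈ p.1 ∧ p.2 ++ [true] ∈ p.1 ∧ n ≤ p.2.length
    have base : ∃ p, Inv 0 p := by
      obtain ⟨Q, hQ, hQT, hd⟩ := hS 0 T₀ hT₀
      obtain ⟨t₀, ht₀⟩ := hQ.1
      obtain ⟨s, hs, _, _, hsf, hst⟩ := perfect_long hQ 0 t₀ ht₀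
      exact ⟨(Q, s), hQ, hQT, hd, hs, hsf, hst, Nat.zero_le _⟩
    obtain ⟨p₀, hp₀⟩ := base
    have key : ∀ (n : ℕ) (b : Bool) (p : Set (List Bool) × List Bool), ∃ q, Inv n p →
        Inv (n + 1) q ∧ q.1 ⊆ p.1 ∧ p.2 ++ [b] <+: q.2 := by
      intro n b p
      by_cases h : Inv n p
      · obtain ⟨T', s', hT', hsub, hd, hpre, hlen, hs', hsf, hst⟩ :=
          step_lemma (hS (n + 1)) h.1 h.2.2.2.2.1 h.2.2.2.2.2.1 b (n + 1)
        exact ⟨(T', s'), fun _ => ⟨⟨hT', hsub.trans h.2.1, hd, hs', hsf, hst, hlen⟩, hsub, hpre⟩⟩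
      · exact ⟨p, fun h' => absurd h' h⟩
    choose g hg using key
    let F : List Bool → Set (List Bool) × List Bool :=
      fun σ => List.rec p₀ (fun b σ' ih => g σ'.length b ih) σ
    have hFc : ∀ (b : Bool) σ, F (b :: σ) = g σ.length b (F σ) := fun _ _ => rfl
    have hF : ∀ σ, Inv σ.length (F σ) := by
      intro σ
      induction σ with
      | nil => exact hp₀
      | cons b σ ih =>
        rw [List.length_cons, hFc]
        exact (hg σ.length b (F σ) ih).1
    have hstep : ∀ σ (b : Bool),
        (F (b :: σ)).1 ⊆ (F σ).1 ∧ (F σ).2 ++ [b] <+: (F (b :: σ)).2 := by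
      intro σ b
      rw [hFc]
      exact ⟨(hg σ.length b (F σ) (hF σ)).2.1, (hg σ.length b (F σ) (hF σ)).2.2⟩
    have hsuf : ∀ τ σ, σ <:+ τ → (F τ).1 ⊆ (F σ).1 ∧ (F σ).2 <+: (F τ).2 := by
      intro τ
      induction τ with
      | nil =>
        intro σ h
        rw [List.suffix_nil] at h
        subst h
        exact ⟨subset_rfl, List.prefix_rfl⟩
      | cons b τ ih =>
        intro σ h
        rcases List.suffix_cons_iff.1 h with rfl | h
        · exact ⟨subset_rfl, List.prefix_rfl⟩
        · obtain ⟨h1, h2⟩ := ih σ h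
          exact ⟨(hstep τ b).1.trans h1,
            h2.trans ((List.prefix_append _ _).trans (hstep τ b).2)⟩
    have comp : ∀ τ σ, ((F σ).2 <+: (F τ).2 ∨ (F τ).2 <+: (F σ).2) → σ <:+ τ ∨ τ <:+ σ := by
      intro τ
      induction τ with
      | nil => intro σ _; exact Or.inr List.nil_suffix
      | cons b τ' ih =>
        intro σ h
        cases σ with
        | nil => exact Or.inl List.nil_suffix
        | cons a σ' =>
          obtain ⟨w, hw1, hw2⟩ : ∃ w, (F (a :: σ')).2 <+: w ∧ (F (b :: τ')).2 <+: w := by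
            rcases h with h | h
            · exact ⟨(F (b :: τ')).2, h, List.prefix_rfl⟩
            · exact ⟨(F (a :: σ')).2, List.prefix_rfl, h⟩
          have ha : (F σ').2 ++ [a] <+: w := (hstep σ' a).2.trans hw1
          have hb : (F τ').2 ++ [b] <+: w := (hstep τ' b).2.trans hw2
          have ha' : (F σ').2 <+: w := (List.prefix_append _ _).trans ha
          have hb' : (F τ').2 <+: w := (List.prefix_append _ _).trans hb
          have hcmp : (F σ').2 <+: (F τ').2 ∨ (F τ').2 <+: (F σ').2 := by
            rcases le_total (F σ').2.length (F τ').2.length with hl | hl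
            · exact Or.inl (List.prefix_of_prefix_length_le ha' hb' hl)
            · exact Or.inr (List.prefix_of_prefix_length_le hb' ha' hl)
          rcases ih σ' hcmp with hsf | hsf
          · by_cases he : σ' = τ'
            · subst he
              have hab : a = b := last_eq ha hb
              subst hab
              exact Or.inl List.suffix_rfl
            · obtain ⟨c, hc⟩ := suffix_strict hsf he
              have hcw : (F σ').2 ++ [c] <+: w :=
                ((hstep σ' c).2.trans (hsuf τ' (c :: σ') hc).2).trans hb'
              have hac : a = c := last_eq ha hcw
              subst hac
              exact Or.inl (hc.trans (List.suffix_cons b τ'))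
          · by_cases he : τ' = σ'
            · subst he
              have hba : b = a := last_eq hb ha
              subst hba
              exact Or.inr List.suffix_rfl
            · obtain ⟨c, hc⟩ := suffix_strict hsf he
              have hcw : (F τ').2 ++ [c] <+: w :=
                ((hstep τ' c).2.trans (hsuf σ' (c :: τ') hc).2).trans ha'
              have hbc : b = c := last_eq hb hcw
              subst hbc
              exact Or.inr (hc.trans (List.suffix_cons a σ'))
    let Q : Set (List Bool) := {t | ∃ σ, t <+: (F σ).2}
    have hQmem : ∀ σ, (F σ).2 ∈ Q := fun σ => ⟨σ, List.prefix_rfl⟩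
    have hQperf : IsPerfectTree Q := by
      refine ⟨⟨(F []).2, hQmem []⟩, ?_, ?_⟩
      · rintro t ⟨σ, hσ⟩ n
        exact ⟨σ, (List.take_prefix n t).trans hσ⟩
      · rintro t ⟨σ, hσ⟩
        exact ⟨(F σ).2, hQmem σ, hσ, ⟨false :: σ, (hstep σ false).2⟩,
          ⟨true :: σ, (hstep σ true).2⟩⟩
    have hQT : Q ⊆ T₀ := by
      rintro t ⟨σ, hσ⟩
      have h1 : (F σ).2 ∈ T₀ := (hF σ).2.1 (hF σ).2.2.2.1
      rw [List.prefix_iff_eq_take] at hσ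
      rw [hσ]
      exact hT₀.2.1 _ h1 _
    refine ⟨Q, hQperf, hQT, ?_⟩
    rw [Set.eq_empty_iff_forall_notMem]
    rintro x ⟨hxQ, hxU⟩
    obtain ⟨n, hxn⟩ := Set.mem_iUnion.1 hxU
    let X : ℕ → List Bool := fun k => List.ofFn fun i : Fin k => x i
    have hXlen : ∀ k, (X k).length = k := by intro k; simp [X]
    have hXQ : ∀ k, X k ∈ Q := hxQ
    have hXpre : ∀ {k m : ℕ}, k ≤ m → X k <+: X m := by
      intro k m h
      rw [show X k = (X m).take k from (take_ofFn_x x h).symm]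
      exact List.take_prefix _ _
    have pre_of_prefix : ∀ {s : List Bool} {m : ℕ}, s <+: X m → s = X s.length := by
      intro s m h
      have hl : s.length ≤ m := by
        have := h.length_le
        rwa [hXlen] at this
      rw [List.prefix_iff_eq_take] at h
      conv_lhs => rw [h]
      exact take_ofFn_x x hl
    have pre_take : ∀ {s : List Bool} {k : ℕ}, s = X s.length → k ≤ s.length →
        s.take k = X k := by
      intro s k hs hk
      conv_lhs => rw [hs]
      exact take_ofFn_x x hk
    have pre_root : (F []).2 = X (F []).2.length := by
      obtain ⟨τ, hτ⟩ := hXQ ((F []).2.length)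
      have h1 : (F []).2 <+: (F τ).2 := (hsuf τ [] List.nil_suffix).2
      have h3 := List.prefix_of_prefix_length_le h1 hτ (by rw [hXlen])
      exact pre_of_prefix h3
    have hext : ∀ σ, ∃ b : Bool, (F σ).2 = X (F σ).2.length →
        (F (b :: σ)).2 = X (F (b :: σ)).2.length := by
      intro σ
      by_cases hp : (F σ).2 = X (F σ).2.length
      case neg => exact ⟨false, fun h => absurd h hp⟩
      set m := max (F (false :: σ)).2.length (F (true :: σ)).2.length with hm
      obtain ⟨τ, hτ⟩ := hXQ m
      have hlb : ∀ b : Bool, (F σ).2.length + 1 ≤ (F (b :: σ)).2.length := by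
        intro b
        have := (hstep σ b).2.length_le
        simpa using this
      have hm1 : (F σ).2.length + 1 ≤ m := le_trans (hlb false) (le_max_left _ _)
      have hσX : (F σ).2 <+: X m := by
        conv_lhs => rw [hp]
        exact hXpre (by omega)
      have hστ : (F σ).2 <+: (F τ).2 := hσX.trans hτ
      have hτlen : m ≤ (F τ).2.length := by
        have := hτ.length_le
        rwa [hXlen] at this
      have hsufστ : σ <:+ τ := by
        rcases comp τ σ (Or.inl hστ) with h | h
        · exact h
        · exfalso
          have := (hsuf σ τ h).2.length_le
          omega
      have hne : σ ≠ τ := by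
        rintro rfl
        omega
      obtain ⟨c, hc⟩ := suffix_strict hsufστ hne
      refine ⟨c, fun _ => ?_⟩
      have h1 : (F (c :: σ)).2 <+: (F τ).2 := (hsuf τ (c :: σ) hc).2
      have h2 : (F (c :: σ)).2.length ≤ m := by
        cases c
        · exact le_max_left _ _
        · exact le_max_right _ _
      have h3 : (F (c :: σ)).2 <+: X m :=
        List.prefix_of_prefix_length_le h1 hτ (by rw [hXlen]; exact h2)
      exact pre_of_prefix h3
    choose bf hbf using hext
    let f : ℕ → List Bool := fun n => Nat.rec [] (fun _ σ => bf σ :: σ) n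
    have hfs : ∀ k, f (k + 1) = bf (f k) :: f k := fun _ => rfl
    have hflen : ∀ k, (f k).length = k := by
      intro k
      induction k with
      | zero => rfl
      | succ k ih => rw [hfs, List.length_cons, ih]
    have hfpre : ∀ k, (F (f k)).2 = X (F (f k)).2.length := by
      intro k
      induction k with
      | zero => exact pre_root
      | succ k ih => rw [hfs]; exact hbf (f k) ih
    have hfsuf : ∀ k j, k ≤ j → f k <:+ f j := by
      intro k j h
      induction j, h using Nat.le_induction with
      | base => exact List.suffix_rfl
      | succ j hj ih => rw [hfs]; exact ih.trans (List.suffix_cons _ _)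
    have hxbr : x ∈ branches (F (f n)).1 := by
      intro k
      have h1 : f n <:+ f (max n k) := hfsuf n (max n k) (le_max_left _ _)
      have h2 : (F (f (max n k))).2 ∈ (F (f n)).1 :=
        (hsuf (f (max n k)) (f n) h1).1 (hF (f (max n k))).2.2.2.1
      have hlen : k ≤ (F (f (max n k))).2.length := by
        have := (hF (f (max n k))).2.2.2.2.2.2
        rw [hflen] at this
        exact le_trans (le_max_right n k) this
      have h3 : (F (f (max n k))).2.take k = X k := pre_take (hfpre (max n k)) hlen
      have h4 := (hF (f n)).1.2.1 _ h2 k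
      rw [h3] at h4
      exact h4
    have hdisj := (hF (f n)).2.2.1
    rw [hflen] at hdisj
    exact Set.eq_empty_iff_forall_notMem.1 hdisj x ⟨hxbr, hxn⟩
end

section
/- The family of Ramsey null sets forms a σ-ideal on [ω]^ω: it contains the empty set and is closed under subsets and countable unions. -/
open Set

lemma EllSet_mono {b : Finset ℕ} {B B' : Set ℕ} (h : B' ⊆ B) : EllSet b B' ⊆ EllSet b B :=
  fun _ hC => ⟨hC.1, hC.2.1, hC.2.2.trans (Set.union_subset_union_right _ h)⟩

lemma iter_kill (M : ℕ → Set (Set ℕ)) (hM : ∀ n, RamseyNull (M n))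
    (L : List (Finset ℕ × ℕ)) :
    ∀ A : Set ℕ, A.Infinite →
      ∃ B ⊆ A, B.Infinite ∧ ∀ p ∈ L, EllSet p.1 B ∩ M p.2 = ∅ := by
  induction L with
  | nil => exact fun A hA => ⟨A, Subset.rfl, hA, by simp⟩
  | cons p L ih =>
    intro A hA
    obtain ⟨B, hBA, hBinf, hB⟩ := ih A hA
    obtain ⟨B', hB'B, hB'inf, hkill⟩ := hM p.2 p.1 B hBinf
    refine ⟨B', hB'B.trans hBA, hB'inf, ?_⟩
    intro q hq
    rcases List.mem_cons.mp hq with h | h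
    · subst h; exact hkill
    · refine Set.subset_empty_iff.mp ?_
      calc EllSet q.1 B' ∩ M q.2 ⊆ EllSet q.1 B ∩ M q.2 :=
            Set.inter_subset_inter_left _ (EllSet_mono hB'B)
        _ = ∅ := hB q h

open Classical in
noncomputable def stepFn (M : ℕ → Set (Set ℕ)) (hM : ∀ n, RamseyNull (M n)) (a : Finset ℕ)
    (i : ℕ) (s : ℕ × Finset ℕ × Set ℕ) : ℕ × Finset ℕ × Set ℕ :=
  if h : (s.2.2 \ Set.Iic s.1).Infinite then
    ⟨((iter_kill M hM (((a ∪ (s.2.1 ∪ {s.1})).powerset ×ˢ Finset.range (i+1)).toList)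
        (s.2.2 \ Set.Iic s.1) h).choose_spec.2.1).nonempty.choose,
     s.2.1 ∪ {s.1},
     (iter_kill M hM (((a ∪ (s.2.1 ∪ {s.1})).powerset ×ˢ Finset.range (i+1)).toList)
        (s.2.2 \ Set.Iic s.1) h).choose⟩
  else s

lemma stepFn_spec (M : ℕ → Set (Set ℕ)) (hM : ∀ n, RamseyNull (M n)) (a : Finset ℕ)
    (i : ℕ) (s : ℕ × Finset ℕ × Set ℕ) (h : (s.2.2 \ Set.Iic s.1).Infinite) :
    (stepFn M hM a i s).2.1 = s.2.1 ∪ {s.1} ∧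
    (stepFn M hM a i s).2.2 ⊆ s.2.2 \ Set.Iic s.1 ∧
    (stepFn M hM a i s).2.2.Infinite ∧
    (stepFn M hM a i s).1 ∈ (stepFn M hM a i s).2.2 ∧
    ∀ p ∈ ((a ∪ (s.2.1 ∪ {s.1})).powerset ×ˢ Finset.range (i+1)).toList,
      EllSet p.1 (stepFn M hM a i s).2.2 ∩ M p.2 = ∅ := by
  have hex := iter_kill M hM (((a ∪ (s.2.1 ∪ {s.1})).powerset ×ˢ Finset.range (i+1)).toList)
      (s.2.2 \ Set.Iic s.1) h
  simp only [stepFn]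
  rw [dif_pos h]
  exact ⟨rfl, hex.choose_spec.1, hex.choose_spec.2.1, hex.choose_spec.2.1.nonempty.choose_spec,
    hex.choose_spec.2.2⟩

noncomputable def Sfn (M : ℕ → Set (Set ℕ)) (hM : ∀ n, RamseyNull (M n)) (a : Finset ℕ)
    (A : Set ℕ) (hA : A.Infinite) : ℕ → ℕ × Finset ℕ × Set ℕ
  | 0 => ⟨hA.nonempty.choose, ∅, A⟩
  | (i+1) => stepFn M hM a i (Sfn M hM a A hA i)

lemma countable_union (M : ℕ → Set (Set ℕ)) (hM : ∀ n, RamseyNull (M n)) :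
    RamseyNull (⋃ n, M n) := by
  classical
  intro a A hA
  set S : ℕ → ℕ × Finset ℕ × Set ℕ := Sfn M hM a A hA with hSdef
  set xs : ℕ → ℕ := fun i => (S i).1 with hxs
  set Fs : ℕ → Finset ℕ := fun i => (S i).2.1 with hFs
  set As : ℕ → Set ℕ := fun i => (S i).2.2 with hAs
  have inv : ∀ i, (As i).Infinite ∧ As i ⊆ A ∧ xs i ∈ As i := by
    intro i; induction i with
    | zero => exact ⟨hA, Subset.rfl, hA.nonempty.choose_spec⟩
    | succ i ih =>
      have h : ((S i).2.2 \ Set.Iic (S i).1).Infinite := ih.1.diff (Set.finite_Iic _)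
      obtain ⟨h1, h2, h3, h4, h5⟩ := stepFn_spec M hM a i (S i) h
      exact ⟨h3, (h2.trans Set.diff_subset).trans ih.2.1, h4⟩
  have hspec : ∀ i, (As (i+1) ⊆ As i \ Set.Iic (xs i)) ∧ (Fs (i+1) = Fs i ∪ {xs i}) ∧
      ∀ p ∈ ((a ∪ (Fs i ∪ {xs i})).powerset ×ˢ Finset.range (i+1)).toList,
        EllSet p.1 (As (i+1)) ∩ M p.2 = ∅ := by
    intro i
    have h : ((S i).2.2 \ Set.Iic (S i).1).Infinite := (inv i).1.diff (Set.finite_Iic _)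
    obtain ⟨h1, h2, h3, h4, h5⟩ := stepFn_spec M hM a i (S i) h
    exact ⟨h2, h1, h5⟩
  have hmono : StrictMono xs := by
    apply strictMono_nat_of_lt_succ
    intro i
    have := (hspec i).1 (inv (i+1)).2.2
    simpa using this.2
  have hanti : Antitone As := by
    apply antitone_nat_of_succ_le
    intro i
    exact ((hspec i).1).trans Set.diff_subset
  have hFeq : ∀ i, Fs i = Finset.image xs (Finset.range i) := by
    intro i; induction i with
    | zero => rfl
    | succ i ih =>
      rw [(hspec i).2.1, ih, Finset.range_add_one, Finset.image_insert]
      rw [Finset.insert_eq, Finset.union_comm]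
  refine ⟨Set.range xs, ?_, ?_, ?_⟩
  · rintro _ ⟨i, rfl⟩; exact (inv i).2.1 (inv i).2.2
  · exact Set.infinite_range_of_injective hmono.injective
  · rw [Set.eq_empty_iff_forall_notMem]
    rintro C ⟨⟨hCinf, haC, hCsub⟩, hCU⟩
    obtain ⟨n, hCn⟩ := Set.mem_iUnion.mp hCU
    have hpre : (xs ⁻¹' C).Infinite := by
      have h1 : (C \ ↑a).Infinite := hCinf.diff a.finite_toSet
      have h2 : C \ ↑a ⊆ Set.range xs := fun c hc => (hCsub hc.1).resolve_left hc.2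
      exact ((h1.preimage h2).mono (fun j hj => hj.1 : xs ⁻¹' (C \ ↑a) ⊆ xs ⁻¹' C))
    obtain ⟨j, hjC, hnj⟩ := hpre.exists_gt n
    set b : Finset ℕ := (a ∪ Fs (j+1)).filter (fun m => m ∈ C) with hb
    have hkill := (hspec j).2.2 (b, n)
    rw [Finset.mem_toList, Finset.mem_product] at hkill
    have hbsub : b ⊆ a ∪ (Fs j ∪ {xs j}) := by
      rw [← (hspec j).2.1]; exact Finset.filter_subset _ _
    have hempty : EllSet b (As (j+1)) ∩ M n = ∅ :=
      hkill ⟨Finset.mem_powerset.mpr hbsub, Finset.mem_range.mpr (Nat.lt_succ_of_lt hnj)⟩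
    have hCmem : C ∈ EllSet b (As (j+1)) ∩ M n := by
      refine ⟨⟨hCinf, ?_, ?_⟩, hCn⟩
      · intro m hm
        exact (Finset.mem_filter.mp (Finset.mem_coe.mp hm)).2
      · intro c hc
        rcases hCsub hc with hca | hcB
        · exact Or.inl (Finset.mem_coe.mpr (Finset.mem_filter.mpr
            ⟨Finset.mem_union_left _ (Finset.mem_coe.mp hca), hc⟩))
        · obtain ⟨k, rfl⟩ := hcB
          rcases le_or_gt k j with hk | hk
          · refine Or.inl (Finset.mem_coe.mpr (Finset.mem_filter.mpr
              ⟨Finset.mem_union_right _ ?_, hc⟩))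
            rw [hFeq (j+1)]
            exact Finset.mem_image.mpr ⟨k, Finset.mem_range.mpr (Nat.lt_succ_of_le hk), rfl⟩
          · exact Or.inr (hanti hk (inv k).2.2)
    rw [hempty] at hCmem
    exact hCmem

/-- The Ramsey null sets form a σ-ideal on `[ω]^ω`. -/
theorem ramseyNull_sigma_ideal :
    RamseyNull (∅ : Set (Set ℕ)) ∧
    (∀ M N : Set (Set ℕ), M ⊆ N → RamseyNull N → RamseyNull M) ∧
    (∀ M : ℕ → Set (Set ℕ), (∀ n, RamseyNull (M n)) → RamseyNull (⋃ n, M n)) := by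
  refine ⟨?_, ?_, countable_union⟩
  · intro a A hA
    exact ⟨A, Subset.rfl, hA, by simp⟩
  · intro M N hMN hN a A hA
    obtain ⟨B, hBA, hBinf, hB⟩ := hN a A hA
    refine ⟨B, hBA, hBinf, Set.subset_empty_iff.mp ?_⟩
    calc EllSet a B ∩ M ⊆ EllSet a B ∩ N := Set.inter_subset_inter_right _ hMN
      _ = ∅ := hB
end

section
/- For any metric space X, a function f : 2^ω → X is (s)-measurable if and only if for every perfect tree T there exists a perfect subtree Q ⊆ T such that the restriction of f to [Q] is continuous. -/
open Set

namespace SackAux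

abbrev LB := List Bool
abbrev Br := ℕ → Bool

/-! ### Initial segments of branches -/

def pre (x : Br) (n : ℕ) : LB := List.ofFn fun i : Fin n => x i

@[simp] lemma pre_length (x : Br) (n : ℕ) : (pre x n).length = n := by simp [pre]

lemma pre_getD (x : Br) {n i : ℕ} (h : i < n) : (pre x n).getD i false = x i := by
  rw [List.getD_eq_getElem _ _ (by simp [h])]
  simp [pre]

lemma pre_prefix (x : Br) {m n : ℕ} (h : m ≤ n) : pre x m <+: pre x n := by
  refine List.prefix_iff_eq_take.2 ?_
  apply List.ext_getElem (by simp [h])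
  intro i h1 h2
  simp_all [pre]

lemma pre_take (x : Br) {m n : ℕ} (h : m ≤ n) : (pre x n).take m = pre x m := by
  have := (List.prefix_iff_eq_take.1 (pre_prefix x h)).symm
  simpa using this

lemma mem_branches_iff {T : Set LB} {x : Br} : x ∈ branches T ↔ ∀ n, pre x n ∈ T := Iff.rfl

lemma eq_pre_of_prefix {x : Br} {l : LB} {n : ℕ} (h : l <+: pre x n) : l = pre x l.length := by
  have hl : l.length ≤ n := by simpa using h.length_le
  have h2 := List.prefix_iff_eq_take.1 h
  exact h2.trans (pre_take x hl)

lemma pre_eq_iff {x y : Br} {n : ℕ} : pre x n = pre y n ↔ ∀ i < n, x i = y i := by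
  constructor
  · intro h i hi
    have h2 := congrArg (fun l => l.getD i false) h
    rw [← pre_getD x hi, ← pre_getD y hi]
    exact h2
  · intro h
    apply List.ext_getElem (by simp)
    intro i h1 h2
    simp only [pre, List.getElem_ofFn]
    exact h i (by simpa using h1)

lemma prefix_getD {l₁ l₂ : LB} (h : l₁ <+: l₂) {i : ℕ} (hi : i < l₁.length) :
    l₁.getD i false = l₂.getD i false := by
  have hl : i < l₂.length := lt_of_lt_of_le hi h.length_le
  rw [List.prefix_iff_eq_take.1 h]
  rw [List.getD_eq_getElem _ _ (by simpa using ⟨hi, hl⟩), List.getD_eq_getElem _ _ hl]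
  simp [List.getElem_take]

@[simp] lemma append_getD_length (l₁ : LB) (a : Bool) : (l₁ ++ [a]).getD l₁.length false = a := by
  rw [List.getD_eq_getElem _ _ (by simp)]
  simp

lemma pre_eq_of_getD {n : ℕ} {l : LB} {x : Br} (hl : l.length = n)
    (h : ∀ i < n, l.getD i false = x i) : pre x n = l := by
  apply List.ext_getElem (by simp [hl])
  intro i h1 h2
  have hi : i < n := by simpa using h1
  have h3 := h i hi
  rw [List.getD_eq_getElem l false h2] at h3
  simp only [pre, List.getElem_ofFn]
  exact h3.symm

lemma take_getD {l : LB} {m i : ℕ} (hi : i < m) (h2 : i < l.length) :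
    (l.take m).getD i false = l.getD i false := by
  rw [List.getD_eq_getElem _ false (by simp [hi, h2]), List.getD_eq_getElem _ false h2,
    List.getElem_take]

/-- `l` is an initial segment of the branch `x`. -/
def agr (l : LB) (x : Br) : Prop := pre x l.length = l

lemma agr_of_prefix {l l' : LB} {x : Br} (h : agr l x) (h' : l' <+: l) : agr l' x := by
  unfold agr at *
  rw [← h] at h'
  exact (eq_pre_of_prefix h').symm

lemma agr_comp {l l' : LB} {x : Br} (h : agr l x) (h' : agr l' x) (hl : l.length ≤ l'.length) :
    l <+: l' := by
  rw [← h, ← h']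
  simpa using pre_prefix x hl

lemma agr_getD {l : LB} {x : Br} (h : agr l x) {i : ℕ} (hi : i < l.length) :
    l.getD i false = x i := by
  rw [← h, pre_getD x (by simpa using hi)]

lemma agr_pre (x : Br) (n : ℕ) : agr (pre x n) x := by simp [agr]

/-! ### Perfect-tree basics -/

lemma nil_mem {T : Set LB} (hT : IsPerfectTree T) : [] ∈ T := by
  obtain ⟨t, ht⟩ := hT.1
  have := hT.2.1 t ht 0
  simpa using this

lemma prefix_mem {T : Set LB} (hT : IsPerfectTree T) {u v : LB} (huv : u <+: v) (hv : v ∈ T) :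
    u ∈ T := by
  rw [List.prefix_iff_eq_take.1 huv]
  exact hT.2.1 v hv u.length

lemma exists_long {T : Set LB} (hT : IsPerfectTree T) (n : ℕ) : ∃ u ∈ T, n ≤ u.length := by
  induction n with
  | zero => exact ⟨[], nil_mem hT, by simp⟩
  | succ n ih =>
    obtain ⟨u, hu, hlen⟩ := ih
    obtain ⟨s, hs, hus, hs0, _⟩ := hT.2.2 u hu
    refine ⟨s ++ [false], hs0, ?_⟩
    have := hus.length_le
    simp only [List.length_append, List.length_cons, List.length_nil]
    omega

lemma branches_mono {T T' : Set LB} (h : T ⊆ T') : branches T ⊆ branches T' :=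
  fun _ hx n => h (hx n)

/-! ### Localization -/

def loc (T : Set LB) (v : LB) : Set LB := {u ∈ T | u <+: v ∨ v <+: u}

lemma loc_subset (T : Set LB) (v : LB) : loc T v ⊆ T := fun _ h => h.1

lemma take_prefix_of_prefix {u v : LB} (h : v <+: u) (n : ℕ) :
    u.take n <+: v ∨ v <+: u.take n := by
  rcases le_or_gt n v.length with hn | hn
  · left
    rw [List.prefix_iff_eq_take.1 h]
    exact List.take_isPrefix_take.2 (Or.inl hn)
  · right
    rw [List.prefix_iff_eq_take.1 h]
    exact List.take_isPrefix_take.2 (Or.inl hn.le)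

lemma loc_perfect {T : Set LB} (hT : IsPerfectTree T) {v : LB} (hv : v ∈ T) :
    IsPerfectTree (loc T v) := by
  refine ⟨⟨[], nil_mem hT, Or.inl (List.nil_prefix)⟩, ?_, ?_⟩
  · rintro t ⟨htT, hcomp⟩ n
    refine ⟨hT.2.1 t htT n, ?_⟩
    rcases hcomp with h | h
    · exact Or.inl ((List.take_prefix n t).trans h)
    · exact take_prefix_of_prefix h n
  · rintro t ⟨htT, hcomp⟩
    rcases hcomp with h | h
    · obtain ⟨s, hs, hvs, hs0, hs1⟩ := hT.2.2 v hv
      exact ⟨s, ⟨hs, Or.inr hvs⟩, h.trans hvs, ⟨hs0, Or.inr (hvs.trans (List.prefix_append _ _))⟩,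
        ⟨hs1, Or.inr (hvs.trans (List.prefix_append _ _))⟩⟩
    · obtain ⟨s, hs, hts, hs0, hs1⟩ := hT.2.2 t htT
      have hvs : v <+: s := h.trans hts
      exact ⟨s, ⟨hs, Or.inr hvs⟩, hts, ⟨hs0, Or.inr (hvs.trans (List.prefix_append _ _))⟩,
        ⟨hs1, Or.inr (hvs.trans (List.prefix_append _ _))⟩⟩

lemma branches_loc_agr {T : Set LB} {v : LB} {x : Br} (hx : x ∈ branches (loc T v)) :
    agr v x := by
  have h1 : pre x v.length ∈ loc T v := hx v.length
  rcases h1.2 with h | h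
  · exact h.eq_of_length (by simp)
  · exact (h.eq_of_length (by simp)).symm

lemma mem_branches_loc {T : Set LB} {v : LB} {x : Br} (hx : x ∈ branches T) (h : agr v x) :
    x ∈ branches (loc T v) := by
  intro n
  refine ⟨hx n, ?_⟩
  rcases le_or_gt n v.length with hn | hn
  · exact Or.inl (by rw [← h]; simpa [pre] using pre_prefix x hn)
  · exact Or.inr (by rw [← h]; exact pre_prefix x hn.le)

end SackAux
namespace SackAux

/-! ### The fusion engine -/

open Classical in
noncomputable def splNode (R : Set LB) : LB :=
  if h : IsPerfectTree R then (h.2.2 [] (nil_mem h)).choose else []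

lemma splNode_spec {R : Set LB} (h : IsPerfectTree R) :
    splNode R ∈ R ∧ splNode R ++ [false] ∈ R ∧ splNode R ++ [true] ∈ R := by
  rw [splNode, dif_pos h]
  obtain ⟨hs, _, h0, h1⟩ := (h.2.2 [] (nil_mem h)).choose_spec
  exact ⟨hs, h0, h1⟩

variable (P : Set LB) (Ψ : ℕ → Set LB → Set LB → Prop)

def RefHyp : Prop :=
  ∀ n C₀ C₁, IsPerfectTree C₀ → IsPerfectTree C₁ → C₀ ⊆ P → C₁ ⊆ P →
    ∃ D₀ D₁, IsPerfectTree D₀ ∧ IsPerfectTree D₁ ∧ D₀ ⊆ C₀ ∧ D₁ ⊆ C₁ ∧ Ψ n D₀ D₁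

variable (hREF : RefHyp P Ψ)

open Classical in
noncomputable def stp (n : ℕ) (C₀ C₁ : Set LB) : Set LB × Set LB :=
  if h : IsPerfectTree C₀ ∧ IsPerfectTree C₁ ∧ C₀ ⊆ P ∧ C₁ ⊆ P then
    ⟨(hREF n C₀ C₁ h.1 h.2.1 h.2.2.1 h.2.2.2).choose,
     (hREF n C₀ C₁ h.1 h.2.1 h.2.2.1 h.2.2.2).choose_spec.choose⟩
  else (C₀, C₁)

lemma stp_spec {n : ℕ} {C₀ C₁ : Set LB} (h0 : IsPerfectTree C₀) (h1 : IsPerfectTree C₁)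
    (hs0 : C₀ ⊆ P) (hs1 : C₁ ⊆ P) :
    IsPerfectTree (stp P Ψ hREF n C₀ C₁).1 ∧ IsPerfectTree (stp P Ψ hREF n C₀ C₁).2 ∧
      (stp P Ψ hREF n C₀ C₁).1 ⊆ C₀ ∧ (stp P Ψ hREF n C₀ C₁).2 ⊆ C₁ ∧
      Ψ n (stp P Ψ hREF n C₀ C₁).1 (stp P Ψ hREF n C₀ C₁).2 := by
  have h : IsPerfectTree C₀ ∧ IsPerfectTree C₁ ∧ C₀ ⊆ P ∧ C₁ ⊆ P := ⟨h0, h1, hs0, hs1⟩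
  rw [stp, dif_pos h]
  obtain ⟨hD0, hD1, hsub0, hsub1, hΨ⟩ :=
    (hREF n C₀ C₁ h.1 h.2.1 h.2.2.1 h.2.2.2).choose_spec.choose_spec
  exact ⟨hD0, hD1, hsub0, hsub1, hΨ⟩

/-- The recursive tree family of the fusion. -/
noncomputable def RT : LB → Set LB
  | [] => P
  | (i :: s) =>
    let R := RT s
    let c := stp P Ψ hREF (s.length + 1)
      (loc R (splNode R ++ [false])) (loc R (splNode R ++ [true]))
    if i then c.2 else c.1

/-- The marker nodes. -/
noncomputable def nd (s : LB) : LB := splNode (RT P Ψ hREF s)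

lemma RT_basic (hP : IsPerfectTree P) : ∀ s : LB, IsPerfectTree (RT P Ψ hREF s) ∧ RT P Ψ hREF s ⊆ P := by
  intro s
  induction s with
  | nil => exact ⟨hP, le_refl _⟩
  | cons i s ih =>
    obtain ⟨hperf, hsub⟩ := ih
    have hsp := splNode_spec hperf
    have hloc0 := loc_perfect hperf hsp.2.1
    have hloc1 := loc_perfect hperf hsp.2.2
    have hls0 : loc (RT P Ψ hREF s) (splNode (RT P Ψ hREF s) ++ [false]) ⊆ P :=
      (loc_subset _ _).trans hsub
    have hls1 : loc (RT P Ψ hREF s) (splNode (RT P Ψ hREF s) ++ [true]) ⊆ P :=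
      (loc_subset _ _).trans hsub
    have hstp := stp_spec P Ψ hREF hloc0 hloc1 hls0 hls1 (n := s.length + 1)
    show IsPerfectTree (RT P Ψ hREF (i :: s)) ∧ _
    rw [RT]
    cases i
    · simpa using ⟨hstp.1, hstp.2.2.1.trans hls0⟩
    · simpa using ⟨hstp.2.1, hstp.2.2.2.1.trans hls1⟩

lemma RT_perfect (hP : IsPerfectTree P) (s : LB) : IsPerfectTree (RT P Ψ hREF s) := (RT_basic P Ψ hREF hP s).1

lemma RT_sub_P (hP : IsPerfectTree P) (s : LB) : RT P Ψ hREF s ⊆ P := (RT_basic P Ψ hREF hP s).2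

lemma RT_cons_sub_loc (hP : IsPerfectTree P) (i : Bool) (s : LB) :
    RT P Ψ hREF (i :: s) ⊆ loc (RT P Ψ hREF s) (nd P Ψ hREF s ++ [i]) := by
  have hperf := RT_perfect P Ψ hREF hP s
  have hsp := splNode_spec hperf
  have hloc0 := loc_perfect hperf hsp.2.1
  have hloc1 := loc_perfect hperf hsp.2.2
  have hsub := RT_sub_P P Ψ hREF hP s
  have hstp := stp_spec P Ψ hREF hloc0 hloc1 ((loc_subset _ _).trans hsub)
    ((loc_subset _ _).trans hsub) (n := s.length + 1)
  show RT P Ψ hREF (i :: s) ⊆ _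
  rw [RT]
  cases i
  · simpa [nd] using hstp.2.2.1
  · simpa [nd] using hstp.2.2.2.1

lemma RT_pair (hP : IsPerfectTree P) (s : LB) :
    Ψ (s.length + 1) (RT P Ψ hREF (false :: s)) (RT P Ψ hREF (true :: s)) := by
  have hperf := RT_perfect P Ψ hREF hP s
  have hsp := splNode_spec hperf
  have hloc0 := loc_perfect hperf hsp.2.1
  have hloc1 := loc_perfect hperf hsp.2.2
  have hsub := RT_sub_P P Ψ hREF hP s
  have hstp := stp_spec P Ψ hREF hloc0 hloc1 ((loc_subset _ _).trans hsub)
    ((loc_subset _ _).trans hsub) (n := s.length + 1)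
  show Ψ _ (RT P Ψ hREF (false :: s)) (RT P Ψ hREF (true :: s))
  rw [RT, RT]
  simpa using hstp.2.2.2.2

lemma RT_cons_sub (hP : IsPerfectTree P) (i : Bool) (s : LB) : RT P Ψ hREF (i :: s) ⊆ RT P Ψ hREF s :=
  (RT_cons_sub_loc P Ψ hREF hP i s).trans (loc_subset _ _)

lemma nd_mem (hP : IsPerfectTree P) (s : LB) : nd P Ψ hREF s ∈ RT P Ψ hREF s :=
  (splNode_spec (RT_perfect P Ψ hREF hP s)).1

lemma nd_split (hP : IsPerfectTree P) (s : LB) (i : Bool) : nd P Ψ hREF s ++ [i] ∈ RT P Ψ hREF s := by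
  have := splNode_spec (RT_perfect P Ψ hREF hP s)
  cases i
  · exact this.2.1
  · exact this.2.2

lemma comparable_of_mem_cons (hP : IsPerfectTree P) {i : Bool} {s u : LB} (hu : u ∈ RT P Ψ hREF (i :: s)) :
    u <+: nd P Ψ hREF s ++ [i] ∨ nd P Ψ hREF s ++ [i] <+: u :=
  (RT_cons_sub_loc P Ψ hREF hP i s hu).2

/-- key step: the marker of a child extends the splitting successor node. -/
lemma q_prefix_nd (hP : IsPerfectTree P) (i : Bool) (s : LB) :
    nd P Ψ hREF s ++ [i] <+: nd P Ψ hREF (i :: s) := by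
  set q := nd P Ψ hREF s ++ [i] with hq
  have hperf := RT_perfect P Ψ hREF hP (i :: s)
  have ht := nd_mem P Ψ hREF hP (i :: s)
  rcases comparable_of_mem_cons P Ψ hREF hP ht with h | h
  ·
    rcases eq_or_lt_of_le h.length_le with heq | hlt
    · rw [h.eq_of_length heq]
    · exfalso
      set t := nd P Ψ hREF (i :: s) with htdef
      have h0 : t ++ [false] ∈ RT P Ψ hREF (i :: s) := nd_split P Ψ hREF hP (i :: s) false
      have h1 : t ++ [true] ∈ RT P Ψ hREF (i :: s) := nd_split P Ψ hREF hP (i :: s) true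
      have key : ∀ b : Bool, (t ++ [b]).getD t.length false = q.getD t.length false := by
        intro b
        have hb : t ++ [b] ∈ RT P Ψ hREF (i :: s) := by
          cases b
          · exact h0
          · exact h1
        rcases comparable_of_mem_cons P Ψ hREF hP hb with hc | hc
        · exact prefix_getD (i := t.length) hc (by simp)
        · exact (prefix_getD (i := t.length) hc (by simpa [hq] using hlt)).symm
      have kf := key false
      have kt := key true
      simp only [append_getD_length] at kf kt
      rw [← kt] at kf
      exact Bool.false_ne_true kf
  · exact h

lemma nd_suffix_mono (hP : IsPerfectTree P) : ∀ {s s' : LB}, s <:+ s' →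
    RT P Ψ hREF s' ⊆ RT P Ψ hREF s ∧ nd P Ψ hREF s <+: nd P Ψ hREF s' := by
  intro s s' h
  induction s' with
  | nil =>
    rw [List.suffix_nil.1 h]
    exact ⟨le_refl _, List.prefix_rfl⟩
  | cons j w ih =>
    rcases List.suffix_cons_iff.1 h with heq | hsuf
    · rw [heq]
      exact ⟨le_refl _, List.prefix_rfl⟩
    · obtain ⟨hsub, hpre⟩ := ih hsuf
      refine ⟨(RT_cons_sub P Ψ hREF hP j w).trans hsub, ?_⟩
      exact hpre.trans ((List.prefix_append _ _).trans (q_prefix_nd P Ψ hREF hP j w))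

lemma nd_length_ge (hP : IsPerfectTree P) (s : LB) : s.length ≤ (nd P Ψ hREF s).length := by
  induction s with
  | nil => simp
  | cons i s ih =>
    have := (q_prefix_nd P Ψ hREF hP i s).length_le
    simp only [List.length_append, List.length_cons, List.length_nil] at this ⊢
    omega

/-- The fusion tree. -/
def QT : Set LB := {u | ∃ s, u <+: nd P Ψ hREF s}

lemma QT_perfect (hP : IsPerfectTree P) : IsPerfectTree (QT P Ψ hREF) := by
  refine ⟨⟨[], [], List.nil_prefix⟩, ?_, ?_⟩
  · rintro t ⟨s, hs⟩ n
    exact ⟨s, (List.take_prefix n t).trans hs⟩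
  · rintro t ⟨s, hs⟩
    refine ⟨nd P Ψ hREF s, ⟨s, List.prefix_rfl⟩, hs, ?_, ?_⟩
    · exact ⟨false :: s, q_prefix_nd P Ψ hREF hP false s⟩
    · exact ⟨true :: s, q_prefix_nd P Ψ hREF hP true s⟩

lemma QT_sub (hP : IsPerfectTree P) : QT P Ψ hREF ⊆ P := by
  rintro u ⟨s, hs⟩
  exact prefix_mem hP hs (RT_sub_P P Ψ hREF hP s (nd_mem P Ψ hREF hP s))

end SackAux
namespace SackAux

lemma exists_cons_suffix {a b : LB} (h : a <:+ b) (hne : a ≠ b) : ∃ k, (k :: a) <:+ b := by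
  obtain ⟨e, he⟩ := h
  have heN : e ≠ [] := by rintro rfl; exact hne (by simpa using he)
  refine ⟨e.getLast heN, e.dropLast, ?_⟩
  have h2 : e.dropLast ++ [e.getLast heN] = e := List.dropLast_append_getLast heN
  have h3 : e.dropLast ++ (e.getLast heN :: a) = e ++ a := by
    conv_rhs => rw [← h2]
    simp
  exact h3.trans he

variable (P : Set LB) (Ψ : ℕ → Set LB → Set LB → Prop) (hREF : RefHyp P Ψ)

lemma marker_comp_aux (hP : IsPerfectTree P) {i j : Bool} {a b u : LB} (hab : a <:+ b)
    (hu1 : nd P Ψ hREF (i :: a) <+: u) (hu2 : nd P Ψ hREF (j :: b) <+: u) :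
    (i :: a) <:+ (j :: b) ∨ (j :: b) <:+ (i :: a) := by
  by_cases hEq : a = b
  · subst hEq
    have e1 : nd P Ψ hREF a ++ [i] <+: u := (q_prefix_nd P Ψ hREF hP i a).trans hu1
    have e2 : nd P Ψ hREF a ++ [j] <+: u := (q_prefix_nd P Ψ hREF hP j a).trans hu2
    have hij : i = j := by
      have g1 := prefix_getD (i := (nd P Ψ hREF a).length) e1 (by simp)
      have g2 := prefix_getD (i := (nd P Ψ hREF a).length) e2 (by simp)
      rw [append_getD_length] at g1 g2
      rw [g1, g2]
    subst hij
    exact Or.inl List.suffix_rfl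
  · obtain ⟨k, hk⟩ := exists_cons_suffix hab hEq
    have h1 : nd P Ψ hREF (k :: a) <+: u :=
      ((nd_suffix_mono P Ψ hREF hP (hk.trans (List.suffix_cons j b))).2).trans hu2
    have e1 : nd P Ψ hREF a ++ [k] <+: u := (q_prefix_nd P Ψ hREF hP k a).trans h1
    have e2 : nd P Ψ hREF a ++ [i] <+: u := (q_prefix_nd P Ψ hREF hP i a).trans hu1
    have hik : k = i := by
      have g1 := prefix_getD (i := (nd P Ψ hREF a).length) e1 (by simp)
      have g2 := prefix_getD (i := (nd P Ψ hREF a).length) e2 (by simp)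
      rw [append_getD_length] at g1 g2
      rw [g1, g2]
    subst hik
    exact Or.inl (hk.trans (List.suffix_cons j b))

lemma marker_comp (hP : IsPerfectTree P) : ∀ (N : ℕ) (s s' u : LB), s.length + s'.length ≤ N →
    nd P Ψ hREF s <+: u → nd P Ψ hREF s' <+: u → s <:+ s' ∨ s' <:+ s := by
  intro N
  induction N with
  | zero =>
    intro s s' u hlen _ _
    have hs : s = [] := List.eq_nil_of_length_eq_zero (by omega)
    exact Or.inl (hs ▸ List.nil_suffix)
  | succ N ih =>
    intro s s' u hlen h h'
    match s, s' with
    | [], s' => exact Or.inl (List.nil_suffix)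
    | s, [] => exact Or.inr (List.nil_suffix)
    | (i :: a), (j :: b) =>
      have ha : nd P Ψ hREF a <+: u :=
        ((nd_suffix_mono P Ψ hREF hP (List.suffix_cons i a)).2).trans h
      have hb : nd P Ψ hREF b <+: u :=
        ((nd_suffix_mono P Ψ hREF hP (List.suffix_cons j b)).2).trans h'
      have hlen' : a.length + b.length ≤ N := by
        simp only [List.length_cons] at hlen; omega
      rcases ih a b u hlen' ha hb with hab | hba
      · exact marker_comp_aux P Ψ hREF hP hab h h'
      · exact (marker_comp_aux P Ψ hREF hP hba h' h).symm

lemma marker_comp' (hP : IsPerfectTree P) {s s' u : LB} (h : nd P Ψ hREF s <+: u) (h' : nd P Ψ hREF s' <+: u) :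
    s <:+ s' ∨ s' <:+ s :=
  marker_comp P Ψ hREF hP (s.length + s'.length) s s' u le_rfl h h'

lemma agr_marker_comp (hP : IsPerfectTree P) {s s' : LB} {x : Br} (h : agr (nd P Ψ hREF s) x)
    (h' : agr (nd P Ψ hREF s') x) : s <:+ s' ∨ s' <:+ s := by
  set m := max (nd P Ψ hREF s).length (nd P Ψ hREF s').length with hm
  have hh : pre x (nd P Ψ hREF s).length = nd P Ψ hREF s := h
  have hh' : pre x (nd P Ψ hREF s').length = nd P Ψ hREF s' := h'
  refine marker_comp' P Ψ hREF hP (u := pre x m) ?_ ?_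
  · rw [← hh]; exact pre_prefix x (le_max_left _ _)
  · rw [← hh']; exact pre_prefix x (le_max_right _ _)

lemma level_marker (hP : IsPerfectTree P) {x : Br} (hx : x ∈ branches (QT P Ψ hREF)) :
    ∀ n, ∃ s : LB, s.length = n ∧ agr (nd P Ψ hREF s) x := by
  intro n
  induction n with
  | zero =>
    refine ⟨[], rfl, ?_⟩
    obtain ⟨s', hs'⟩ := hx (nd P Ψ hREF []).length
    have h2 : nd P Ψ hREF [] <+: nd P Ψ hREF s' :=
      (nd_suffix_mono P Ψ hREF hP (List.nil_suffix)).2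
    rcases List.prefix_or_prefix_of_prefix hs' h2 with hc | hc
    · have h3 : pre x (nd P Ψ hREF []).length = nd P Ψ hREF [] := hc.eq_of_length (by simp)
      exact h3
    · have h3 : nd P Ψ hREF [] = pre x (nd P Ψ hREF []).length := hc.eq_of_length (by simp)
      exact h3.symm
  | succ n ih =>
    obtain ⟨s, hslen, hagr⟩ := ih
    set i₀ := x (nd P Ψ hREF s).length with hi₀
    set K := (nd P Ψ hREF (i₀ :: s)).length with hK
    have hK1 : (nd P Ψ hREF s).length + 1 ≤ K := by
      have := (q_prefix_nd P Ψ hREF hP i₀ s).length_le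
      simp only [List.length_append, List.length_cons, List.length_nil] at this
      omega
    obtain ⟨s'', hs''⟩ := hx K
    have h1 : nd P Ψ hREF s <+: pre x K := by
      have hagr' : pre x (nd P Ψ hREF s).length = nd P Ψ hREF s := hagr
      rw [← hagr']; exact pre_prefix x (by omega)
    have hnds : nd P Ψ hREF s <+: nd P Ψ hREF s'' := h1.trans hs''
    have hKlen : K ≤ (nd P Ψ hREF s'').length := by simpa using hs''.length_le
    rcases marker_comp' P Ψ hREF hP hnds List.prefix_rfl with hsuf | hsuf
    swap
    · exfalso
      have := (nd_suffix_mono P Ψ hREF hP hsuf).2.length_le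
      omega
    have hne : s ≠ s'' := by
      rintro rfl; omega
    obtain ⟨k, hk⟩ := exists_cons_suffix hsuf hne
    have hq1 : nd P Ψ hREF s ++ [k] <+: nd P Ψ hREF s'' :=
      (q_prefix_nd P Ψ hREF hP k s).trans (nd_suffix_mono P Ψ hREF hP hk).2
    have hpre : nd P Ψ hREF s ++ [k] <+: pre x K := by
      rcases List.prefix_or_prefix_of_prefix hq1 hs'' with hc | hc
      · exact hc
      · have : K ≤ (nd P Ψ hREF s).length + 1 := by simpa using hc.length_le
        have hKe : K = (nd P Ψ hREF s).length + 1 := by omega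
        have h4 : pre x K = nd P Ψ hREF s ++ [k] := hc.eq_of_length (by simp [hKe])
        rw [h4]
    have hkx : k = i₀ := by
      have g1 := prefix_getD (i := (nd P Ψ hREF s).length) hpre (by simp)
      rw [append_getD_length, pre_getD x (by omega)] at g1
      exact g1
    subst hkx
    have hnd2 : nd P Ψ hREF (i₀ :: s) <+: nd P Ψ hREF s'' :=
      (nd_suffix_mono P Ψ hREF hP hk).2
    have hfin : pre x K = nd P Ψ hREF (i₀ :: s) := by
      rcases List.prefix_or_prefix_of_prefix hnd2 hs'' with hc | hc
      · have h5 : nd P Ψ hREF (i₀ :: s) = pre x K := hc.eq_of_length (by simp [hK])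
        exact h5.symm
      · have h5 : pre x K = nd P Ψ hREF (i₀ :: s) := hc.eq_of_length (by simp [hK])
        exact h5
    exact ⟨i₀ :: s, by simp [hslen], hfin⟩

lemma level_unique (hP : IsPerfectTree P) {s s' : LB} {x : Br} (h : agr (nd P Ψ hREF s) x)
    (h' : agr (nd P Ψ hREF s') x) (hl : s.length = s'.length) : s = s' := by
  rcases agr_marker_comp P Ψ hREF hP h h' with hc | hc
  · exact hc.eq_of_length hl
  · exact (hc.eq_of_length hl.symm).symm

lemma level_child (hP : IsPerfectTree P) {s s' : LB} {x : Br} (h : agr (nd P Ψ hREF s) x)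
    (h' : agr (nd P Ψ hREF s') x) (hl : s'.length = s.length + 1) : ∃ i, s' = i :: s := by
  rcases agr_marker_comp P Ψ hREF hP h h' with hc | hc
  · obtain ⟨e, he⟩ := hc
    have : e.length = 1 := by
      have := congrArg List.length he
      simp at this; omega
    match e, this with
    | [i], _ => exact ⟨i, he.symm⟩
  · exfalso
    have := hc.length_le
    omega

lemma branch_in_RT (hP : IsPerfectTree P) {s : LB} {x : Br} (hx : x ∈ branches (QT P Ψ hREF))
    (h : agr (nd P Ψ hREF s) x) : x ∈ branches (RT P Ψ hREF s) := by
  intro m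
  obtain ⟨s'', hlen'', hagr''⟩ := level_marker P Ψ hREF hP hx (s.length + m + 1)
  have hcomp : s <:+ s'' := by
    rcases agr_marker_comp P Ψ hREF hP h hagr'' with hc | hc
    · exact hc
    · exfalso
      have := hc.length_le
      omega
  have hm : m ≤ (nd P Ψ hREF s'').length := by
    have := nd_length_ge P Ψ hREF hP s''
    omega
  have hpre : pre x m <+: nd P Ψ hREF s'' := by
    have hagr2 : pre x (nd P Ψ hREF s'').length = nd P Ψ hREF s'' := hagr''
    rw [← hagr2]; exact pre_prefix x hm
  exact prefix_mem (RT_perfect P Ψ hREF hP s)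
    (hpre.trans List.prefix_rfl)
    ((nd_suffix_mono P Ψ hREF hP hcomp).1 (nd_mem P Ψ hREF hP s''))

end SackAux
namespace SackAux

def szn (z : Br) : ℕ → LB
  | 0 => []
  | (n+1) => z n :: szn z n

@[simp] lemma szn_length (z : Br) (n : ℕ) : (szn z n).length = n := by
  induction n with
  | zero => rfl
  | succ n ih => simp [szn, ih]

lemma szn_suffix_le (z : Br) {m n : ℕ} (h : m ≤ n) : szn z m <:+ szn z n := by
  induction n with
  | zero => rw [Nat.le_zero.1 h]
  | succ n ih =>
    rcases Nat.lt_or_ge m (n+1) with h1 | h1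
    · exact (ih (by omega)).trans ⟨[z n], rfl⟩
    · have : m = n + 1 := by omega
      rw [this]

lemma szn_eq_of_agree {z z' : Br} {k : ℕ} (h : ∀ j < k, z j = z' j) : szn z k = szn z' k := by
  induction k with
  | zero => rfl
  | succ k ih =>
    simp only [szn]
    rw [h k (by omega), ih (fun j hj => h j (by omega))]

variable (P : Set LB) (Ψ : ℕ → Set LB → Set LB → Prop) (hREF : RefHyp P Ψ)

/-- the canonical injection of Cantor space into the branches of the fusion tree -/
noncomputable def emb (z : Br) : Br := fun i => (nd P Ψ hREF (szn z (i+1))).getD i false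

lemma emb_coherent (hP : IsPerfectTree P) (z : Br) {i n : ℕ} (h : i < n) :
    (nd P Ψ hREF (szn z n)).getD i false = emb P Ψ hREF z i := by
  have hsuf : szn z (i+1) <:+ szn z n := szn_suffix_le z (by omega)
  have hpre : nd P Ψ hREF (szn z (i+1)) <+: nd P Ψ hREF (szn z n) :=
    (nd_suffix_mono P Ψ hREF hP hsuf).2
  have hlen : i < (nd P Ψ hREF (szn z (i+1))).length := by
    have := nd_length_ge P Ψ hREF hP (szn z (i+1))
    simp at this
    omega
  rw [emb, ← prefix_getD hpre hlen]

lemma emb_agr (hP : IsPerfectTree P) (z : Br) (m : ℕ) :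
    pre (emb P Ψ hREF z) m <+: nd P Ψ hREF (szn z m) := by
  have hlen : m ≤ (nd P Ψ hREF (szn z m)).length := by
    have := nd_length_ge P Ψ hREF hP (szn z m)
    simp at this
    omega
  refine List.prefix_iff_eq_take.2 (pre_eq_of_getD (by simp [hlen]) ?_)
  intro i hi
  simp only [pre_length]
  rw [take_getD hi (by omega), emb_coherent P Ψ hREF hP z hi]

lemma emb_mem (hP : IsPerfectTree P) (z : Br) : emb P Ψ hREF z ∈ branches (QT P Ψ hREF) :=
  fun m => ⟨szn z m, emb_agr P Ψ hREF hP z m⟩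

lemma emb_injective (hP : IsPerfectTree P) : Function.Injective (emb P Ψ hREF) := by
  intro z z' hzz
  by_contra hne
  have hex : ∃ k, z k ≠ z' k := by
    by_contra hc
    push_neg at hc
    exact hne (funext hc)
  classical
  set k := Nat.find hex with hkdef
  have hk : z k ≠ z' k := Nat.find_spec hex
  have hagree : ∀ j < k, z j = z' j := fun j hj => by
    have := Nat.find_min hex hj
    simpa using this
  have hsz : szn z k = szn z' k := szn_eq_of_agree hagree
  set p := (nd P Ψ hREF (szn z k)).length with hp
  have hpk : k ≤ p := by
    have h1 := nd_length_ge P Ψ hREF hP (szn z k)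
    have h2 : (szn z k).length = k := szn_length z k
    omega
  have key : ∀ w : Br, szn w k = szn z k → emb P Ψ hREF w p = w k := by
    intro w hw
    have hq : nd P Ψ hREF (szn z k) ++ [w k] <+: nd P Ψ hREF (szn w (k+1)) := by
      have hrw : szn w (k+1) = w k :: szn z k := by rw [szn, hw]
      rw [hrw]
      exact q_prefix_nd P Ψ hREF hP (w k) (szn z k)
    have hchain : nd P Ψ hREF (szn w (k+1)) <+: nd P Ψ hREF (szn w (p+1)) :=
      (nd_suffix_mono P Ψ hREF hP (szn_suffix_le w (by omega))).2
    have hq2 : nd P Ψ hREF (szn z k) ++ [w k] <+: nd P Ψ hREF (szn w (p+1)) := hq.trans hchain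
    have hg := prefix_getD (i := p) hq2 (by simp [hp])
    rw [append_getD_length] at hg
    exact hg.symm
  have h1 := key z rfl
  have h2 := key z' hsz.symm
  rw [hzz] at h1
  exact hk (h1.symm.trans h2)

end SackAux
namespace SackAux

/-- The fusion theorem: the main engine of the whole proof. -/
theorem fusion {P : Set LB} (hP : IsPerfectTree P) (Ψ : ℕ → Set LB → Set LB → Prop)
    (hREF : RefHyp P Ψ) :
    ∃ Q, IsPerfectTree Q ∧ Q ⊆ P ∧
      (∀ x ∈ branches Q, ∀ n : ℕ, ∃ k : ℕ, ∃ D D' : Set LB,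
        x ∈ branches D ∧
        (∀ y ∈ branches Q, pre y k = pre x k → y ∈ branches D) ∧
        (Ψ (n+1) D D' ∨ Ψ (n+1) D' D)) ∧
      (∀ x ∈ branches Q, ∀ y ∈ branches Q, x ≠ y → ∃ m D₀ D₁,
        Ψ m D₀ D₁ ∧
          ((x ∈ branches D₀ ∧ y ∈ branches D₁) ∨ (x ∈ branches D₁ ∧ y ∈ branches D₀))) ∧
      (∃ e : Br → Br, Function.Injective e ∧ ∀ z, e z ∈ branches Q) := by
  classical
  refine ⟨QT P Ψ hREF, QT_perfect P Ψ hREF hP, QT_sub P Ψ hREF hP, ?_, ?_, ?_⟩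
  · -- G2 : levelwise blocks
    intro x hx n
    obtain ⟨s, hslen, hagr⟩ := level_marker P Ψ hREF hP hx (n+1)
    match s, hslen with
    | (i :: a), hslen =>
      have hna : a.length = n := by simpa using hslen
      refine ⟨(nd P Ψ hREF (i :: a)).length, RT P Ψ hREF (i :: a),
        RT P Ψ hREF ((!i) :: a), branch_in_RT P Ψ hREF hP hx hagr, ?_, ?_⟩
      · intro y hy hpre
        have hagry : agr (nd P Ψ hREF (i :: a)) y := by
          unfold agr at hagr ⊢
          rw [hpre, hagr]
        exact branch_in_RT P Ψ hREF hP hy hagry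
      · have := RT_pair P Ψ hREF hP a
        rw [hna] at this
        cases i
        · simpa using Or.inl this
        · simpa using Or.inr this
  · -- G3 : divergence pairs
    intro x hx y hy hne
    have hX := level_marker P Ψ hREF hP hx
    have hY := level_marker P Ψ hREF hP hy
    choose Sx hSx1 hSx2 using hX
    choose Sy hSy1 hSy2 using hY
    have hex : ∃ n, Sx n ≠ Sy n := by
      by_contra hc
      push_neg at hc
      refine hne (funext fun i => ?_)
      have h1 := hSx2 (i+1)
      have h2 := hSy2 (i+1)
      rw [← hc (i+1)] at h2
      have hlen : i < (nd P Ψ hREF (Sx (i+1))).length := by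
        have := nd_length_ge P Ψ hREF hP (Sx (i+1))
        have := hSx1 (i+1)
        omega
      rw [← agr_getD h1 hlen, ← agr_getD h2 hlen]
    set n₀ := Nat.find hex with hn₀def
    have hn₀ : Sx n₀ ≠ Sy n₀ := Nat.find_spec hex
    have hn₀pos : n₀ ≠ 0 := by
      intro h0
      apply hn₀
      have e1 : Sx n₀ = [] := List.eq_nil_of_length_eq_zero (by rw [hSx1, h0])
      have e2 : Sy n₀ = [] := List.eq_nil_of_length_eq_zero (by rw [hSy1, h0])
      rw [e1, e2]
    obtain ⟨m, hm⟩ : ∃ m, n₀ = m + 1 := ⟨n₀ - 1, by omega⟩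
    have heqm : Sx m = Sy m := by
      by_contra hc
      exact absurd (Nat.find_le hc : n₀ ≤ m) (by omega)
    have hx2 : agr (nd P Ψ hREF (Sx (m+1))) x := by rw [← hm]; exact hSx2 n₀
    have hy2 : agr (nd P Ψ hREF (Sy (m+1))) y := by rw [← hm]; exact hSy2 n₀
    obtain ⟨ix, hix⟩ := level_child P Ψ hREF hP (hSx2 m) hx2 (by rw [hSx1, hSx1])
    obtain ⟨iy, hiy⟩ := level_child P Ψ hREF hP (hSy2 m) hy2 (by rw [hSy1, hSy1])
    have hxy : ix ≠ iy := by
      intro hc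
      apply hn₀
      rw [hm, hix, hiy, heqm, hc]
    have hxmem : x ∈ branches (RT P Ψ hREF (ix :: Sx m)) := by
      rw [← hix]
      exact branch_in_RT P Ψ hREF hP hx hx2
    have hymem : y ∈ branches (RT P Ψ hREF (iy :: Sx m)) := by
      rw [heqm, ← hiy]
      exact branch_in_RT P Ψ hREF hP hy hy2
    refine ⟨(Sx m).length + 1, RT P Ψ hREF (false :: Sx m), RT P Ψ hREF (true :: Sx m),
      RT_pair P Ψ hREF hP (Sx m), ?_⟩
    cases ix
    · cases iy
      · exact absurd rfl hxy
      · exact Or.inl ⟨hxmem, hymem⟩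
    · cases iy
      · exact Or.inr ⟨hxmem, hymem⟩
      · exact absurd rfl hxy
  · -- G4 : embedding of Cantor space
    exact ⟨emb P Ψ hREF, emb_injective P Ψ hREF hP, emb_mem P Ψ hREF hP⟩

end SackAux
namespace SackAux

lemma exists_branch {T : Set LB} (hT : IsPerfectTree T) : (branches T).Nonempty := by
  obtain ⟨Q, _, hsub, _, _, e, _, hmem⟩ := fusion hT (fun _ _ _ => True)
    (fun _ C₀ C₁ h0 h1 _ _ => ⟨C₀, C₁, h0, h1, le_refl _, le_refl _, trivial⟩)
  exact ⟨e (fun _ => false), branches_mono hsub (hmem _)⟩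

/-- `A` is s₀ below the tree `R`. -/
def s0Below (A : Set Br) (R : Set LB) : Prop :=
  ∀ R', IsPerfectTree R' → R' ⊆ R → ∃ R'', IsPerfectTree R'' ∧ R'' ⊆ R' ∧
    branches R'' ∩ A = ∅

lemma sigma_avoid {R : Set LB} (hR : IsPerfectTree R) (A : ℕ → Set Br)
    (h : ∀ n, s0Below (A n) R) :
    ∃ Q, IsPerfectTree Q ∧ Q ⊆ R ∧ ∀ n, branches Q ∩ A n = ∅ := by
  obtain ⟨Q, hQ, hsub, hG2, _, _⟩ := fusion hR
    (fun m D₀ D₁ => branches D₀ ∩ A (m-1) = ∅ ∧ branches D₁ ∩ A (m-1) = ∅)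
    (by
      intro n C₀ C₁ h0 h1 hs0 hs1
      obtain ⟨D₀, hD₀, hD₀s, hD₀e⟩ := h (n-1) C₀ h0 hs0
      obtain ⟨D₁, hD₁, hD₁s, hD₁e⟩ := h (n-1) C₁ h1 hs1
      exact ⟨D₀, D₁, hD₀, hD₁, hD₀s, hD₁s, hD₀e, hD₁e⟩)
  refine ⟨Q, hQ, hsub, fun n => ?_⟩
  ext x
  simp only [Set.mem_inter_iff, Set.mem_empty_iff_false, iff_false, not_and]
  intro hx hxA
  obtain ⟨k, D, D', hxD, _, hΨ⟩ := hG2 x hx n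
  have hDe : branches D ∩ A n = ∅ := by
    rcases hΨ with ⟨h1, _⟩ | ⟨_, h2⟩
    · simpa using h1
    · simpa using h2
  exact absurd (Set.mem_inter hxD hxA) (by rw [hDe]; exact fun h => h)

lemma sigma_inside {R : Set LB} (hR : IsPerfectTree R) (A : ℕ → Set Br)
    (hdi : ∀ n R', IsPerfectTree R' → R' ⊆ R → ∃ R'', IsPerfectTree R'' ∧ R'' ⊆ R' ∧
      (branches R'' ⊆ A n ∨ branches R'' ∩ A n = ∅))
    (hcov : branches R ⊆ ⋃ n, A n) :
    ∃ n R', IsPerfectTree R' ∧ R' ⊆ R ∧ branches R' ⊆ A n := by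
  by_contra hcon
  push_neg at hcon
  have h0 : ∀ n, s0Below (A n) R := by
    intro n R' hR' hsub
    obtain ⟨R'', hR'', hsub'', hch⟩ := hdi n R' hR' hsub
    rcases hch with hin | hout
    · exact absurd hin (hcon n R'' hR'' (hsub''.trans hsub))
    · exact ⟨R'', hR'', hsub'', hout⟩
  obtain ⟨Q, hQ, hsub, havoid⟩ := sigma_avoid hR A h0
  obtain ⟨x, hx⟩ := exists_branch hQ
  obtain ⟨s, ⟨n, rfl⟩, hxs⟩ := hcov (branches_mono hsub hx)
  exact absurd (Set.mem_inter hx hxs) (by rw [havoid n]; exact fun h => h)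

end SackAux
namespace SackAux

open Metric

variable {X : Type*} [MetricSpace X]

/-- A σ-disjoint refinement of the cover of a metric space by `δ`-balls (Stone's construction). -/
lemma stone_refinement (δ : ℝ) (hδ : 0 < δ) : ∃ V : ℕ → X → Set X,
    (∀ n y, IsOpen (V n y)) ∧
    (∀ n y y', y ≠ y' → V n y ∩ V n y' = ∅) ∧
    (∀ n y, V n y ⊆ Metric.ball y δ) ∧
    (∀ p : X, ∃ n y, p ∈ V n y) := by
  classical
  set r : X → X → Prop := WellOrderingRel with hr
  haveI : IsWellOrder X r := WellOrderingRel.isWellOrder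
  have wf : WellFounded r := IsWellFounded.wf
  have hball : ∀ p : X, ({y | p ∈ Metric.ball y δ} : Set X).Nonempty :=
    fun p => ⟨p, Metric.mem_ball_self hδ⟩
  set least : X → X := fun p => wf.min {y | p ∈ Metric.ball y δ} (hball p) with hleast
  have least_mem : ∀ p, p ∈ Metric.ball (least p) δ := fun p => wf.min_mem _ (hball p)
  have least_min : ∀ p z, p ∈ Metric.ball z δ → ¬ r z (least p) :=
    fun p z hz => wf.not_lt_min {y | p ∈ Metric.ball y δ} (x := z) hz
  set gen : Set X → ℕ → X → Set X := fun covered n y =>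
    {p | least p = y ∧ Metric.ball p (3 * (δ / 2 ^ n)) ⊆ Metric.ball y δ ∧ p ∉ covered}
    with hgen
  set piece : Set X → ℕ → X → Set X := fun covered n y =>
    ⋃ p ∈ gen covered n y, Metric.ball p (δ / 2 ^ n) with hpiece
  set covAux : ℕ → Set X := fun n =>
    Nat.rec (∅ : Set X) (fun m acc => acc ∪ ⋃ y, piece acc m y) n with hcov
  set V : ℕ → X → Set X := fun n y => piece (covAux n) n y with hV
  have hcovSucc : ∀ n, covAux (n+1) = covAux n ∪ ⋃ y, V n y := fun n => rfl
  have hpos : ∀ n : ℕ, (0:ℝ) < δ / 2 ^ n := fun n => by positivity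
  refine ⟨V, ?_, ?_, ?_, ?_⟩
  · intro n y
    exact isOpen_biUnion fun p _ => Metric.isOpen_ball
  · intro n y y' hne
    have key : ∀ c c' : X, r c c' → ∀ a b : X, a ∈ gen (covAux n) n c →
        b ∈ gen (covAux n) n c' → 3 * (δ / 2 ^ n) ≤ dist a b := by
      intro c c' hrcc a b ha hb
      by_contra hlt
      push_neg at hlt
      have hbmem : b ∈ Metric.ball a (3 * (δ / 2 ^ n)) := by
        rw [Metric.mem_ball, dist_comm]; exact hlt
      have hbally : b ∈ Metric.ball c δ := ha.2.1 hbmem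
      exact least_min b c hbally (hb.1 ▸ hrcc)
    have main : ∀ a b : X, a ∈ gen (covAux n) n y → b ∈ gen (covAux n) n y' →
        Metric.ball a (δ / 2 ^ n) ∩ Metric.ball b (δ / 2 ^ n) = ∅ := by
      intro a b ha hb
      have hd : 3 * (δ / 2 ^ n) ≤ dist a b := by
        rcases trichotomous_of r y y' with h | h | h
        · exact key y y' h a b ha hb
        · exact absurd h hne
        · rw [dist_comm]; exact key y' y h b a hb ha
      ext p
      simp only [Set.mem_inter_iff, Metric.mem_ball, Set.mem_empty_iff_false, iff_false, not_and]
      intro h1 h2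
      have h3 := dist_triangle a p b
      rw [dist_comm a p] at h3
      nlinarith [hpos n]
    ext p
    simp only [Set.mem_inter_iff, Set.mem_empty_iff_false, iff_false, not_and]
    intro h1 h2
    simp only [hV, hpiece, Set.mem_iUnion] at h1 h2
    obtain ⟨a, ha, hpa⟩ := h1
    obtain ⟨b, hb, hpb⟩ := h2
    have := main a b ha hb
    exact absurd (Set.mem_inter hpa hpb) (by rw [this]; exact fun h => h)
  · intro n y p hp
    simp only [hV, hpiece, Set.mem_iUnion] at hp
    obtain ⟨a, ha, hpa⟩ := hp
    apply ha.2.1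
    apply Metric.ball_subset_ball _ hpa
    nlinarith [hpos n]
  · intro p
    set y := least p with hy
    have hpy : p ∈ Metric.ball y δ := least_mem p
    have hdist : dist p y < δ := by rwa [Metric.mem_ball] at hpy
    obtain ⟨n, hn⟩ : ∃ n : ℕ, 3 * (δ / 2 ^ n) < δ - dist p y := by
      obtain ⟨n, hn⟩ := exists_pow_lt_of_lt_one
        (show (0:ℝ) < (δ - dist p y) / (3 * δ) from div_pos (by linarith) (by linarith))
        (by norm_num : (1:ℝ)/2 < 1)
      refine ⟨n, ?_⟩
      have heq : δ / 2 ^ n = δ * ((1:ℝ)/2) ^ n := by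
        rw [div_pow, one_pow, ← mul_div_assoc, mul_one]
      rw [heq]
      have h3δ : (0:ℝ) < 3 * δ := by linarith
      calc 3 * (δ * ((1:ℝ)/2)^n) = (3*δ) * ((1:ℝ)/2)^n := by ring
        _ < (3*δ) * ((δ - dist p y)/(3*δ)) := mul_lt_mul_of_pos_left hn h3δ
        _ = δ - dist p y := by field_simp
    have hsub : Metric.ball p (3 * (δ / 2 ^ n)) ⊆ Metric.ball y δ := by
      apply Metric.ball_subset_ball'
      rw [dist_comm] at *
      linarith
    have hcovered : ∀ m, covAux m ⊆ {q | ∃ k z, q ∈ V k z} := by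
      intro m
      induction m with
      | zero => simp [hcov]
      | succ m ih =>
        rw [hcovSucc m]
        rintro q (hq | hq)
        · exact ih hq
        · simp only [Set.mem_iUnion] at hq
          obtain ⟨z, hz⟩ := hq
          exact ⟨m, z, hz⟩
    by_cases hpc : p ∈ covAux n
    · obtain ⟨k, z, hz⟩ := hcovered n hpc
      exact ⟨k, z, hz⟩
    · refine ⟨n, y, ?_⟩
      simp only [hV, hpiece, Set.mem_iUnion]
      exact ⟨p, ⟨rfl, hsub, hpc⟩, Metric.mem_ball_self (hpos n)⟩

end SackAux
namespace SackAux

open Cardinal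

lemma mk_Br : #Br = 2 ^ aleph0 := by
  rw [Cardinal.mk_arrow]; simp [Cardinal.mk_bool]

lemma mk_SetLB : #(Set LB) = 2 ^ aleph0 := by
  rw [Set, Cardinal.mk_arrow]; simp [Cardinal.mk_list_eq_aleph0]

lemma aleph0_le_c : aleph0 ≤ 2 ^ aleph0 := by
  rw [Cardinal.two_power_aleph0]; exact Cardinal.aleph0_le_continuum

lemma branches_big {T : Set LB} (hT : IsPerfectTree T) : 2 ^ aleph0 ≤ #(branches T) := by
  obtain ⟨Q, hQ, hQs, _, _, e, heinj, hemem⟩ := fusion hT (fun _ _ _ => True)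
    (fun _ C₀ C₁ h0 h1 _ _ => ⟨C₀, C₁, h0, h1, le_refl _, le_refl _, trivial⟩)
  rw [← mk_Br]
  exact Cardinal.mk_le_of_injective
    (f := fun z => (⟨e z, branches_mono hQs (hemem z)⟩ : branches T))
    (fun a b hab => heinj (congrArg Subtype.val hab))

lemma fresh_pair {T : Set LB} (hT : IsPerfectTree T) {u : Set Br} (hu : #u < 2 ^ aleph0) :
    ∃ p : Br × Br, p.1 ∈ branches T ∧ p.2 ∈ branches T ∧ p.1 ≠ p.2 ∧ p.1 ∉ u ∧ p.2 ∉ u := by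
  have hS : (branches T \ u).Nontrivial := by
    by_contra hss
    rw [Set.not_nontrivial_iff] at hss
    have hsub : branches T ⊆ u ∪ (branches T \ u) := by
      intro x hx
      by_cases h : x ∈ u
      · exact Or.inl h
      · exact Or.inr ⟨hx, h⟩
    have h1 : #(branches T) ≤ #(u ∪ (branches T \ u) : Set Br) :=
      Cardinal.mk_le_mk_of_subset hsub
    have h2 : #(u ∪ (branches T \ u) : Set Br) ≤ #u + #(branches T \ u : Set Br) :=
      Cardinal.mk_union_le _ _
    have h3 : #(branches T \ u : Set Br) ≤ 1 := Cardinal.mk_le_one_iff_set_subsingleton.2 hss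
    have h4 : #u + #(branches T \ u : Set Br) < 2 ^ aleph0 :=
      Cardinal.add_lt_of_lt aleph0_le_c hu
        (lt_of_le_of_lt h3 (lt_of_lt_of_le Cardinal.one_lt_aleph0 aleph0_le_c))
    exact absurd (le_trans (branches_big hT) (le_trans h1 h2)) (not_le.2 h4)
  obtain ⟨a, ha, b, hb, hab⟩ := hS
  exact ⟨(a, b), ha.1, hb.1, hab, ha.2, hb.2⟩

lemma bernstein {R : Set LB} (hR : IsPerfectTree R) :
    ∃ A : Set Br, ∀ T, IsPerfectTree T → T ⊆ R →
      (branches T ∩ A).Nonempty ∧ (branches T \ A).Nonempty := by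
  classical
  set PP := {T : Set LB // IsPerfectTree T ∧ T ⊆ R} with hPPdef
  obtain ⟨rr, hwo, htype⟩ := Cardinal.ord_eq PP
  haveI : IsWellOrder PP rr := hwo
  have hwf : WellFounded rr := IsWellFounded.wf
  have hPP : #PP ≤ 2 ^ aleph0 := le_trans (Cardinal.mk_subtype_le _) (le_of_eq mk_SetLB)
  have hseg : ∀ T : PP, #{T' : PP // rr T' T} < 2 ^ aleph0 := by
    intro T
    have h1 : (Ordinal.typein rr T).card = #{T' : PP // rr T' T} := Ordinal.card_typein T
    have h2 : Ordinal.typein rr T < Ordinal.type rr := Ordinal.typein_lt_type rr T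
    rw [← htype] at h2
    have h3 : (Ordinal.typein rr T).card < #PP := Cardinal.lt_ord.1 h2
    exact lt_of_lt_of_le (h1 ▸ h3) hPP
  have hubound : ∀ (T : PP) (ih : ∀ T' : PP, rr T' T → Br × Br),
      #((((fun p : {T' : PP // rr T' T} => (ih p.1 p.2).1) '' Set.univ) ∪
        ((fun p : {T' : PP // rr T' T} => (ih p.1 p.2).2) '' Set.univ) : Set Br)) < 2 ^ aleph0 := by
    intro T ih
    refine lt_of_le_of_lt (Cardinal.mk_union_le _ _) ?_
    refine Cardinal.add_lt_of_lt aleph0_le_c ?_ ?_ <;>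
      exact lt_of_le_of_lt (le_trans (Cardinal.mk_image_le) (by simp)) (hseg T)
  set pick : ∀ _ : PP, Br × Br := hwf.fix (fun T ih =>
    Classical.choose (fresh_pair T.2.1 (hubound T ih))) with hpickdef
  have hfix : ∀ T : PP, pick T = Classical.choose
      (fresh_pair T.2.1 (hubound T (fun T' _ => pick T'))) := by
    intro T
    rw [hpickdef]
    exact hwf.fix_eq _ T
  set used : PP → Set Br := fun T =>
    ((fun p : {T' : PP // rr T' T} => (pick p.1).1) '' Set.univ) ∪
      ((fun p : {T' : PP // rr T' T} => (pick p.1).2) '' Set.univ) with huseddef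
  have hspec : ∀ T : PP, (pick T).1 ∈ branches T.1 ∧ (pick T).2 ∈ branches T.1 ∧
      (pick T).1 ≠ (pick T).2 ∧ (pick T).1 ∉ used T ∧ (pick T).2 ∉ used T := by
    intro T
    rw [hfix T]
    exact Classical.choose_spec (fresh_pair T.2.1 (hubound T (fun T' _ => pick T')))
  have hmemused : ∀ (T T' : PP), rr T' T → (pick T').1 ∈ used T ∧ (pick T').2 ∈ used T := by
    intro T T' h
    constructor
    · exact Or.inl ⟨⟨T', h⟩, Set.mem_univ _, rfl⟩
    · exact Or.inr ⟨⟨T', h⟩, Set.mem_univ _, rfl⟩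
  refine ⟨{z | ∃ T : PP, (pick T).1 = z}, ?_⟩
  intro T₀ hT₀ hT₀sub
  set T : PP := ⟨T₀, hT₀, hT₀sub⟩ with hTdef
  obtain ⟨h1, h2, hne, hnu1, hnu2⟩ := hspec T
  refine ⟨⟨(pick T).1, h1, ⟨T, rfl⟩⟩, ⟨(pick T).2, h2, ?_⟩⟩
  rintro ⟨T', hT'⟩
  rcases trichotomous_of rr T' T with h | h | h
  · exact hnu2 (hT' ▸ (hmemused T T' h).1)
  · rw [h] at hT'
    exact hne hT'
  · obtain ⟨hs1, _, _, hnu1', _⟩ := hspec T'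
    exact (hT' ▸ hnu1' : (pick T).2 ∉ used T') ((hmemused T' T h).2)
end SackAux
namespace SackAux

variable {X : Type*} [MetricSpace X]

lemma core (f : Br → X)
    (hmeas : ∀ U : Set X, IsOpen U → MarczewskiS (f ⁻¹' U))
    {R₀ : Set LB} (hR₀ : IsPerfectTree R₀) (D : X → Set X)
    (hDopen : ∀ y, IsOpen (D y))
    (hDdisj : ∀ y y', y ≠ y' → D y ∩ D y' = ∅)
    (hcov : ∀ x ∈ branches R₀, ∃ y, f x ∈ D y)
    (hneg : ∀ y T, IsPerfectTree T → T ⊆ R₀ → ¬(branches T ⊆ f ⁻¹' (D y))) : False := by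
  classical
  obtain ⟨x₀, hx₀⟩ := exists_branch hR₀
  haveI : Nonempty X := ⟨f x₀⟩
  set g : Br → X := fun x => if h : ∃ y, f x ∈ D y then h.choose else Classical.arbitrary X
    with hgdef
  have hg : ∀ x ∈ branches R₀, f x ∈ D (g x) := by
    intro x hx
    have h := hcov x hx
    rw [hgdef]
    simp only
    rw [dif_pos h]
    exact h.choose_spec
  have hguniq : ∀ x ∈ branches R₀, ∀ y, f x ∈ D y → y = g x := by
    intro x hx y hy
    by_contra hne
    have hd := hDdisj y (g x) hne
    exact absurd (Set.mem_inter hy (hg x hx)) (by rw [hd]; exact id)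
  set UW : Set X → Set X := fun W => ⋃ y ∈ W, D y with hUW
  have hUWopen : ∀ W, IsOpen (UW W) := fun W => isOpen_biUnion fun y _ => hDopen y
  have hmemUW : ∀ x ∈ branches R₀, ∀ W : Set X, f x ∈ UW W ↔ g x ∈ W := by
    intro x hx W
    constructor
    · intro hW
      rw [hUW] at hW
      simp only [Set.mem_iUnion] at hW
      obtain ⟨y, hyW, hy⟩ := hW
      exact (hguniq x hx y hy) ▸ hyW
    · intro hgx
      exact Set.mem_biUnion hgx (hg x hx)
  have hdich : ∀ (W : Set X) (T : Set LB), IsPerfectTree T → ∃ Q, IsPerfectTree Q ∧ Q ⊆ T ∧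
      (branches Q ⊆ f ⁻¹' (UW W) ∨ branches Q ∩ f ⁻¹' (UW W) = ∅) :=
    fun W T hT => hmeas (UW W) (hUWopen W) T hT
  by_cases hsep : ∀ R₁ R₂ : Set LB, IsPerfectTree R₁ → R₁ ⊆ R₀ → IsPerfectTree R₂ → R₂ ⊆ R₀ →
      ∃ (W : Set X) (D₁ D₂ : Set LB), IsPerfectTree D₁ ∧ D₁ ⊆ R₁ ∧ IsPerfectTree D₂ ∧ D₂ ⊆ R₂ ∧
        branches D₁ ⊆ f ⁻¹' (UW W) ∧ branches D₂ ∩ f ⁻¹' (UW W) = ∅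
  · -- CASE II: separation holds everywhere; build a tree on which `g` is injective
    obtain ⟨Rs, hRs, hRssub, _, hG3, _⟩ := fusion hR₀
      (fun _ D₁ D₂ => ∃ W : Set X, branches D₁ ⊆ f ⁻¹' (UW W) ∧ branches D₂ ∩ f ⁻¹' (UW W) = ∅)
      (by
        intro n C₀ C₁ h0 h1 hs0 hs1
        obtain ⟨W, D₁, D₂, hD₁, hD₁s, hD₂, hD₂s, hin, hout⟩ := hsep C₀ C₁ h0 hs0 h1 hs1
        exact ⟨D₁, D₂, hD₁, hD₂, hD₁s, hD₂s, W, hin, hout⟩)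
    have hginj : ∀ x ∈ branches Rs, ∀ y ∈ branches Rs, x ≠ y → g x ≠ g y := by
      intro x hx y hy hne
      obtain ⟨m, D₁, D₂, ⟨W, hin, hout⟩, hor⟩ := hG3 x hx y hy hne
      have hx0 : x ∈ branches R₀ := branches_mono hRssub hx
      have hy0 : y ∈ branches R₀ := branches_mono hRssub hy
      have main : ∀ a b : Br, a ∈ branches R₀ → b ∈ branches R₀ →
          a ∈ branches D₁ → b ∈ branches D₂ → g a ≠ g b := by
        intro a b ha0 hb0 haD hbD
        have h1 : g a ∈ W := (hmemUW a ha0 W).1 (hin haD)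
        have h2 : g b ∉ W := by
          intro hc
          have hfb : f b ∈ UW W := (hmemUW b hb0 W).2 hc
          exact absurd (Set.mem_inter hbD hfb) (by rw [hout]; exact id)
        intro hc
        rw [hc] at h1
        exact h2 h1
      rcases hor with ⟨hxD, hyD⟩ | ⟨hxD, hyD⟩
      · exact main x y hx0 hy0 hxD hyD
      · exact (main y x hy0 hx0 hyD hxD).symm
    obtain ⟨A, hA⟩ := bernstein hRs
    set W : Set X := g '' (A ∩ branches Rs) with hWdef
    obtain ⟨T, hT, hTs, hch⟩ := hdich W Rs hRs
    rcases hch with hin | hout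
    · obtain ⟨x, hxT, hxA⟩ := (hA T hT hTs).2
      have hxRs : x ∈ branches Rs := branches_mono hTs hxT
      have hx0 : x ∈ branches R₀ := branches_mono hRssub hxRs
      have hgx : g x ∈ W := (hmemUW x hx0 W).1 (hin hxT)
      obtain ⟨a, haA, hga⟩ := hgx
      have hax : a = x := by
        by_contra hc
        exact hginj a haA.2 x hxRs hc hga
      rw [hax] at haA
      exact hxA haA.1
    · obtain ⟨x, hxT, hxA⟩ := (hA T hT hTs).1
      have hxRs : x ∈ branches Rs := branches_mono hTs hxT
      have hx0 : x ∈ branches R₀ := branches_mono hRssub hxRs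
      have hgx : g x ∈ W := ⟨x, ⟨hxA, hxRs⟩, rfl⟩
      have hfx : f x ∈ UW W := (hmemUW x hx0 W).2 hgx
      exact absurd (Set.mem_inter hxT hfx) (by rw [hout]; exact id)
  · -- CASE I: a pair with no separation; build a countably complete ultrafilter
    push_neg at hsep
    obtain ⟨R₁, R₂, hR₁, hR₁s, hR₂, hR₂s, hnsep⟩ := hsep
    set mU : Set X → Prop := fun W => ∃ T, IsPerfectTree T ∧ T ⊆ R₁ ∧
      branches T ⊆ f ⁻¹' (UW W) with hmUdef
    have hcompl : ∀ (W : Set X) (T : Set LB), T ⊆ R₀ →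
        (branches T ∩ f ⁻¹' (UW W) = ∅ ↔ branches T ⊆ f ⁻¹' (UW Wᶜ)) := by
      intro W T hTsub
      constructor
      · intro h x hx
        have hx0 := branches_mono hTsub hx
        apply Set.mem_preimage.2
        apply (hmemUW x hx0 _).2
        intro hgW
        exact absurd (Set.mem_inter hx ((hmemUW x hx0 W).2 hgW)) (by rw [h]; exact id)
      · intro h
        ext x
        simp only [Set.mem_inter_iff, Set.mem_empty_iff_false, iff_false, not_and]
        intro hx hfx
        have hx0 := branches_mono hTsub hx
        have h1 : g x ∈ W := (hmemUW x hx0 W).1 hfx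
        have h2 : g x ∈ Wᶜ := (hmemUW x hx0 Wᶜ).1 (h hx)
        exact h2 h1
    have hInsAvd : ∀ (W : Set X) (T : Set LB), T ⊆ R₀ →
        branches T ⊆ f ⁻¹' (UW W) → branches T ∩ f ⁻¹' (UW Wᶜ) = ∅ := by
      intro W T hTsub hin
      ext x
      simp only [Set.mem_inter_iff, Set.mem_empty_iff_false, iff_false, not_and]
      intro hx hfx
      have hx0 := branches_mono hTsub hx
      have h1 : g x ∈ Wᶜ := (hmemUW x hx0 Wᶜ).1 hfx
      exact h1 ((hmemUW x hx0 W).1 (hin hx))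
    have hu2 : ∀ W, mU W → ∀ T, IsPerfectTree T → T ⊆ R₂ →
        ∃ T', IsPerfectTree T' ∧ T' ⊆ T ∧ branches T' ⊆ f ⁻¹' (UW W) := by
      rintro W ⟨T₁, hT₁, hT₁s, hT₁in⟩ T hT hTs
      obtain ⟨Q, hQ, hQs, hch⟩ := hdich W T hT
      rcases hch with hin | hout
      · exact ⟨Q, hQ, hQs, hin⟩
      · exact absurd hout (Set.nonempty_iff_ne_empty.1 (hnsep W T₁ Q hT₁ hT₁s hQ (hQs.trans hTs) hT₁in))
    have hdag : ∀ W, mU W → ¬ mU Wᶜ := by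
      rintro W hW ⟨T₁', hT₁', hT₁s', hT₁in'⟩
      obtain ⟨T₂, hT₂, hT₂s, hT₂in⟩ := hu2 W hW R₂ hR₂ (le_refl _)
      have havd : branches T₂ ∩ f ⁻¹' (UW Wᶜ) = ∅ :=
        hInsAvd W T₂ (hT₂s.trans hR₂s) hT₂in
      exact (Set.nonempty_iff_ne_empty.1 (hnsep Wᶜ T₁' T₂ hT₁' hT₁s' hT₂ hT₂s hT₁in')) havd
    have hu1 : ∀ W, mU W → ∀ T, IsPerfectTree T → T ⊆ R₁ →
        ∃ T', IsPerfectTree T' ∧ T' ⊆ T ∧ branches T' ⊆ f ⁻¹' (UW W) := by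
      intro W hW T hT hTs
      obtain ⟨Q, hQ, hQs, hch⟩ := hdich W T hT
      rcases hch with hin | hout
      · exact ⟨Q, hQ, hQs, hin⟩
      · have hQin : branches Q ⊆ f ⁻¹' (UW Wᶜ) :=
          (hcompl W Q (hQs.trans (hTs.trans hR₁s))).1 hout
        exact absurd ⟨Q, hQ, hQs.trans hTs, hQin⟩ (hdag W hW)
    have hsigma : ∀ (Ws : ℕ → Set X), (∀ n, mU (Ws n)) → mU (⋂ n, Ws n) := by
      intro Ws hWs
      obtain ⟨Q, hQ, hQs, hG2, _, _⟩ := fusion hR₁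
        (fun m D₁ D₂ => branches D₁ ⊆ f ⁻¹' (UW (Ws (m-1))) ∧
          branches D₂ ⊆ f ⁻¹' (UW (Ws (m-1))))
        (by
          intro n C₀ C₁ h0 h1 hs0 hs1
          obtain ⟨E₀, hE₀, hE₀s, hE₀in⟩ := hu1 (Ws (n-1)) (hWs (n-1)) C₀ h0 hs0
          obtain ⟨E₁, hE₁, hE₁s, hE₁in⟩ := hu1 (Ws (n-1)) (hWs (n-1)) C₁ h1 hs1
          exact ⟨E₀, E₁, hE₀, hE₁, hE₀s, hE₁s, hE₀in, hE₁in⟩)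
      refine ⟨Q, hQ, hQs, ?_⟩
      intro x hx
      have hx0 : x ∈ branches R₀ := branches_mono (hQs.trans hR₁s) hx
      apply Set.mem_preimage.2
      apply (hmemUW x hx0 _).2
      apply Set.mem_iInter.2
      intro n
      obtain ⟨k, E, E', hxE, _, hΨ⟩ := hG2 x hx n
      have hEin : branches E ⊆ f ⁻¹' (UW (Ws n)) := by
        rcases hΨ with ⟨h1, _⟩ | ⟨_, h2⟩
        · simpa using h1
        · simpa using h2
      exact (hmemUW x hx0 (Ws n)).1 (hEin hxE)
    have hultra : ∀ W : Set X, mU W ∨ mU Wᶜ := by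
      intro W
      obtain ⟨Q, hQ, hQs, hch⟩ := hdich W R₁ hR₁
      rcases hch with hin | hout
      · exact Or.inl ⟨Q, hQ, hQs, hin⟩
      · exact Or.inr ⟨Q, hQ, hQs, (hcompl W Q (hQs.trans hR₁s)).1 hout⟩
    have hnosmall : ∀ W : Set X, W.Subsingleton → ¬ mU W := by
      rintro W hss ⟨T, hT, hTs, hTin⟩
      obtain ⟨z₀, hz₀⟩ := exists_branch hT
      have hz₀0 : z₀ ∈ branches R₀ := branches_mono (hTs.trans hR₁s) hz₀
      have hgz₀ : g z₀ ∈ W := (hmemUW z₀ hz₀0 W).1 (hTin hz₀)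
      apply hneg (g z₀) T hT (hTs.trans hR₁s)
      intro z hz
      have hz0 := branches_mono (hTs.trans hR₁s) hz
      have hgz : g z ∈ W := (hmemUW z hz0 W).1 (hTin hz)
      have hzz : g z = g z₀ := hss hgz hgz₀
      apply Set.mem_preimage.2
      rw [← hzz]
      exact hg z hz0
    set C : Set X := {y | ∃ x ∈ branches R₀, f x ∈ D y} with hCdef
    have hCmem : mU C := by
      refine ⟨R₁, hR₁, le_refl _, fun x hx => ?_⟩
      have hx0 : x ∈ branches R₀ := branches_mono hR₁s hx
      apply Set.mem_preimage.2
      apply (hmemUW x hx0 C).2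
      exact ⟨x, hx0, hg x hx0⟩
    have hwitex : ∀ y : C, ∃ x, x ∈ branches R₀ ∧ f x ∈ D (y : X) := by
      rintro ⟨y, x, hx, hfx⟩
      exact ⟨x, hx, hfx⟩
    choose wit hwit1 hwit2 using hwitex
    have hwitinj : ∀ y y' : C, wit y = wit y' → y = y' := by
      intro y y' heq
      by_contra hne
      have h1 : f (wit y) ∈ D (y : X) := hwit2 y
      have h2 : f (wit y) ∈ D (y' : X) := heq ▸ hwit2 y'
      have hne' : (y : X) ≠ (y' : X) := fun hc => hne (Subtype.ext hc)
      exact absurd (Set.mem_inter h1 h2) (by rw [hDdisj _ _ hne']; exact id)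
    set bfun : X → ℕ → Bool := fun y n => if h : y ∈ C then wit ⟨y, h⟩ n else false with hbfun
    have hpick : ∀ n : ℕ, ∃ b : Bool, mU {y | bfun y n = b} := by
      intro n
      rcases hultra {y | bfun y n = false} with h | h
      · exact ⟨false, h⟩
      · refine ⟨true, ?_⟩
        have hEq : {y | bfun y n = false}ᶜ = {y | bfun y n = true} := by
          ext y
          simp only [Set.mem_compl_iff, Set.mem_setOf_eq]
          cases hb : bfun y n <;> simp
        rw [hEq] at h
        exact h
    choose db hdb using hpick
    set Wfin : ℕ → Set X := fun n => Nat.rec C (fun m _ => {y | bfun y m = db m}) n with hWfin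
    have hWmem : ∀ n, mU (Wfin n) := by
      intro n
      cases n with
      | zero => exact hCmem
      | succ m => exact hdb m
    have hfinal := hsigma Wfin hWmem
    apply hnosmall _ ?_ hfinal
    intro y hy y' hy'
    have hyC : y ∈ C := Set.mem_iInter.1 hy 0
    have hy'C : y' ∈ C := Set.mem_iInter.1 hy' 0
    have hbits : ∀ n, bfun y n = db n := fun n => Set.mem_iInter.1 hy (n+1)
    have hbits' : ∀ n, bfun y' n = db n := fun n => Set.mem_iInter.1 hy' (n+1)
    have hwiteq : wit ⟨y, hyC⟩ = wit ⟨y', hy'C⟩ := by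
      funext n
      have e1 : bfun y n = wit ⟨y, hyC⟩ n := by rw [hbfun]; simp only; rw [dif_pos hyC]
      have e2 : bfun y' n = wit ⟨y', hy'C⟩ n := by rw [hbfun]; simp only; rw [dif_pos hy'C]
      rw [← e1, ← e2, hbits n, hbits' n]
    have := hwitinj ⟨y, hyC⟩ ⟨y', hy'C⟩ hwiteq
    exact congrArg Subtype.val this

end SackAux
namespace SackAux

variable {X : Type*} [MetricSpace X]

lemma small_diam (f : Br → X) (hmeas : ∀ U : Set X, IsOpen U → MarczewskiS (f ⁻¹' U))
    {P : Set LB} (hP : IsPerfectTree P) {ε : ℝ} (hε : 0 < ε) :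
    ∃ Q, IsPerfectTree Q ∧ Q ⊆ P ∧
      ∀ a ∈ branches Q, ∀ b ∈ branches Q, dist (f a) (f b) ≤ ε := by
  obtain ⟨V, hVopen, hVdisj, hVball, hVcov⟩ := stone_refinement (X := X) (ε/2) (by linarith)
  have hdi : ∀ (n : ℕ) (R' : Set LB), IsPerfectTree R' → R' ⊆ P →
      ∃ R'', IsPerfectTree R'' ∧ R'' ⊆ R' ∧
      (branches R'' ⊆ f ⁻¹' (⋃ y, V n y) ∨ branches R'' ∩ f ⁻¹' (⋃ y, V n y) = ∅) := by
    intro n R' hR' _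
    exact hmeas _ (isOpen_iUnion (hVopen n)) R' hR'
  have hcov : branches P ⊆ ⋃ n, f ⁻¹' (⋃ y, V n y) := by
    intro x _
    obtain ⟨n, y, hny⟩ := hVcov (f x)
    exact Set.mem_iUnion.2 ⟨n, Set.mem_preimage.2 (Set.mem_iUnion.2 ⟨y, hny⟩)⟩
  obtain ⟨n₀, R₀, hR₀, hR₀s, hR₀in⟩ :=
    sigma_inside hP (fun n => f ⁻¹' (⋃ y, V n y)) hdi hcov
  by_cases hxin : ∃ y T, IsPerfectTree T ∧ T ⊆ R₀ ∧ branches T ⊆ f ⁻¹' (V n₀ y)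
  · obtain ⟨y, T, hT, hTs, hTin⟩ := hxin
    refine ⟨T, hT, hTs.trans hR₀s, ?_⟩
    intro a ha b hb
    have h1 : f a ∈ Metric.ball y (ε/2) := hVball n₀ y (hTin ha)
    have h2 : f b ∈ Metric.ball y (ε/2) := hVball n₀ y (hTin hb)
    rw [Metric.mem_ball] at h1 h2
    have h3 := dist_triangle (f a) y (f b)
    have h4 : dist y (f b) = dist (f b) y := dist_comm y (f b)
    linarith
  · push_neg at hxin
    exact absurd (core f hmeas hR₀ (V n₀) (hVopen n₀) (hVdisj n₀)
      (fun x hx => by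
        have := hR₀in hx
        simpa using this)
      (fun y T hT hTs => hxin y T hT hTs)) (fun h => h)

lemma cyl_open (x : Br) (k : ℕ) : IsOpen {y : Br | pre y k = pre x k} := by
  have hEq : {y : Br | pre y k = pre x k} = ⋂ i ∈ Finset.range k, {y : Br | y i = x i} := by
    ext y
    simp only [Set.mem_setOf_eq, Set.mem_iInter, Finset.mem_range]
    exact pre_eq_iff
  rw [hEq]
  apply isOpen_biInter_finset
  intro i _
  have h1 : Continuous (fun y : Br => y i) := continuous_apply (A := fun _ : ℕ => Bool) i
  have h2 : {y : Br | y i = x i} = (fun y : Br => y i) ⁻¹' {x i} := rfl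
  rw [h2]
  exact (isOpen_discrete ({x i} : Set Bool)).preimage h1

theorem forward (f : Br → X) (hmeas : ∀ U : Set X, IsOpen U → MarczewskiS (f ⁻¹' U)) :
    ∀ T, IsPerfectTree T → ∃ Q, IsPerfectTree Q ∧ Q ⊆ T ∧
      ContinuousOn f (branches Q) := by
  intro T hT
  obtain ⟨Q, hQ, hQs, hG2, _, _⟩ := fusion hT
    (fun m D₁ D₂ => (∀ a ∈ branches D₁, ∀ b ∈ branches D₁, dist (f a) (f b) ≤ 1/(m+1)) ∧
      (∀ a ∈ branches D₂, ∀ b ∈ branches D₂, dist (f a) (f b) ≤ 1/(m+1)))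
    (by
      intro n C₀ C₁ h0 h1 hs0 hs1
      have hpos : (0:ℝ) < 1/(n+1+1) := by positivity
      obtain ⟨E₀, hE₀, hE₀s, hE₀d⟩ := small_diam f hmeas h0 hpos
      obtain ⟨E₁, hE₁, hE₁s, hE₁d⟩ := small_diam f hmeas h1 hpos
      refine ⟨E₀, E₁, hE₀, hE₁, hE₀s, hE₁s, ?_, ?_⟩
      · intro a ha b hb
        have := hE₀d a ha b hb
        have hle : (1:ℝ)/(n+1+1) ≤ 1/(n+1) := by
          apply div_le_div_of_nonneg_left (by norm_num) (by positivity) (by norm_num)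
        push_cast at this ⊢
        linarith
      · intro a ha b hb
        have := hE₁d a ha b hb
        have hle : (1:ℝ)/(n+1+1) ≤ 1/(n+1) := by
          apply div_le_div_of_nonneg_left (by norm_num) (by positivity) (by norm_num)
        push_cast at this ⊢
        linarith)
  refine ⟨Q, hQ, hQs, ?_⟩
  intro x hx
  apply Metric.tendsto_nhds.2
  intro ε hε
  obtain ⟨n, hn⟩ : ∃ n : ℕ, 1/((n:ℝ)+1) < ε := exists_nat_one_div_lt hε
  obtain ⟨k, E, E', hxE, hstab, hΨ⟩ := hG2 x hx n
  have hEd : ∀ a ∈ branches E, ∀ b ∈ branches E, dist (f a) (f b) ≤ 1/((n:ℝ)+1+1) := by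
    rcases hΨ with ⟨h1, _⟩ | ⟨_, h2⟩
    · intro a ha b hb
      have := h1 a ha b hb
      push_cast at this ⊢
      linarith
    · intro a ha b hb
      have := h2 a ha b hb
      push_cast at this ⊢
      linarith
  refine Filter.eventually_iff_exists_mem.2
    ⟨{y : Br | pre y k = pre x k} ∩ branches Q, ?_, ?_⟩
  · exact Filter.inter_mem
      (mem_nhdsWithin_of_mem_nhds ((cyl_open x k).mem_nhds rfl))
      self_mem_nhdsWithin
  · rintro y ⟨hycyl, hyQ⟩
    have hyE : y ∈ branches E := hstab y hyQ hycyl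
    have hle : (1:ℝ)/((n:ℝ)+1+1) ≤ 1/((n:ℝ)+1) := by
      apply div_le_div_of_nonneg_left (by norm_num) (by positivity) (by norm_num)
    calc dist (f y) (f x) ≤ 1/((n:ℝ)+1+1) := hEd y hyE x hxE
      _ ≤ 1/((n:ℝ)+1) := hle
      _ < ε := hn

theorem backward (f : Br → X)
    (hcont : ∀ T, IsPerfectTree T → ∃ Q, IsPerfectTree Q ∧ Q ⊆ T ∧
      ContinuousOn f (branches Q)) :
    ∀ U : Set X, IsOpen U → MarczewskiS (f ⁻¹' U) := by
  intro U hU T hT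
  obtain ⟨Q, hQ, hQs, hQcont⟩ := hcont T hT
  rcases Set.eq_empty_or_nonempty (branches Q ∩ f ⁻¹' U) with hemp | ⟨x, hxQ, hxU⟩
  · exact ⟨Q, hQ, hQs, Or.inr hemp⟩
  · have hwithin := hQcont x hxQ
    have hUnhds : f ⁻¹' U ∈ nhdsWithin x (branches Q) :=
      hwithin (hU.mem_nhds hxU)
    rw [mem_nhdsWithin] at hUnhds
    obtain ⟨Vo, hVo, hxVo, hVoU⟩ := hUnhds
    obtain ⟨I, hI⟩ : ∃ I : Finset ℕ, ∀ y : Br, (∀ i ∈ I, y i = x i) → y ∈ Vo := by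
      rcases isOpen_pi_iff.mp hVo x hxVo with ⟨I, u, h1, h2⟩
      refine ⟨I, fun y hy => h2 ?_⟩
      intro i hi
      rw [hy i hi]
      exact (h1 i hi).2
    set k : ℕ := (if hIe : I.Nonempty then I.max' hIe + 1 else 0) with hk
    have hIk : ∀ i ∈ I, i < k := by
      intro i hi
      rw [hk, dif_pos ⟨i, hi⟩]
      exact Nat.lt_succ_of_le (I.le_max' i hi)
    have hsx : pre x k ∈ Q := hxQ k
    refine ⟨loc Q (pre x k), loc_perfect hQ hsx, (loc_subset _ _).trans hQs, Or.inl ?_⟩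
    intro z hz
    have hzQ : z ∈ branches Q := branches_mono (loc_subset _ _) hz
    have hagr : agr (pre x k) z := branches_loc_agr hz
    have hzcyl : ∀ i ∈ I, z i = x i := by
      intro i hi
      have hik := hIk i hi
      have h1 : (pre x k).getD i false = z i := agr_getD hagr (by simp [hik])
      rw [pre_getD x hik] at h1
      exact h1.symm
    exact hVoU ⟨hI z hzcyl, hzQ⟩

end SackAux

open SackAux in
/-- `f` is (s)-measurable iff it is continuous on the branches of a perfect subtree
of every perfect tree. -/
theorem sMeasurable_iff_continuousOn {X : Type*} [MetricSpace X] (f : (ℕ → Bool) → X) :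
    (∀ U : Set X, IsOpen U → MarczewskiS (f ⁻¹' U)) ↔
    ∀ T, IsPerfectTree T → ∃ Q, IsPerfectTree Q ∧ Q ⊆ T ∧
      ContinuousOn f (branches Q) := by
  constructor
  · exact forward f
  · exact backward f
end
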